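/- arXiv:2104.14986 — 6 statements merged into one kernel-verified Lean document; each statement's English description precedes it below -/
import Mathlib

section
/- Let (d^{(1)}_m) and (d^{(2)}_m) be sequences of positive reals tending to infinity, and for each m let G_m be a bipartite multigraph with nonempty parts V_1(G_m), V_2(G_m) such that max_{v∈V_1(G_m)} |deg(v)/d^{(1)}_m − 1| → 0 and max_{w∈V_2(G_m)} |deg(w)/d^{(2)}_m − 1| → 0 as m → ∞ (so in particular all degrees are positive for all large m). Then max_{1 ≤ i ≤ |V(G_m)|} | μ_i(A(G_m))/√(d^{(1)}_m d^{(2)}_m) − μ_i(D(G_m)^{−1/2} A(G_m) D(G_m)^{−1/2}) | → 0 as m → ∞. In particular, if additionally μ_2(A(G_m))/√(d^{(1)}_m d^{(2)}_m) → 0, then λ_1(G_m) → 1. -/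
open Matrix Filter

/-- Ascending list of eigenvalues (with multiplicity) of a real matrix;
junk value `[]` if the matrix is not symmetric. -/
noncomputable def eigs {V : Type*} [Fintype V] [DecidableEq V] (A : Matrix V V ℝ) : List ℝ :=
  if hA : A.IsHermitian then (Finset.univ.val.map hA.eigenvalues).sort (· ≤ ·) else []

/-- `i`-th smallest eigenvalue (0-indexed): `λ_i`. -/
noncomputable def eigAsc {V : Type*} [Fintype V] [DecidableEq V] (A : Matrix V V ℝ) (i : ℕ) : ℝ :=
  (eigs A).getD i 0

/-- `i`-th largest eigenvalue (1-indexed): `μ_i`. -/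
noncomputable def eigDesc {V : Type*} [Fintype V] [DecidableEq V] (A : Matrix V V ℝ) (i : ℕ) : ℝ :=
  (eigs A).reverse.getD (i - 1) 0

/-- Degree of vertex `v` in the multigraph with adjacency matrix `A`. -/
def deg {V : Type*} [Fintype V] (A : Matrix V V ℕ) (v : V) : ℕ := ∑ u, A v u

/-- `D⁻¹ᐟ² A D⁻¹ᐟ²`, normalized adjacency matrix of a multigraph. -/
noncomputable def normAdj {V : Type*} [Fintype V] [DecidableEq V] (A : Matrix V V ℕ) :
    Matrix V V ℝ :=
  Matrix.diagonal (fun v => ((deg A v : ℝ)) ^ (-(1/2) : ℝ)) * A.map (Nat.cast : ℕ → ℝ) *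
    Matrix.diagonal (fun v => ((deg A v : ℝ)) ^ (-(1/2) : ℝ))

/-- Normalized Laplacian `I - D⁻¹ᐟ² A D⁻¹ᐟ²` of a multigraph. -/
noncomputable def normLap {V : Type*} [Fintype V] [DecidableEq V] (A : Matrix V V ℕ) :
    Matrix V V ℝ :=
  1 - normAdj A

/-- `λ₁`: second-smallest eigenvalue of the normalized Laplacian. -/
noncomputable def lam1 {V : Type*} [Fintype V] [DecidableEq V] (A : Matrix V V ℕ) : ℝ :=
  eigAsc (normLap A) 1

/-- Adjacency matrix of the bipartite multigraph with biadjacency matrix `B`. -/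
def bipAdj {V₁ V₂ : Type*} (B : Matrix V₁ V₂ ℕ) : Matrix (V₁ ⊕ V₂) (V₁ ⊕ V₂) ℕ :=
  Matrix.fromBlocks 0 B Bᵀ 0



set_option linter.unusedSectionVars false

namespace SpectralAux

variable {V : Type*} [Fintype V] [DecidableEq V]

/-- Orthonormal family of plain functions w.r.t. `dotProduct`. -/
def IsON {ι : Type*} [DecidableEq ι] (u : ι → V → ℝ) : Prop :=
  ∀ i j, u i ⬝ᵥ u j = if i = j then 1 else 0

lemma sum_dot {ι : Type*} (s : Finset ι) (f : ι → V → ℝ) (v : V → ℝ) :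
    (∑ i ∈ s, f i) ⬝ᵥ v = ∑ i ∈ s, f i ⬝ᵥ v := by
  simp only [dotProduct, Finset.sum_apply, Finset.sum_mul]
  exact Finset.sum_comm

lemma dot_sum {ι : Type*} (s : Finset ι) (v : V → ℝ) (f : ι → V → ℝ) :
    v ⬝ᵥ (∑ i ∈ s, f i) = ∑ i ∈ s, v ⬝ᵥ f i := by
  simp only [dotProduct, Finset.sum_apply, Finset.mul_sum]
  exact Finset.sum_comm

lemma smul_dot (c : ℝ) (v w : V → ℝ) : (c • v) ⬝ᵥ w = c * (v ⬝ᵥ w) := by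
  simp [dotProduct, Finset.mul_sum, mul_assoc]

lemma dot_smul (c : ℝ) (v w : V → ℝ) : v ⬝ᵥ (c • w) = c * (v ⬝ᵥ w) := by
  simp [dotProduct, Finset.mul_sum]; ring_nf
  exact Finset.sum_congr rfl fun i _ => by ring

lemma rep_dot {ι : Type*} [Fintype ι] [DecidableEq ι] {u : ι → V → ℝ} (hu : IsON u) (c d : ι → ℝ) :
    (∑ i, c i • u i) ⬝ᵥ (∑ i, d i • u i) = ∑ i, c i * d i := by
  have hu' : ∀ i j, u i ⬝ᵥ u j = if i = j then 1 else 0 := hu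
  rw [sum_dot]
  refine Finset.sum_congr rfl fun i _ => ?_
  rw [smul_dot, dot_sum]
  simp only [dot_smul, hu', mul_ite, mul_one, mul_zero]
  rw [Finset.sum_ite_eq]
  simp

lemma mulVec_sum_smul (A : Matrix V V ℝ) {ι : Type*} [Fintype ι] [DecidableEq ι] (c : ι → ℝ) (u : ι → V → ℝ) :
    A *ᵥ (∑ i, c i • u i) = ∑ i, c i • (A *ᵥ u i) := by
  rw [← Matrix.mulVecLin_apply, map_sum]
  simp [Matrix.mulVecLin_apply, Matrix.mulVec_smul]

lemma dot_self_nonneg (x : V → ℝ) : 0 ≤ x ⬝ᵥ x :=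
  Finset.sum_nonneg fun i _ => mul_self_nonneg _

lemma dot_self_pos {x : V → ℝ} (hx : x ≠ 0) : 0 < x ⬝ᵥ x :=
  lt_of_le_of_ne (dot_self_nonneg x)
    (fun h => hx (dotProduct_self_eq_zero.1 h.symm))

lemma isON_linearIndependent {ι : Type*} [Fintype ι] [DecidableEq ι] {u : ι → V → ℝ} (hu : IsON u) :
    LinearIndependent ℝ u := by
  rw [Fintype.linearIndependent_iff]
  intro g hg i
  have hu' : ∀ i j, u i ⬝ᵥ u j = if i = j then 1 else 0 := hu
  have h := congrArg (fun y => y ⬝ᵥ u i) hg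
  simp only [sum_dot, smul_dot, hu', zero_dotProduct, mul_ite, mul_one, mul_zero,
    Finset.sum_ite_eq', Finset.mem_univ, if_true] at h
  exact h

lemma finrank_span_isON {ι : Type*} [Fintype ι] [DecidableEq ι] {u : ι → V → ℝ} (hu : IsON u) :
    Module.finrank ℝ (Submodule.span ℝ (Set.range u)) = Fintype.card ι :=
  finrank_span_eq_card (isON_linearIndependent hu)

lemma quad_ge {ι : Type*} [Fintype ι] [DecidableEq ι] {u : ι → V → ℝ} (hu : IsON u) {A : Matrix V V ℝ}
    {μ : ι → ℝ} (heig : ∀ i, A *ᵥ u i = μ i • u i) {x : V → ℝ}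
    (hx : x ∈ Submodule.span ℝ (Set.range u)) {c : ℝ} (hc : ∀ i, c ≤ μ i) :
    c * (x ⬝ᵥ x) ≤ x ⬝ᵥ (A *ᵥ x) := by
  obtain ⟨co, rfl⟩ := (Submodule.mem_span_range_iff_exists_fun ℝ).1 hx
  have hAx : A *ᵥ (∑ i, co i • u i) = ∑ i, (co i * μ i) • u i := by
    rw [mulVec_sum_smul]
    exact Finset.sum_congr rfl fun i _ => by rw [heig i, smul_smul]
  rw [hAx, rep_dot hu, rep_dot hu, Finset.mul_sum]
  refine Finset.sum_le_sum fun i _ => ?_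
  nlinarith [mul_self_nonneg (co i), hc i]

lemma quad_le {ι : Type*} [Fintype ι] [DecidableEq ι] {u : ι → V → ℝ} (hu : IsON u) {A : Matrix V V ℝ}
    {μ : ι → ℝ} (heig : ∀ i, A *ᵥ u i = μ i • u i) {x : V → ℝ}
    (hx : x ∈ Submodule.span ℝ (Set.range u)) {c : ℝ} (hc : ∀ i, μ i ≤ c) :
    x ⬝ᵥ (A *ᵥ x) ≤ c * (x ⬝ᵥ x) := by
  obtain ⟨co, rfl⟩ := (Submodule.mem_span_range_iff_exists_fun ℝ).1 hx
  have hAx : A *ᵥ (∑ i, co i • u i) = ∑ i, (co i * μ i) • u i := by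
    rw [mulVec_sum_smul]
    exact Finset.sum_congr rfl fun i _ => by rw [heig i, smul_smul]
  rw [hAx, rep_dot hu, rep_dot hu, Finset.mul_sum]
  refine Finset.sum_le_sum fun i _ => ?_
  nlinarith [mul_self_nonneg (co i), hc i]

lemma card_aux {n : ℕ} (k : Fin n) :
    n + 1 ≤ Fintype.card {j : Fin n // k ≤ j} + Fintype.card {j : Fin n // j ≤ k} := by
  classical
  rw [Fintype.card_subtype, Fintype.card_subtype]
  set A := Finset.univ.filter (fun j : Fin n => k ≤ j) with hA
  set Bs := Finset.univ.filter (fun j : Fin n => j ≤ k) with hB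
  have hu : A ∪ Bs = Finset.univ := by
    ext j; simp [hA, hB, le_total]
  have hk : k ∈ A ∩ Bs := by simp [hA, hB]
  have hcu := Finset.card_union_add_card_inter A Bs
  rw [hu, Finset.card_univ, Fintype.card_fin] at hcu
  have h1 : 1 ≤ (A ∩ Bs).card := Finset.card_pos.2 ⟨k, hk⟩
  omega

lemma eig_compare {n : ℕ} (hn : Fintype.card V = n)
    {P Q : Matrix V V ℝ} {u w : Fin n → V → ℝ} (hu : IsON u) (hw : IsON w)
    {μ ν : Fin n → ℝ} (hμ : Monotone μ) (hν : Monotone ν)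
    (hP : ∀ j, P *ᵥ u j = μ j • u j) (hQ : ∀ j, Q *ᵥ w j = ν j • w j)
    {ε : ℝ} (hpert : ∀ x : V → ℝ, x ⬝ᵥ (P *ᵥ x) ≤ x ⬝ᵥ (Q *ᵥ x) + ε * (x ⬝ᵥ x))
    (k : Fin n) : μ k ≤ ν k + ε := by
  classical
  set u' : {j : Fin n // k ≤ j} → V → ℝ := fun j => u j with hu'def
  set w' : {j : Fin n // j ≤ k} → V → ℝ := fun j => w j with hw'def
  have hu' : IsON u' := by
    intro i j
    have := hu i.1 j.1
    simp only [hu'def]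
    rw [this]
    simp [Subtype.ext_iff]
  have hw' : IsON w' := by
    intro i j
    have := hw i.1 j.1
    simp only [hw'def]
    rw [this]
    simp [Subtype.ext_iff]
  set U := Submodule.span ℝ (Set.range u') with hUdef
  set W := Submodule.span ℝ (Set.range w') with hWdef
  have hrU : Module.finrank ℝ U = Fintype.card {j : Fin n // k ≤ j} := finrank_span_isON hu'
  have hrW : Module.finrank ℝ W = Fintype.card {j : Fin n // j ≤ k} := finrank_span_isON hw'
  have hfintop : Module.finrank ℝ (V → ℝ) = n := by
    rw [Module.finrank_fintype_fun_eq_card, hn]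
  have hsupinf := Submodule.finrank_sup_add_finrank_inf_eq U W
  have hsup : Module.finrank ℝ ↥(U ⊔ W) ≤ n := hfintop ▸ Submodule.finrank_le _
  have hcard := card_aux k
  have hinf : 0 < Module.finrank ℝ ↥(U ⊓ W) := by omega
  obtain ⟨x, hxmem, hxne⟩ : ∃ x : V → ℝ, x ∈ U ⊓ W ∧ x ≠ 0 := by
    have : Nontrivial ↥(U ⊓ W) := Module.finrank_pos_iff.1 hinf
    obtain ⟨y, hy⟩ := exists_ne (0 : ↥(U ⊓ W))
    exact ⟨y.1, y.2, by simpa [Submodule.coe_eq_zero] using hy⟩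
  have hxU : x ∈ U := hxmem.1
  have hxW : x ∈ W := hxmem.2
  have hq1 : μ k * (x ⬝ᵥ x) ≤ x ⬝ᵥ (P *ᵥ x) :=
    quad_ge hu' (fun j => hP j.1) hxU (fun j => hμ j.2)
  have hq2 : x ⬝ᵥ (Q *ᵥ x) ≤ ν k * (x ⬝ᵥ x) :=
    quad_le hw' (fun j => hQ j.1) hxW (fun j => hν j.2)
  have hxx : 0 < x ⬝ᵥ x := dot_self_pos hxne
  nlinarith [hpert x]

lemma inner_eq_dot (x y : EuclideanSpace ℝ V) :
    (inner ℝ x y : ℝ) = dotProduct (x : V → ℝ) (y : V → ℝ) := by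
  rw [PiLp.inner_apply]
  simp [dotProduct, mul_comm]

lemma length_eigs {A : Matrix V V ℝ} (hA : A.IsHermitian) :
    (eigs A).length = Fintype.card V := by
  rw [eigs, dif_pos hA, Multiset.length_sort, Multiset.card_map]
  simp [Finset.card_univ]

lemma exists_sorted_system (A : Matrix V V ℝ) (hA : A.IsHermitian) :
    ∃ u : Fin (Fintype.card V) → V → ℝ, IsON u ∧
      (∀ j, A *ᵥ u j = eigAsc A (j : ℕ) • u j) ∧
      Monotone (fun j : Fin (Fintype.card V) => eigAsc A (j : ℕ)) := by
  classical
  set n := Fintype.card V with hn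
  set e := Fintype.equivFin V with he
  set g : Fin n → ℝ := fun j => hA.eigenvalues (e.symm j) with hg
  set σ := Tuple.sort g with hσ
  have hmono : Monotone (g ∘ σ) := Tuple.monotone_sort g
  have hmul : (↑(List.ofFn (g ∘ σ)) : Multiset ℝ) = Finset.univ.val.map hA.eigenvalues := by
    rw [List.ofFn_eq_map, ← Multiset.map_coe]
    have h1 : (↑(List.finRange n) : Multiset (Fin n)) = (Finset.univ : Finset (Fin n)).val := by
      rfl
    rw [h1]
    have h2 : Multiset.map (⇑σ) (Finset.univ : Finset (Fin n)).val
        = (Finset.univ : Finset (Fin n)).val := by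
      have := Finset.map_univ_equiv (σ : Fin n ≃ Fin n)
      calc Multiset.map (⇑σ) Finset.univ.val
          = (Finset.map (σ : Fin n ≃ Fin n).toEmbedding Finset.univ).val := rfl
        _ = (Finset.univ : Finset (Fin n)).val := by rw [this]
    have h3 : Multiset.map (⇑e.symm) (Finset.univ : Finset (Fin n)).val
        = (Finset.univ : Finset V).val := by
      have := Finset.map_univ_equiv (e.symm : Fin n ≃ V)
      calc Multiset.map (⇑e.symm) Finset.univ.val
          = (Finset.map (e.symm : Fin n ≃ V).toEmbedding Finset.univ).val := rfl
        _ = (Finset.univ : Finset V).val := by rw [this]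
    calc Multiset.map (g ∘ ⇑σ) Finset.univ.val
        = Multiset.map g (Multiset.map (⇑σ) Finset.univ.val) := by
          rw [Multiset.map_map]
      _ = Multiset.map g Finset.univ.val := by rw [h2]
      _ = Multiset.map (hA.eigenvalues ∘ ⇑e.symm) Finset.univ.val := rfl
      _ = Multiset.map hA.eigenvalues (Multiset.map (⇑e.symm) Finset.univ.val) := by
          rw [Multiset.map_map]
      _ = Finset.univ.val.map hA.eigenvalues := by rw [h3]
  have heq : eigs A = List.ofFn (g ∘ σ) := by
    rw [eigs, dif_pos hA]
    refine List.Perm.eq_of_pairwise' (Multiset.pairwise_sort _ _)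
      (List.sortedLE_ofFn_iff.2 hmono).pairwise ?_
    rw [← Multiset.coe_eq_coe, Multiset.sort_eq, hmul]
  have hval : ∀ j : Fin n, eigAsc A (j : ℕ) = g (σ j) := by
    intro j
    rw [eigAsc, heq, List.getD_eq_getElem _ _ (by simpa using j.isLt), List.getElem_ofFn]
    simp
  refine ⟨fun j => ⇑(hA.eigenvectorBasis (e.symm (σ j))), ?_, ?_, ?_⟩
  · intro i j
    have horth := orthonormal_iff_ite.1 (hA.eigenvectorBasis).orthonormal
      (e.symm (σ i)) (e.symm (σ j))
    rw [inner_eq_dot] at horth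
    simp only [EmbeddingLike.apply_eq_iff_eq] at horth
    exact horth
  · intro j
    rw [hval j]
    exact hA.mulVec_eigenvectorBasis (e.symm (σ j))
  · intro a b hab
    show eigAsc A (a : ℕ) ≤ eigAsc A (b : ℕ)
    rw [hval a, hval b]
    exact hmono hab

lemma eigAsc_unique {A : Matrix V V ℝ} (hA : A.IsHermitian)
    {u : Fin (Fintype.card V) → V → ℝ} {μ : Fin (Fintype.card V) → ℝ}
    (hu : IsON u) (heig : ∀ j, A *ᵥ u j = μ j • u j) (hmono : Monotone μ)
    (k : Fin (Fintype.card V)) : eigAsc A (k : ℕ) = μ k := by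
  obtain ⟨v, hv, hveig, hvmono⟩ := exists_sorted_system A hA
  have h0 : ∀ x : V → ℝ, x ⬝ᵥ (A *ᵥ x) ≤ x ⬝ᵥ (A *ᵥ x) + 0 * (x ⬝ᵥ x) := by
    intro x; simp
  have h1 := eig_compare rfl hv hu hvmono hmono hveig heig h0 k
  have h2 := eig_compare rfl hu hv hmono hvmono heig hveig h0 k
  linarith

lemma weyl {P Q : Matrix V V ℝ} (hP : P.IsHermitian) (hQ : Q.IsHermitian) {ε : ℝ}
    (hpert : ∀ x : V → ℝ, |x ⬝ᵥ ((P - Q) *ᵥ x)| ≤ ε * (x ⬝ᵥ x))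
    (k : Fin (Fintype.card V)) :
    |eigAsc P (k : ℕ) - eigAsc Q (k : ℕ)| ≤ ε := by
  obtain ⟨u, hu, hueig, humono⟩ := exists_sorted_system P hP
  obtain ⟨w, hw, hweig, hwmono⟩ := exists_sorted_system Q hQ
  have key : ∀ x : V → ℝ, x ⬝ᵥ ((P - Q) *ᵥ x) = x ⬝ᵥ (P *ᵥ x) - x ⬝ᵥ (Q *ᵥ x) := by
    intro x; rw [Matrix.sub_mulVec, dotProduct_sub]
  have h1 := eig_compare rfl hu hw humono hwmono hueig hweig (fun x => by
    have h := (abs_le.1 (hpert x)).2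
    rw [key x] at h; linarith) k
  have h2 := eig_compare rfl hw hu hwmono humono hweig hueig (fun x => by
    have h := (abs_le.1 (hpert x)).1
    rw [key x] at h; linarith) k
  rw [abs_le]
  constructor <;> linarith

lemma eigAsc_smul {A : Matrix V V ℝ} (hA : A.IsHermitian) {c : ℝ} (hc : 0 ≤ c)
    (k : Fin (Fintype.card V)) : eigAsc (c • A) (k : ℕ) = c * eigAsc A (k : ℕ) := by
  obtain ⟨u, hu, heig, hmono⟩ := exists_sorted_system A hA
  have hA' : (c • A).IsHermitian := by
    rw [Matrix.IsHermitian, Matrix.conjTranspose_smul, hA, star_trivial]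
  refine eigAsc_unique (μ := fun j => c * eigAsc A (j : ℕ)) hA' hu (fun j => ?_)
    (fun a b hab => ?_) k
  · rw [Matrix.smul_mulVec, heig j, smul_smul]
  · exact mul_le_mul_of_nonneg_left (hmono hab) hc

lemma eigAsc_one_sub {N : Matrix V V ℝ} (hN : N.IsHermitian) (k : Fin (Fintype.card V)) :
    eigAsc (1 - N) (k : ℕ) = 1 - eigAsc N ((Fin.rev k : Fin (Fintype.card V)) : ℕ) := by
  obtain ⟨u, hu, heig, hmono⟩ := exists_sorted_system N hN
  have h1 : (1 - N : Matrix V V ℝ).IsHermitian := Matrix.isHermitian_one.sub hN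
  refine eigAsc_unique h1 (u := fun j => u (Fin.rev j))
    (μ := fun j => 1 - eigAsc N ((Fin.rev j : Fin (Fintype.card V)) : ℕ))
    (fun i j => by rw [hu (Fin.rev i) (Fin.rev j)]; simp [Fin.rev_inj]) (fun j => ?_)
    (fun a b hab => ?_) k
  · rw [Matrix.sub_mulVec, Matrix.one_mulVec, heig, sub_smul, one_smul]
  · have h2 : Fin.rev b ≤ Fin.rev a := Fin.rev_le_rev.2 hab
    have := hmono h2
    simp only at this ⊢
    linarith

lemma eigDesc_eq_eigAsc {A : Matrix V V ℝ} (hA : A.IsHermitian) {i : ℕ}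
    (h1 : 1 ≤ i) (h2 : i ≤ Fintype.card V) :
    eigDesc A i = eigAsc A (Fintype.card V - i) := by
  have hlen := length_eigs hA
  rw [eigDesc, eigAsc,
    List.getD_eq_getElem _ _ (by rw [List.length_reverse, hlen]; omega),
    List.getD_eq_getElem _ _ (by rw [hlen]; omega),
    List.getElem_reverse]
  congr 1
  rw [hlen]
  omega

lemma quad_expand (M : Matrix V V ℝ) (x : V → ℝ) :
    x ⬝ᵥ (M *ᵥ x) = ∑ v, ∑ w, M v w * (x v * x w) := by
  rw [dotProduct]
  refine Finset.sum_congr rfl fun v _ => ?_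
  rw [Matrix.mulVec, dotProduct, Finset.mul_sum]
  exact Finset.sum_congr rfl fun w _ => by ring

lemma sqrt_prod_near_one {r s δ : ℝ} (hr0 : 0 < r) (hs0 : 0 < s)
    (hr : |r - 1| ≤ δ) (hs : |s - 1| ≤ δ) (hδ : δ ≤ 1) :
    |Real.sqrt (r * s) - 1| ≤ δ := by
  have hδ0 : 0 ≤ δ := le_trans (abs_nonneg _) hr
  have h1 := abs_le.1 hr
  have h2 := abs_le.1 hs
  rw [abs_le]
  constructor
  · have hle : (1 - δ) ^ 2 ≤ r * s := by nlinarith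
    have h := Real.sqrt_le_sqrt hle
    rw [Real.sqrt_sq (by linarith : (0:ℝ) ≤ 1 - δ)] at h
    linarith
  · have hle : r * s ≤ (1 + δ) ^ 2 := by nlinarith
    have := Real.sqrt_le_sqrt hle
    rw [Real.sqrt_sq (by linarith)] at this
    linarith

lemma pair_bound {p q P Q δ : ℝ} (hp : 0 < p) (hq : 0 < q) (hP : 0 < P) (hQ : 0 < Q)
    (h1 : |p / P - 1| ≤ δ) (h2 : |q / Q - 1| ≤ δ) (hδ : δ ≤ 1) :
    |(Real.sqrt P)⁻¹ * (Real.sqrt Q)⁻¹ - (Real.sqrt p)⁻¹ * (Real.sqrt q)⁻¹|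
      ≤ δ * ((Real.sqrt p)⁻¹ * (Real.sqrt q)⁻¹) := by
  have hsp : 0 < Real.sqrt p := Real.sqrt_pos.2 hp
  have hsq : 0 < Real.sqrt q := Real.sqrt_pos.2 hq
  have hsP : 0 < Real.sqrt P := Real.sqrt_pos.2 hP
  have hsQ : 0 < Real.sqrt Q := Real.sqrt_pos.2 hQ
  have hkey : |Real.sqrt p * Real.sqrt q / (Real.sqrt P * Real.sqrt Q) - 1| ≤ δ := by
    have heq : Real.sqrt p * Real.sqrt q / (Real.sqrt P * Real.sqrt Q)
        = Real.sqrt ((p / P) * (q / Q)) := by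
      rw [Real.sqrt_mul (by positivity), Real.sqrt_div hp.le, Real.sqrt_div hq.le]
      ring
    rw [heq]
    exact sqrt_prod_near_one (by positivity) (by positivity) h1 h2 hδ
  have ha : (0:ℝ) < Real.sqrt p * Real.sqrt q := by positivity
  have hA : (0:ℝ) < Real.sqrt P * Real.sqrt Q := by positivity
  have hrw : (Real.sqrt P)⁻¹ * (Real.sqrt Q)⁻¹ - (Real.sqrt p)⁻¹ * (Real.sqrt q)⁻¹
      = (Real.sqrt p * Real.sqrt q / (Real.sqrt P * Real.sqrt Q) - 1)
        * ((Real.sqrt p)⁻¹ * (Real.sqrt q)⁻¹) := by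
    field_simp
  rw [hrw, abs_mul, abs_of_pos (show (0:ℝ) < (Real.sqrt p)⁻¹ * (Real.sqrt q)⁻¹ by positivity)]
  exact mul_le_mul_of_nonneg_right hkey (by positivity)

lemma quad_diff_bound {A : Matrix V V ℝ} (hsym : ∀ v w, A v w = A w v)
    (hpos : ∀ v w, 0 ≤ A v w) {f g : V → ℝ} {δ : ℝ} (hδ0 : 0 ≤ δ)
    (hf : ∀ v, 0 ≤ f v)
    (hfg : ∀ v w, |g v * g w - f v * f w| ≤ δ * (f v * f w))
    (hrow : ∀ v, (∑ w, A v w) * (f v) ^ 2 = 1) (x : V → ℝ) :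
    |∑ v, ∑ w, A v w * (g v * g w - f v * f w) * (x v * x w)| ≤ δ * (x ⬝ᵥ x) := by
  have key : ∀ v w, |A v w * (g v * g w - f v * f w) * (x v * x w)|
      ≤ δ / 2 * (A v w * ((f v * x v) ^ 2 + (f w * x w) ^ 2)) := by
    intro v w
    have h1 := hfg v w
    have h2 := hpos v w
    have h3 := hf v
    have h4 := hf w
    have habs : |A v w * (g v * g w - f v * f w) * (x v * x w)|
        = A v w * (|g v * g w - f v * f w| * |x v * x w|) := by
      rw [abs_mul, abs_mul, abs_of_nonneg h2, mul_assoc]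
    rw [habs]
    have hb1 : |g v * g w - f v * f w| * |x v * x w| ≤ δ * (f v * f w) * |x v * x w| :=
      mul_le_mul_of_nonneg_right h1 (abs_nonneg _)
    have hb2 : δ * (f v * f w) * |x v * x w| ≤ δ / 2 * ((f v * x v) ^ 2 + (f w * x w) ^ 2) := by
      rw [abs_mul]
      have hxv := abs_nonneg (x v)
      have hxw := abs_nonneg (x w)
      have hsq : f v * f w * (|x v| * |x w|) ≤ ((f v * |x v|) ^ 2 + (f w * |x w|) ^ 2) / 2 := by
        nlinarith [sq_nonneg (f v * |x v| - f w * |x w|)]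
      have hsv : (f v * |x v|) ^ 2 = (f v * x v) ^ 2 := by
        rw [mul_pow, mul_pow, sq_abs]
      have hsw : (f w * |x w|) ^ 2 = (f w * x w) ^ 2 := by
        rw [mul_pow, mul_pow, sq_abs]
      rw [← hsv, ← hsw]
      calc δ * (f v * f w) * (|x v| * |x w|) = δ * (f v * f w * (|x v| * |x w|)) := by ring
        _ ≤ δ * (((f v * |x v|) ^ 2 + (f w * |x w|) ^ 2) / 2) :=
            mul_le_mul_of_nonneg_left hsq hδ0
        _ = δ / 2 * ((f v * |x v|) ^ 2 + (f w * |x w|) ^ 2) := by ring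
    calc A v w * (|g v * g w - f v * f w| * |x v * x w|)
        ≤ A v w * (δ / 2 * ((f v * x v) ^ 2 + (f w * x w) ^ 2)) :=
          mul_le_mul_of_nonneg_left (le_trans hb1 hb2) h2
      _ = δ / 2 * (A v w * ((f v * x v) ^ 2 + (f w * x w) ^ 2)) := by ring
  have hS1 : ∑ v, ∑ w, A v w * (f v * x v) ^ 2 = ∑ v, x v * x v := by
    refine Finset.sum_congr rfl fun v _ => ?_
    rw [← Finset.sum_mul]
    have := hrow v
    nlinarith [hrow v]
  have hS2 : ∑ v, ∑ w, A v w * (f w * x w) ^ 2 = ∑ v, x v * x v := by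
    rw [Finset.sum_comm]
    calc ∑ w, ∑ v, A v w * (f w * x w) ^ 2
        = ∑ w, ∑ v, A w v * (f w * x w) ^ 2 :=
          Finset.sum_congr rfl fun w _ => Finset.sum_congr rfl fun v _ => by rw [hsym v w]
      _ = ∑ v, x v * x v := hS1
  calc |∑ v, ∑ w, A v w * (g v * g w - f v * f w) * (x v * x w)|
      ≤ ∑ v, |∑ w, A v w * (g v * g w - f v * f w) * (x v * x w)| :=
        Finset.abs_sum_le_sum_abs _ _
    _ ≤ ∑ v, ∑ w, |A v w * (g v * g w - f v * f w) * (x v * x w)| :=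
        Finset.sum_le_sum fun v _ => Finset.abs_sum_le_sum_abs _ _
    _ ≤ ∑ v, ∑ w, δ / 2 * (A v w * ((f v * x v) ^ 2 + (f w * x w) ^ 2)) :=
        Finset.sum_le_sum fun v _ => Finset.sum_le_sum fun w _ => key v w
    _ = δ / 2 * ((∑ v, ∑ w, A v w * (f v * x v) ^ 2) + ∑ v, ∑ w, A v w * (f w * x w) ^ 2) := by
        rw [← Finset.sum_add_distrib, Finset.mul_sum]
        refine Finset.sum_congr rfl fun v _ => ?_
        rw [← Finset.sum_add_distrib, Finset.mul_sum]
        exact Finset.sum_congr rfl fun w _ => by ring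
    _ = δ * (x ⬝ᵥ x) := by
        rw [hS1, hS2, dotProduct]
        ring

end SpectralAux

namespace SpectralAux

lemma main_step {N₁ N₂ : ℕ} (hN₁ : 0 < N₁) (hN₂ : 0 < N₂) {D₁ D₂ : ℝ}
    (hD₁ : 0 < D₁) (hD₂ : 0 < D₂) (Bm : Matrix (Fin N₁) (Fin N₂) ℕ) {δ : ℝ}
    (hδ0 : 0 < δ) (hδ1 : δ ≤ 1/2)
    (h1 : ∀ v, |(deg (bipAdj Bm) (Sum.inl v) : ℝ) / D₁ - 1| ≤ δ)
    (h2 : ∀ w, |(deg (bipAdj Bm) (Sum.inr w) : ℝ) / D₂ - 1| ≤ δ) :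
    ∀ i : ℕ, 1 ≤ i → i ≤ N₁ + N₂ →
      |eigDesc ((bipAdj Bm).map (Nat.cast : ℕ → ℝ)) i / Real.sqrt (D₁ * D₂) -
        eigDesc (normAdj (bipAdj Bm)) i| ≤ δ := by
  classical
  set A := bipAdj Bm with hAdef
  set Ar := A.map (Nat.cast : ℕ → ℝ) with hArdef
  set dd : Fin N₁ ⊕ Fin N₂ → ℝ := Sum.elim (fun _ => D₁) (fun _ => D₂) with hdddef
  have hAsym : ∀ v w, Ar v w = Ar w v := by
    intro v w
    cases v <;> cases w <;> simp [hArdef, hAdef, bipAdj, Matrix.map_apply]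
  have hApos : ∀ v w, 0 ≤ Ar v w := by
    intro v w
    cases v <;> cases w <;> simp [hArdef, hAdef, bipAdj, Matrix.map_apply] <;> positivity
  have hdd : ∀ v, 0 < dd v := by
    intro v; cases v <;> simpa [hdddef]
  have hdev : ∀ v, |(deg A v : ℝ) / dd v - 1| ≤ δ := by
    intro v; cases v with
    | inl a => simpa [hdddef] using h1 a
    | inr b => simpa [hdddef] using h2 b
  have hdegpos : ∀ v, (0 : ℝ) < (deg A v : ℝ) := by
    intro v
    have hab := (abs_le.1 (hdev v)).1
    have hhalf : (1:ℝ)/2 ≤ (deg A v : ℝ) / dd v := by linarith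
    have := mul_le_mul_of_nonneg_right hhalf (hdd v).le
    rw [div_mul_cancel₀ _ (hdd v).ne'] at this
    nlinarith [hdd v]
  set f : Fin N₁ ⊕ Fin N₂ → ℝ := fun v => (Real.sqrt (deg A v : ℝ))⁻¹ with hfdef
  set g : Fin N₁ ⊕ Fin N₂ → ℝ := fun v => (Real.sqrt (dd v))⁻¹ with hgdef
  have hfpos : ∀ v, 0 < f v := fun v =>
    inv_pos.2 (Real.sqrt_pos.2 (hdegpos v))
  have hfg : ∀ v w, |g v * g w - f v * f w| ≤ δ * (f v * f w) := by
    intro v w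
    exact pair_bound (hdegpos v) (hdegpos w) (hdd v) (hdd w) (hdev v) (hdev w)
      (by linarith)
  have hrowsum : ∀ v, (∑ w, Ar v w) = (deg A v : ℝ) := by
    intro v
    rw [deg]
    push_cast
    rfl
  have hrow : ∀ v, (∑ w, Ar v w) * (f v) ^ 2 = 1 := by
    intro v
    rw [hrowsum v]
    simp only [hfdef]
    rw [inv_pow, Real.sq_sqrt (hdegpos v).le, mul_inv_cancel₀ (hdegpos v).ne']
  have hNentry : ∀ v w, normAdj A v w = f v * Ar v w * f w := by
    intro v w
    have hc : ∀ v, ((deg A v : ℝ)) ^ (-(1/2) : ℝ) = f v := by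
      intro v
      rw [Real.rpow_neg (Nat.cast_nonneg _), ← Real.sqrt_eq_rpow]
    rw [normAdj, Matrix.mul_diagonal, Matrix.diagonal_mul, hc, hc]
  have hMentry : ∀ v w, ((Real.sqrt (D₁ * D₂))⁻¹ • Ar) v w = Ar v w * (g v * g w) := by
    intro v w
    have hs : Real.sqrt (D₁ * D₂) = Real.sqrt D₁ * Real.sqrt D₂ := Real.sqrt_mul hD₁.le _
    cases v with
    | inl a =>
      cases w with
      | inl b => simp [hArdef, hAdef, bipAdj, Matrix.map_apply]
      | inr b =>
        rw [Matrix.smul_apply, smul_eq_mul, hs, mul_inv]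
        simp only [hgdef, hdddef, Sum.elim_inl, Sum.elim_inr]
        ring
    | inr a =>
      cases w with
      | inl b =>
        rw [Matrix.smul_apply, smul_eq_mul, hs, mul_inv]
        simp only [hgdef, hdddef, Sum.elim_inl, Sum.elim_inr]
        ring
      | inr b => simp [hArdef, hAdef, bipAdj, Matrix.map_apply]
  have hquad : ∀ x : Fin N₁ ⊕ Fin N₂ → ℝ,
      |x ⬝ᵥ ((((Real.sqrt (D₁ * D₂))⁻¹ • Ar) - normAdj A) *ᵥ x)| ≤ δ * (x ⬝ᵥ x) := by
    intro x
    rw [quad_expand]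
    have hsum : ∑ v, ∑ w, (((Real.sqrt (D₁ * D₂))⁻¹ • Ar) - normAdj A) v w * (x v * x w)
        = ∑ v, ∑ w, Ar v w * (g v * g w - f v * f w) * (x v * x w) := by
      refine Finset.sum_congr rfl fun v _ => Finset.sum_congr rfl fun w _ => ?_
      rw [Matrix.sub_apply, hMentry v w, hNentry v w]
      ring
    rw [hsum]
    exact quad_diff_bound hAsym hApos hδ0.le (fun v => (hfpos v).le) hfg hrow x
  have hermAr : Ar.IsHermitian := by
    rw [Matrix.IsHermitian]
    ext v w
    rw [Matrix.conjTranspose_apply, star_trivial, hAsym w v]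
  have hermM : ((Real.sqrt (D₁ * D₂))⁻¹ • Ar).IsHermitian := by
    rw [Matrix.IsHermitian, Matrix.conjTranspose_smul, hermAr, star_trivial]
  have hermN : (normAdj A).IsHermitian := by
    rw [Matrix.IsHermitian]
    ext v w
    rw [Matrix.conjTranspose_apply, star_trivial, hNentry w v, hNentry v w, hAsym w v]
    ring
  have hcard : Fintype.card (Fin N₁ ⊕ Fin N₂) = N₁ + N₂ := by simp
  intro i hi1 hi2
  have hk : Fintype.card (Fin N₁ ⊕ Fin N₂) - i < Fintype.card (Fin N₁ ⊕ Fin N₂) := by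
    rw [hcard]; omega
  set k : Fin (Fintype.card (Fin N₁ ⊕ Fin N₂)) := ⟨Fintype.card (Fin N₁ ⊕ Fin N₂) - i, hk⟩
    with hkdef
  have hw := weyl hermM hermN hquad k
  have hsm := eigAsc_smul hermAr (by positivity : (0:ℝ) ≤ (Real.sqrt (D₁ * D₂))⁻¹) k
  have hd1 : eigDesc Ar i = eigAsc Ar (Fintype.card (Fin N₁ ⊕ Fin N₂) - i) :=
    eigDesc_eq_eigAsc hermAr hi1 (by rw [hcard]; omega)
  have hd2 : eigDesc (normAdj A) i = eigAsc (normAdj A) (Fintype.card (Fin N₁ ⊕ Fin N₂) - i) :=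
    eigDesc_eq_eigAsc hermN hi1 (by rw [hcard]; omega)
  have hkval : (k : ℕ) = Fintype.card (Fin N₁ ⊕ Fin N₂) - i := rfl
  rw [hd1, hd2, div_eq_inv_mul, ← hkval, ← hsm]
  exact hw

lemma lam1_eq {N₁ N₂ : ℕ} (hN₁ : 0 < N₁) (hN₂ : 0 < N₂) (Bm : Matrix (Fin N₁) (Fin N₂) ℕ) :
    lam1 (bipAdj Bm) = 1 - eigDesc (normAdj (bipAdj Bm)) 2 := by
  classical
  set A := bipAdj Bm with hAdef
  have hAsym : ∀ v w, A.map (Nat.cast : ℕ → ℝ) v w = A.map (Nat.cast : ℕ → ℝ) w v := by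
    intro v w
    cases v <;> cases w <;> simp [hAdef, bipAdj, Matrix.map_apply]
  have hNsym : ∀ v w, normAdj A v w = normAdj A w v := by
    intro v w
    rw [normAdj, Matrix.mul_diagonal, Matrix.diagonal_mul, Matrix.mul_diagonal,
      Matrix.diagonal_mul, hAsym v w]
    ring
  have hermN : (normAdj A).IsHermitian := by
    rw [Matrix.IsHermitian]
    ext v w
    rw [Matrix.conjTranspose_apply, star_trivial, hNsym w v]
  have hcard : Fintype.card (Fin N₁ ⊕ Fin N₂) = N₁ + N₂ := by simp
  have h2le : 2 ≤ Fintype.card (Fin N₁ ⊕ Fin N₂) := by rw [hcard]; omega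
  have hk : 1 < Fintype.card (Fin N₁ ⊕ Fin N₂) := by omega
  set k : Fin (Fintype.card (Fin N₁ ⊕ Fin N₂)) := ⟨1, hk⟩ with hkdef
  have h1s := eigAsc_one_sub hermN k
  have hkv : (k : ℕ) = 1 := rfl
  have hrevv : ((Fin.rev k : Fin (Fintype.card (Fin N₁ ⊕ Fin N₂))) : ℕ)
      = Fintype.card (Fin N₁ ⊕ Fin N₂) - 2 := by
    rw [Fin.val_rev, hkv]
  have hd2 : eigDesc (normAdj A) 2 = eigAsc (normAdj A) (Fintype.card (Fin N₁ ⊕ Fin N₂) - 2) :=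
    eigDesc_eq_eigAsc hermN (by norm_num) h2le
  rw [lam1, normLap, hd2]
  rw [hkv] at h1s
  rw [h1s, hrevv]

end SpectralAux

open SpectralAux in



/-- For an almost `(d¹_m, d²_m)`-regular family of bipartite multigraphs
(with `d¹_m, d²_m → ∞`), the eigenvalues of `A/√(d¹ d²)` and of `D⁻¹ᐟ² A D⁻¹ᐟ²` agree up to
`o_m(1)` uniformly; in particular if `μ₂(A_m)/√(d¹_m d²_m) → 0` then `λ₁(G_m) → 1`. -/
theorem almost_regular_bipartite_spectral {n₁ n₂ : ℕ → ℕ}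
    (hn₁ : ∀ m, 0 < n₁ m) (hn₂ : ∀ m, 0 < n₂ m)
    (d₁ d₂ : ℕ → ℝ) (hd₁pos : ∀ m, 0 < d₁ m) (hd₂pos : ∀ m, 0 < d₂ m)
    (hd₁ : Tendsto d₁ atTop atTop) (hd₂ : Tendsto d₂ atTop atTop)
    (B : ∀ m, Matrix (Fin (n₁ m)) (Fin (n₂ m)) ℕ)
    (hreg₁ : ∀ ε > (0 : ℝ), ∀ᶠ m in atTop,
      ∀ v, |(deg (bipAdj (B m)) (Sum.inl v) : ℝ) / d₁ m - 1| < ε)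
    (hreg₂ : ∀ ε > (0 : ℝ), ∀ᶠ m in atTop,
      ∀ w, |(deg (bipAdj (B m)) (Sum.inr w) : ℝ) / d₂ m - 1| < ε) :
    (∀ ε > (0 : ℝ), ∀ᶠ m in atTop, ∀ i : ℕ, 1 ≤ i → i ≤ n₁ m + n₂ m →
      |eigDesc ((bipAdj (B m)).map (Nat.cast : ℕ → ℝ)) i / Real.sqrt (d₁ m * d₂ m) -
          eigDesc (normAdj (bipAdj (B m))) i| < ε) ∧
    (Tendsto (fun m =>
        eigDesc ((bipAdj (B m)).map (Nat.cast : ℕ → ℝ)) 2 / Real.sqrt (d₁ m * d₂ m))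
        atTop (nhds 0) →
      Tendsto (fun m => lam1 (bipAdj (B m))) atTop (nhds 1)) := by
  have hpart1 : ∀ ε > (0 : ℝ), ∀ᶠ m in atTop, ∀ i : ℕ, 1 ≤ i → i ≤ n₁ m + n₂ m →
      |eigDesc ((bipAdj (B m)).map (Nat.cast : ℕ → ℝ)) i / Real.sqrt (d₁ m * d₂ m) -
        eigDesc (normAdj (bipAdj (B m))) i| < ε := by
    intro ε hε
    have hδ0 : (0:ℝ) < min (ε/2) (1/2) := lt_min (by linarith) (by norm_num)
    filter_upwards [hreg₁ (min (ε/2) (1/2)) hδ0, hreg₂ (min (ε/2) (1/2)) hδ0] with m hm1 hm2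
    intro i hi1 hi2
    have hstep := SpectralAux.main_step (hn₁ m) (hn₂ m) (hd₁pos m) (hd₂pos m) (B m)
      hδ0 (min_le_right _ _) (fun v => (hm1 v).le) (fun w => (hm2 w).le) i hi1 hi2
    have hlt : min (ε/2) (1/2) < ε := lt_of_le_of_lt (min_le_left _ _) (by linarith)
    linarith
  refine ⟨hpart1, ?_⟩
  intro htend
  rw [Metric.tendsto_nhds]
  intro ε hε
  have h2 := hpart1 (ε/2) (by linarith)
  have h3 := Metric.tendsto_nhds.1 htend (ε/2) (by linarith)
  filter_upwards [h2, h3] with m hm2 hm3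
  have hlam := SpectralAux.lam1_eq (hn₁ m) (hn₂ m) (B m)
  have hi := hm2 2 (by norm_num) (by have := hn₁ m; have := hn₂ m; omega)
  rw [Real.dist_eq] at hm3 ⊢
  rw [hlam, sub_zero] at *
  set X := eigDesc (normAdj (bipAdj (B m))) 2 with hX
  set Y := eigDesc ((bipAdj (B m)).map (Nat.cast : ℕ → ℝ)) 2 / Real.sqrt (d₁ m * d₂ m)
    with hY
  have habs : |1 - X - 1| = |X| := by
    rw [show (1 : ℝ) - X - 1 = -X by ring, abs_neg]
  rw [habs]
  have htri : |X| ≤ |X - Y| + |Y| := by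
    calc |X| = |(X - Y) + Y| := by ring_nf
      _ ≤ |X - Y| + |Y| := abs_add_le _ _
  rw [abs_sub_comm] at hi
  linarith
end

section
/- Let (d^{(1)}_m) and (d^{(2)}_m) be sequences of positive reals tending to infinity, and for each m let G_m be a bipartite multigraph with nonempty parts V_1(G_m), V_2(G_m) such that max_{v∈V_1(G_m)} |deg(v)/d^{(1)}_m − 1| → 0 and max_{w∈V_2(G_m)} |deg(w)/d^{(2)}_m − 1| → 0 as m → ∞ (i.e. G_m is almost (d^{(1)}_m, d^{(2)}_m)-regular). Let G'_m be bipartite multigraphs on the same vertex set with the same parts, such that (max_{v∈V_1(G'_m)} deg_{G'_m}(v))/d^{(1)}_m → 0 and (max_{w∈V_2(G'_m)} deg_{G'_m}(w))/d^{(2)}_m → 0. Then: (i) the union G_m ∪ G'_m is almost (d^{(1)}_m, d^{(2)}_m)-regular, i.e. max_{v∈V_1} |deg_{G_m∪G'_m}(v)/d^{(1)}_m − 1| → 0 and max_{w∈V_2} |deg_{G_m∪G'_m}(w)/d^{(2)}_m − 1| → 0; and (ii) λ_1(G_m) − λ_1(G_m ∪ G'_m) → 0 as m → ∞. -/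
open Matrix Filter

variable {V : Type*} [Fintype V] [DecidableEq V]

variable {V : Type*} [Fintype V] [DecidableEq V]

lemma repr_toEuclideanLin {A : Matrix V V ℝ}
    (hA : A.IsHermitian) (x : EuclideanSpace ℝ V) (j : V) :
    hA.eigenvectorBasis.repr (Matrix.toEuclideanLin A x) j
      = hA.eigenvalues j * hA.eigenvectorBasis.repr x j := by
  rw [OrthonormalBasis.repr_apply_apply, OrthonormalBasis.repr_apply_apply,
    ← (Matrix.isHermitian_iff_isSymmetric.1 hA) _ x]
  have h : (Matrix.toEuclideanLin A) (hA.eigenvectorBasis j)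
      = hA.eigenvalues j • hA.eigenvectorBasis j := by
    apply (WithLp.equiv 2 (V → ℝ)).injective
    simp [Matrix.toEuclideanLin_apply, hA.mulVec_eigenvectorBasis j]
  rw [h, real_inner_smul_left]

open scoped RealInnerProductSpace in
lemma quad_expansion {A : Matrix V V ℝ} (hA : A.IsHermitian) (x : EuclideanSpace ℝ V) :
    ⟪x, Matrix.toEuclideanLin A x⟫ = ∑ j, hA.eigenvalues j * (hA.eigenvectorBasis.repr x j)^2 := by
  rw [← hA.eigenvectorBasis.repr.inner_map_map x (Matrix.toEuclideanLin A x)]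
  rw [PiLp.inner_apply]
  simp [repr_toEuclideanLin hA x, RCLike.inner_apply]
  ring_nf

open scoped RealInnerProductSpace in
lemma norm_sq_expansion {A : Matrix V V ℝ} (hA : A.IsHermitian) (x : EuclideanSpace ℝ V) :
    ‖x‖^2 = ∑ j, (hA.eigenvectorBasis.repr x j)^2 := by
  rw [← real_inner_self_eq_norm_sq, ← hA.eigenvectorBasis.repr.inner_map_map x x,
    PiLp.inner_apply]
  simp [RCLike.inner_apply, sq]

lemma repr_eq_zero_of_mem_span {ι E : Type*} [Fintype ι] [DecidableEq ι]
    [NormedAddCommGroup E] [InnerProductSpace ℝ E]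
    (b : OrthonormalBasis ι ℝ E) (S : Set ι) {x : E}
    (hx : x ∈ Submodule.span ℝ (b '' S)) {j : ι} (hj : j ∉ S) : b.repr x j = 0 := by
  induction hx using Submodule.span_induction with
  | mem y hy =>
    obtain ⟨i, hiS, rfl⟩ := hy
    rw [OrthonormalBasis.repr_self, EuclideanSpace.single_apply]
    simp only [ite_eq_right_iff]
    intro h; exact absurd (h ▸ hiS) hj
  | zero => simp
  | add y z _ _ hy hz => simp [hy, hz]
  | smul c y _ hy => simp [hy]

lemma multiset_sort_eq_ofFn {N : ℕ} (g : Fin N → ℝ) :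
    (Finset.univ.val.map g).sort (· ≤ ·) = List.ofFn (g ∘ Tuple.sort g) := by
  apply List.Perm.eq_of_sortedLE (List.Pairwise.sortedLE (Multiset.pairwise_sort ..))
    (List.sortedLE_ofFn_iff.2 (Tuple.monotone_sort g))
  rw [← Multiset.coe_eq_coe, Multiset.sort_eq, List.ofFn_eq_map, ← Multiset.map_coe,
    ← Multiset.map_map]
  have h1 : (↑(List.finRange N) : Multiset (Fin N)) = Finset.univ.val := rfl
  rw [h1]
  have h2 : Multiset.map (⇑(Tuple.sort g)) Finset.univ.val = Finset.univ.val := by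
    rw [← Equiv.coe_toEmbedding, ← Finset.map_val, Finset.univ_map_equiv_to_embedding]
  rw [h2]

lemma card_le_subtype {N i : ℕ} (hi : i < N) :
    Fintype.card {j : Fin N // (j : ℕ) ≤ i} = i + 1 := by
  rw [← Fintype.card_fin (i+1)]
  exact Fintype.card_congr
    ⟨fun j => ⟨j.1.1, Nat.lt_succ_of_le j.2⟩,
     fun k => ⟨⟨k.1, lt_of_le_of_lt (Nat.le_of_lt_succ k.2) hi⟩, Nat.le_of_lt_succ k.2⟩,
     fun j => by ext; rfl, fun k => by ext; rfl⟩

lemma card_ge_subtype {N i : ℕ} (hi : i < N) :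
    Fintype.card {j : Fin N // i ≤ (j : ℕ)} = N - i := by
  rw [← Fintype.card_fin (N-i)]
  exact Fintype.card_congr
    ⟨fun j => ⟨j.1.1 - i, by omega⟩,
     fun k => ⟨⟨k.1 + i, by have := k.2; omega⟩, Nat.le_add_left i k.1⟩,
     fun j => by ext; have := j.2; simp; omega,
     fun k => by ext; simp⟩

lemma finrank_span_orthonormal {ι E : Type*} [NormedAddCommGroup E] [InnerProductSpace ℝ E]
    {v : ι → E} (hv : Orthonormal ℝ v) (S : Set ι) [Fintype S] :
    Module.finrank ℝ (Submodule.span ℝ (v '' S)) = Fintype.card S := by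
  rw [Set.image_eq_range]
  exact finrank_span_eq_card ((hv.comp _ Subtype.val_injective).linearIndependent)

lemma eigAsc_eq_sorted {A : Matrix V V ℝ} (hA : A.IsHermitian) {i : ℕ}
    (hi : i < Fintype.card V) :
    eigAsc A i = ((hA.eigenvalues ∘ (Fintype.equivFin V).symm) ∘
      Tuple.sort (hA.eigenvalues ∘ (Fintype.equivFin V).symm)) ⟨i, hi⟩ := by
  unfold eigAsc eigs
  rw [dif_pos hA]
  have h0 : (Finset.univ.val.map hA.eigenvalues)
      = Finset.univ.val.map (hA.eigenvalues ∘ (Fintype.equivFin V).symm) := by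
    rw [← Multiset.map_map]
    congr 1
    rw [← Equiv.coe_toEmbedding, ← Finset.map_val, Finset.univ_map_equiv_to_embedding]
  rw [h0, multiset_sort_eq_ofFn]
  rw [List.getD_eq_getElem _ _ (by simpa using hi)]
  simp [List.getElem_ofFn]

open scoped RealInnerProductSpace in
lemma eigAsc_le_eigAsc_add {A B : Matrix V V ℝ} (hA : A.IsHermitian) (hB : B.IsHermitian)
    {ε : ℝ}
    (h : ∀ x : EuclideanSpace ℝ V, ⟪x, Matrix.toEuclideanLin A x⟫
          ≤ ⟪x, Matrix.toEuclideanLin B x⟫ + ε * ‖x‖ ^ 2)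
    {i : ℕ} (hi : i < Fintype.card V) :
    eigAsc A i ≤ eigAsc B i + ε := by
  classical
  set e : Fin (Fintype.card V) ≃ V := (Fintype.equivFin V).symm with he
  set a : Fin (Fintype.card V) ≃ V := (Tuple.sort (hA.eigenvalues ∘ e)).trans e with ha
  set b : Fin (Fintype.card V) ≃ V := (Tuple.sort (hB.eigenvalues ∘ e)).trans e with hb
  set μa : Fin (Fintype.card V) → ℝ := fun j => hA.eigenvalues (a j) with hμadef
  set μb : Fin (Fintype.card V) → ℝ := fun j => hB.eigenvalues (b j) with hμbdef
  have hμa : Monotone μa := Tuple.monotone_sort (hA.eigenvalues ∘ e)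
  have hμb : Monotone μb := Tuple.monotone_sort (hB.eigenvalues ∘ e)
  have hEA : eigAsc A i = μa ⟨i, hi⟩ := eigAsc_eq_sorted hA hi
  have hEB : eigAsc B i = μb ⟨i, hi⟩ := eigAsc_eq_sorted hB hi
  set ra : EuclideanSpace ℝ V → Fin (Fintype.card V) → ℝ :=
    fun x j => hA.eigenvectorBasis.repr x (a j) with hradef
  set rb : EuclideanSpace ℝ V → Fin (Fintype.card V) → ℝ :=
    fun x j => hB.eigenvectorBasis.repr x (b j) with hrbdef
  have quadA : ∀ x : EuclideanSpace ℝ V,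
      ⟪x, Matrix.toEuclideanLin A x⟫ = ∑ j, μa j * (ra x j)^2 := fun x => by
    rw [quad_expansion hA x,
      ← Equiv.sum_comp a (fun v => hA.eigenvalues v * (hA.eigenvectorBasis.repr x v)^2)]
  have quadB : ∀ x : EuclideanSpace ℝ V,
      ⟪x, Matrix.toEuclideanLin B x⟫ = ∑ j, μb j * (rb x j)^2 := fun x => by
    rw [quad_expansion hB x,
      ← Equiv.sum_comp b (fun v => hB.eigenvalues v * (hB.eigenvectorBasis.repr x v)^2)]
  have normA : ∀ x : EuclideanSpace ℝ V, ‖x‖^2 = ∑ j, (ra x j)^2 := fun x => by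
    rw [norm_sq_expansion hA x,
      ← Equiv.sum_comp a (fun v => (hA.eigenvectorBasis.repr x v)^2)]
  have normB : ∀ x : EuclideanSpace ℝ V, ‖x‖^2 = ∑ j, (rb x j)^2 := fun x => by
    rw [norm_sq_expansion hB x,
      ← Equiv.sum_comp b (fun v => (hB.eigenvectorBasis.repr x v)^2)]
  set U := Submodule.span ℝ (⇑hB.eigenvectorBasis '' (⇑b '' {j | (j:ℕ) ≤ i})) with hUdef
  set W := Submodule.span ℝ (⇑hA.eigenvectorBasis '' (⇑a '' {j | i ≤ (j:ℕ)})) with hWdef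
  have hU : Module.finrank ℝ U = i + 1 := by
    rw [hUdef, Set.image_image]
    exact (finrank_span_orthonormal (hB.eigenvectorBasis.orthonormal.comp _ b.injective)
      _).trans (card_le_subtype hi)
  have hW : Module.finrank ℝ W = Fintype.card V - i := by
    rw [hWdef, Set.image_image]
    exact (finrank_span_orthonormal (hA.eigenvectorBasis.orthonormal.comp _ a.injective)
      _).trans (card_ge_subtype hi)
  have hsum := Submodule.finrank_sup_add_finrank_inf_eq U W
  have hle : Module.finrank ℝ ↥(U ⊔ W) ≤ Fintype.card V := by
    simpa [finrank_euclideanSpace] using Submodule.finrank_le (U ⊔ W)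
  have hpos : U ⊓ W ≠ ⊥ := by
    intro hbot
    rw [hbot, finrank_bot, hU, hW] at hsum
    omega
  obtain ⟨x, hx, hx0⟩ := Submodule.exists_mem_ne_zero_of_ne_bot hpos
  have hxU : x ∈ U := (Submodule.mem_inf.1 hx).1
  have hxW : x ∈ W := (Submodule.mem_inf.1 hx).2
  have hraz : ∀ j : Fin (Fintype.card V), (j:ℕ) < i → ra x j = 0 := by
    intro j hj
    refine repr_eq_zero_of_mem_span hA.eigenvectorBasis _ hxW ?_
    intro hmem
    have : j ∈ {j : Fin (Fintype.card V) | i ≤ (j:ℕ)} :=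
      ((Equiv.injective a).mem_set_image).1 hmem
    simp only [Set.mem_setOf_eq] at this
    omega
  have hrbz : ∀ j : Fin (Fintype.card V), i < (j:ℕ) → rb x j = 0 := by
    intro j hj
    refine repr_eq_zero_of_mem_span hB.eigenvectorBasis _ hxU ?_
    intro hmem
    have : j ∈ {j : Fin (Fintype.card V) | (j:ℕ) ≤ i} :=
      ((Equiv.injective b).mem_set_image).1 hmem
    simp only [Set.mem_setOf_eq] at this
    omega
  have key1 : μa ⟨i, hi⟩ * ‖x‖^2 ≤ ⟪x, Matrix.toEuclideanLin A x⟫ := by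
    rw [quadA x, normA x, Finset.mul_sum]
    refine Finset.sum_le_sum fun j _ => ?_
    rcases lt_or_ge (j:ℕ) i with hj | hj
    · rw [hraz j hj]; simp
    · have := hμa (show (⟨i,hi⟩ : Fin _) ≤ j from hj)
      nlinarith [sq_nonneg (ra x j)]
  have key2 : ⟪x, Matrix.toEuclideanLin B x⟫ ≤ μb ⟨i, hi⟩ * ‖x‖^2 := by
    rw [quadB x, normB x, Finset.mul_sum]
    refine Finset.sum_le_sum fun j _ => ?_
    rcases lt_or_ge i (j:ℕ) with hj | hj
    · rw [hrbz j hj]; simp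
    · have := hμb (show j ≤ (⟨i,hi⟩ : Fin _) from hj)
      nlinarith [sq_nonneg (rb x j)]
  have hn : (0:ℝ) < ‖x‖^2 := by
    have : 0 < ‖x‖ := norm_pos_iff.2 hx0
    positivity
  have hhx := h x
  rw [hEA, hEB]
  nlinarith [key1, key2, hn, hhx]


lemma amgm_w {p q xu xv : ℝ} (hp : 0 < p) (hq : 0 < q) :
    |xu| * |xv| ≤ ((q/p) * xu^2 + (p/q) * xv^2)/2 := by
  have h2 : (q/p * xu^2 + p/q * xv^2)/2 = (q^2*xu^2 + p^2*xv^2)/(p*q*2) := by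
    field_simp
  rw [h2, le_div_iff₀ (by positivity)]
  nlinarith [sq_nonneg (q*|xu| - p*|xv|), sq_abs xu, sq_abs xv, abs_nonneg xu, abs_nonneg xv,
    mul_pos hp hq]

lemma schur_quad {V : Type*} [Fintype V] (M : Matrix V V ℝ) (hM : Mᵀ = M) (w : V → ℝ)
    (hw : ∀ v, 0 < w v) {ε : ℝ} (hrow : ∀ u, ∑ v, |M u v| * w v ≤ ε * w u)
    (x : V → ℝ) : |∑ u, x u * (M *ᵥ x) u| ≤ ε * ∑ u, x u ^ 2 := by
  have hsym : ∀ u v, M u v = M v u := by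
    intro u v; conv_lhs => rw [← hM]
    rfl
  have h1 : ∑ u, x u * (M *ᵥ x) u = ∑ u, ∑ v, x u * (M u v * x v) := by
    simp [Matrix.mulVec, dotProduct, Finset.mul_sum]
  have step1 : |∑ u, x u * (M *ᵥ x) u| ≤ ∑ u, ∑ v, |M u v| * (|x u| * |x v|) := by
    rw [h1]
    refine (Finset.abs_sum_le_sum_abs _ _).trans (Finset.sum_le_sum fun u _ => ?_)
    refine (Finset.abs_sum_le_sum_abs _ _).trans (Finset.sum_le_sum fun v _ => ?_)
    rw [abs_mul, abs_mul]
    exact le_of_eq (by ring)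
  have step2 : ∑ u, ∑ v, |M u v| * (|x u| * |x v|)
      ≤ ∑ u, ∑ v, |M u v| * (((w v / w u) * x u^2 + (w u / w v) * x v^2)/2) :=
    Finset.sum_le_sum fun u _ => Finset.sum_le_sum fun v _ =>
      mul_le_mul_of_nonneg_left (amgm_w (hw u) (hw v)) (abs_nonneg _)
  have split : ∑ u, ∑ v, |M u v| * (((w v / w u) * x u^2 + (w u / w v) * x v^2)/2)
      = ∑ u, (x u^2 / w u * ∑ v, |M u v| * w v)/2
        + ∑ v, (x v^2 / w v * ∑ u, |M v u| * w u)/2 := by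
    have hterm : ∀ u, ∑ v, |M u v| * (((w v / w u) * x u^2 + (w u / w v) * x v^2)/2)
        = (x u^2 / w u * ∑ v, |M u v| * w v)/2
          + ∑ v, (|M u v| * ((w u / w v) * x v^2))/2 := by
      intro u
      rw [Finset.mul_sum, Finset.sum_div, ← Finset.sum_add_distrib]
      exact Finset.sum_congr rfl fun v _ => by ring
    rw [Finset.sum_congr rfl fun u _ => hterm u, Finset.sum_add_distrib]
    congr 1
    rw [Finset.sum_comm]
    refine Finset.sum_congr rfl fun v _ => ?_
    rw [Finset.mul_sum, Finset.sum_div]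
    refine Finset.sum_congr rfl fun u _ => ?_
    rw [hsym u v]; ring
  have bound1 : ∑ u, (x u^2 / w u * ∑ v, |M u v| * w v)/2 ≤ ∑ u, ε * x u^2 / 2 := by
    refine Finset.sum_le_sum fun u _ => ?_
    have h3 : x u^2 / w u * ∑ v, |M u v| * w v ≤ x u^2 / w u * (ε * w u) :=
      mul_le_mul_of_nonneg_left (hrow u) (div_nonneg (sq_nonneg _) (hw u).le)
    have h4 : x u^2 / w u * (ε * w u) = ε * x u^2 := by
      have hne := (hw u).ne'
      field_simp
    linarith
  have bound2 : ∑ v, (x v^2 / w v * ∑ u, |M v u| * w u)/2 ≤ ∑ v, ε * x v^2 / 2 := by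
    refine Finset.sum_le_sum fun v _ => ?_
    have h3 : x v^2 / w v * ∑ u, |M v u| * w u ≤ x v^2 / w v * (ε * w v) :=
      mul_le_mul_of_nonneg_left (hrow v) (div_nonneg (sq_nonneg _) (hw v).le)
    have h4 : x v^2 / w v * (ε * w v) = ε * x v^2 := by
      have hne := (hw v).ne'
      field_simp
    linarith
  have : ∑ u, ε * x u ^ 2 / 2 + ∑ u, ε * x u ^ 2 / 2 = ε * ∑ u, x u ^ 2 := by
    rw [← Finset.sum_add_distrib, Finset.mul_sum]
    exact Finset.sum_congr rfl fun u _ => by ring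
  linarith [step1, step2, split ▸ step2]


open scoped RealInnerProductSpace in
lemma inner_toEuclideanLin {V : Type*} [Fintype V] [DecidableEq V] (M : Matrix V V ℝ)
    (x : EuclideanSpace ℝ V) :
    ⟪x, Matrix.toEuclideanLin M x⟫ = ∑ u, x u * (M *ᵥ (fun v => x v)) u := by
  rw [PiLp.inner_apply]
  simp [Matrix.toEuclideanLin_apply, RCLike.inner_apply]
  exact Finset.sum_congr rfl fun i _ => mul_comm _ _

open scoped RealInnerProductSpace in
lemma norm_sq_eq_sum {V : Type*} [Fintype V] (x : EuclideanSpace ℝ V) :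
    ‖x‖^2 = ∑ u, x u ^ 2 := by
  rw [← real_inner_self_eq_norm_sq, PiLp.inner_apply]
  simp [RCLike.inner_apply, sq]

open scoped RealInnerProductSpace in
lemma abs_eigAsc_sub_le {V : Type*} [Fintype V] [DecidableEq V] {A B : Matrix V V ℝ}
    (hA : A.IsHermitian) (hB : B.IsHermitian) {ε : ℝ}
    (h : ∀ x : V → ℝ, |∑ u, x u * ((A - B) *ᵥ x) u| ≤ ε * ∑ u, x u ^ 2)
    {i : ℕ} (hi : i < Fintype.card V) : |eigAsc A i - eigAsc B i| ≤ ε := by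
  have key : ∀ x : EuclideanSpace ℝ V,
      |⟪x, Matrix.toEuclideanLin A x⟫ - ⟪x, Matrix.toEuclideanLin B x⟫| ≤ ε * ‖x‖^2 := by
    intro x
    have h1 : ⟪x, Matrix.toEuclideanLin A x⟫ - ⟪x, Matrix.toEuclideanLin B x⟫
        = ⟪x, Matrix.toEuclideanLin (A - B) x⟫ := by
      rw [map_sub]
      simp only [LinearMap.sub_apply]
      rw [inner_sub_right]
    rw [h1, inner_toEuclideanLin, norm_sq_eq_sum]
    exact h _
  have h₁ : eigAsc A i ≤ eigAsc B i + ε := by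
    refine eigAsc_le_eigAsc_add hA hB (fun x => ?_) hi
    have := key x
    rw [abs_le] at this
    linarith [this.2]
  have h₂ : eigAsc B i ≤ eigAsc A i + ε := by
    refine eigAsc_le_eigAsc_add hB hA (fun x => ?_) hi
    have := key x
    rw [abs_le] at this
    linarith [this.1]
  rw [abs_le]
  constructor <;> linarith


lemma deg_add (A A' : Matrix V V ℕ) (v : V) : deg (A + A') v = deg A v + deg A' v := by
  simp [deg, Finset.sum_add_distrib]

lemma normAdj_apply (A : Matrix V V ℕ) (u v : V) :
    normAdj A u v = ((deg A u : ℝ)) ^ (-(1/2) : ℝ) * (A u v : ℝ)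
      * ((deg A v : ℝ)) ^ (-(1/2) : ℝ) := by
  simp [normAdj, Matrix.mul_apply, Matrix.diagonal, Finset.sum_ite_eq, Finset.sum_ite_eq',
    Matrix.map_apply]

lemma rpow_neg_half_eq (x : ℝ) (hx : 0 ≤ x) :
    x ^ (-(1/2) : ℝ) = (Real.sqrt x)⁻¹ := by
  rw [Real.rpow_neg hx, ← Real.sqrt_eq_rpow]

lemma normAdj_transpose {A : Matrix V V ℕ} (hA : Aᵀ = A) : (normAdj A)ᵀ = normAdj A := by
  have h1 : (A.map (Nat.cast : ℕ → ℝ))ᵀ = A.map Nat.cast := by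
    rw [← Matrix.transpose_map, hA]
  rw [normAdj, Matrix.transpose_mul, Matrix.transpose_mul, Matrix.diagonal_transpose, h1,
    Matrix.mul_assoc]

lemma cast_sum_deg (A : Matrix V V ℕ) (u : V) : ∑ v, (A u v : ℝ) = (deg A u : ℝ) := by
  rw [deg]; push_cast; rfl

lemma row_bound (A A' : Matrix V V ℕ) {η : ℝ} (hη0 : 0 ≤ η)
    (hpos : ∀ u, 0 < deg A u)
    (hsm : ∀ u, (deg A' u : ℝ) ≤ η * deg A u) (u : V) :
    ∑ v, |(normAdj A - normAdj (A + A')) u v| * Real.sqrt (deg A v)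
      ≤ (2*η) * Real.sqrt (deg A u) := by
  have ha : ∀ t, (0:ℝ) < (deg A t : ℝ) := fun t => by exact_mod_cast hpos t
  have hb : ∀ t, (0:ℝ) ≤ (deg A' t : ℝ) := fun t => Nat.cast_nonneg _
  have hsq : ∀ t, 0 < Real.sqrt (deg A t) := fun t => Real.sqrt_pos.2 (ha t)
  have hc : ∀ t, (0:ℝ) < (deg (A + A') t : ℝ) := fun t => by
    rw [deg_add]; push_cast; linarith [ha t, hb t]
  have hsqc : ∀ t, 0 < Real.sqrt (deg (A+A') t) := fun t => Real.sqrt_pos.2 (hc t)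
  set sa : V → ℝ := fun t => (Real.sqrt (deg A t))⁻¹ with hsa
  set sb : V → ℝ := fun t => (Real.sqrt (deg (A+A') t))⁻¹ with hsb
  have hsa0 : ∀ t, 0 < sa t := fun t => inv_pos.2 (hsq t)
  have hsb0 : ∀ t, 0 < sb t := fun t => inv_pos.2 (hsqc t)
  have hba : ∀ t, sb t ≤ sa t := fun t => by
    apply inv_anti₀ (hsq t)
    apply Real.sqrt_le_sqrt
    rw [deg_add]; push_cast; linarith [hb t]
  -- sqrt(deg(A+A') t) ≤ sqrt(1+η) * sqrt(deg A t)
  have hcs : ∀ t, Real.sqrt (deg (A+A') t) ≤ Real.sqrt (1+η) * Real.sqrt (deg A t) := by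
    intro t
    rw [← Real.sqrt_mul (by linarith)]
    apply Real.sqrt_le_sqrt
    rw [deg_add]; push_cast
    have := hsm t
    nlinarith [ha t]
  -- key : sa u * sa v - sb u * sb v ≤ η * (sa u * sa v)
  have hkey : ∀ v, sa u * sa v - sb u * sb v ≤ η * (sa u * sa v) := by
    intro v
    have h1 : Real.sqrt (deg (A+A') u) * Real.sqrt (deg (A+A') v)
        ≤ (1+η) * (Real.sqrt (deg A u) * Real.sqrt (deg A v)) := by
      have e3 : Real.sqrt (1+η) * Real.sqrt (1+η) = 1 + η :=
        Real.mul_self_sqrt (by linarith)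
      calc Real.sqrt (deg (A+A') u) * Real.sqrt (deg (A+A') v)
          ≤ (Real.sqrt (1+η) * Real.sqrt (deg A u)) * (Real.sqrt (1+η) * Real.sqrt (deg A v)) :=
            mul_le_mul (hcs u) (hcs v) (hsqc v).le (by positivity)
        _ = (1+η) * (Real.sqrt (deg A u) * Real.sqrt (deg A v)) := by
            linear_combination (Real.sqrt (deg A u) * Real.sqrt (deg A v)) * e3
    have h2 : sb u * sb v = (Real.sqrt (deg (A+A') u) * Real.sqrt (deg (A+A') v))⁻¹ := by
      rw [hsb, mul_inv]
    have h3 : sa u * sa v = (Real.sqrt (deg A u) * Real.sqrt (deg A v))⁻¹ := by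
      rw [hsa, mul_inv]
    rw [h2, h3]
    have hp1 : 0 < Real.sqrt (deg (A+A') u) * Real.sqrt (deg (A+A') v) :=
      mul_pos (hsqc u) (hsqc v)
    have hp2 : 0 < Real.sqrt (deg A u) * Real.sqrt (deg A v) := mul_pos (hsq u) (hsq v)
    have hinv1 : (Real.sqrt (deg (A+A') u) * Real.sqrt (deg (A+A') v))⁻¹
        ≥ ((1+η) * (Real.sqrt (deg A u) * Real.sqrt (deg A v)))⁻¹ := by
      apply inv_anti₀ (by positivity) h1
    have hinv2 : ((1+η) * (Real.sqrt (deg A u) * Real.sqrt (deg A v)))⁻¹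
        = (1+η)⁻¹ * (Real.sqrt (deg A u) * Real.sqrt (deg A v))⁻¹ := by
      rw [mul_inv]
    have h4 : (1:ℝ) - (1+η)⁻¹ ≤ η := by
      have hp : (0:ℝ) < 1 + η := by linarith
      have hinv := mul_inv_cancel₀ hp.ne'
      nlinarith [hinv, inv_nonneg.2 hp.le, mul_nonneg hη0 (inv_nonneg.2 hp.le)]
    have h5 : (0:ℝ) < (Real.sqrt (deg A u) * Real.sqrt (deg A v))⁻¹ := by positivity
    nlinarith [hinv1, hinv2, mul_le_mul_of_nonneg_right h4 h5.le]
  -- entrywise bound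
  have hM : ∀ v, |(normAdj A - normAdj (A + A')) u v| * Real.sqrt (deg A v)
      ≤ η * sa u * (A u v : ℝ) * (sa v * Real.sqrt (deg A v))
        + sa u * (A' u v : ℝ) * (sb v * Real.sqrt (deg A v)) := by
    intro v
    have hMuv : (normAdj A - normAdj (A + A')) u v
        = (A u v : ℝ) * (sa u * sa v - sb u * sb v) - (A' u v : ℝ) * (sb u * sb v) := by
      rw [Matrix.sub_apply, normAdj_apply, normAdj_apply,
        rpow_neg_half_eq _ (ha u).le, rpow_neg_half_eq _ (ha v).le,
        rpow_neg_half_eq _ (hc u).le, rpow_neg_half_eq _ (hc v).le]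
      have : ((A + A') u v : ℝ) = (A u v : ℝ) + (A' u v : ℝ) := by
        simp [Matrix.add_apply]
      rw [this]
      ring
    have hnn1 : (0:ℝ) ≤ (A u v : ℝ) := Nat.cast_nonneg _
    have hnn2 : (0:ℝ) ≤ (A' u v : ℝ) := Nat.cast_nonneg _
    have habs : |(normAdj A - normAdj (A + A')) u v|
        ≤ (A u v : ℝ) * (sa u * sa v - sb u * sb v) + (A' u v : ℝ) * (sb u * sb v) := by
      rw [hMuv]
      have t1 : 0 ≤ sa u * sa v - sb u * sb v := by
        nlinarith [hba u, hba v, hsb0 u, hsb0 v]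
      have t2 : 0 ≤ (A' u v : ℝ) * (sb u * sb v) := by positivity
      rw [abs_sub_comm, abs_le]
      constructor <;> nlinarith [mul_nonneg hnn1 t1]
    calc |(normAdj A - normAdj (A + A')) u v| * Real.sqrt (deg A v)
        ≤ ((A u v : ℝ) * (sa u * sa v - sb u * sb v) + (A' u v : ℝ) * (sb u * sb v))
            * Real.sqrt (deg A v) := by
          apply mul_le_mul_of_nonneg_right habs (Real.sqrt_nonneg _)
      _ ≤ ((A u v : ℝ) * (η * (sa u * sa v)) + (A' u v : ℝ) * (sa u * sb v))
            * Real.sqrt (deg A v) := by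
          apply mul_le_mul_of_nonneg_right _ (Real.sqrt_nonneg _)
          have := hkey v
          have h6 : sb u * sb v ≤ sa u * sb v :=
            mul_le_mul_of_nonneg_right (hba u) (hsb0 v).le
          nlinarith
      _ = η * sa u * (A u v : ℝ) * (sa v * Real.sqrt (deg A v))
            + sa u * (A' u v : ℝ) * (sb v * Real.sqrt (deg A v)) := by ring
  have hsava : ∀ v, sa v * Real.sqrt (deg A v) = 1 := fun v =>
    inv_mul_cancel₀ (hsq v).ne'
  have hsbva : ∀ v, sb v * Real.sqrt (deg A v) ≤ 1 := by
    intro v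
    rw [hsb]
    rw [inv_mul_le_iff₀ (hsqc v), mul_one]
    apply Real.sqrt_le_sqrt
    rw [deg_add]; push_cast; linarith [hb v]
  calc ∑ v, |(normAdj A - normAdj (A + A')) u v| * Real.sqrt (deg A v)
      ≤ ∑ v, (η * sa u * (A u v : ℝ) * (sa v * Real.sqrt (deg A v))
          + sa u * (A' u v : ℝ) * (sb v * Real.sqrt (deg A v))) :=
        Finset.sum_le_sum fun v _ => hM v
    _ ≤ ∑ v, (η * sa u * (A u v : ℝ) + sa u * (A' u v : ℝ)) := by
        refine Finset.sum_le_sum fun v _ => ?_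
        rw [hsava v]
        have h7 : sa u * (A' u v : ℝ) * (sb v * Real.sqrt (deg A v)) ≤ sa u * (A' u v : ℝ) := by
          have : 0 ≤ sa u * (A' u v : ℝ) := by positivity
          exact mul_le_of_le_one_right this (hsbva v)
        linarith
    _ = η * sa u * (deg A u : ℝ) + sa u * (deg A' u : ℝ) := by
        rw [Finset.sum_add_distrib, ← Finset.mul_sum, ← Finset.mul_sum, cast_sum_deg,
          cast_sum_deg]
    _ ≤ η * sa u * (deg A u : ℝ) + sa u * (η * (deg A u : ℝ)) := by
        have := hsm u
        nlinarith [hsa0 u]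
    _ = (2*η) * (sa u * (deg A u : ℝ)) := by ring
    _ = (2*η) * Real.sqrt (deg A u) := by
        congr 1
        rw [hsa, inv_mul_eq_div, Real.div_sqrt]
lemma bipAdj_add {V₁ V₂ : Type*} (B B' : Matrix V₁ V₂ ℕ) :
    bipAdj (B + B') = bipAdj B + bipAdj B' := by
  unfold bipAdj
  rw [transpose_add, Matrix.fromBlocks_add, add_zero, add_zero]

lemma bipAdj_transpose {V₁ V₂ : Type*} (B : Matrix V₁ V₂ ℕ) : (bipAdj B)ᵀ = bipAdj B := by
  unfold bipAdj
  rw [Matrix.fromBlocks_transpose, transpose_transpose, transpose_zero, transpose_zero]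

lemma isHermitian_of_transpose {V : Type*} [Fintype V] [DecidableEq V] {M : Matrix V V ℝ}
    (h : Mᵀ = M) : M.IsHermitian := by
  rw [Matrix.IsHermitian, Matrix.conjTranspose_eq_transpose_of_trivial, h]

lemma isHermitian_normLap {V : Type*} [Fintype V] [DecidableEq V] {A : Matrix V V ℕ}
    (hA : Aᵀ = A) : (normLap A).IsHermitian :=
  isHermitian_of_transpose (by
    rw [normLap, transpose_sub, transpose_one, normAdj_transpose hA])

lemma lam1_close {V : Type*} [Fintype V] [DecidableEq V] (A A' : Matrix V V ℕ)
    (hA : Aᵀ = A) (hA' : A'ᵀ = A') (hcard : 1 < Fintype.card V) {η : ℝ} (hη0 : 0 ≤ η)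
    (hpos : ∀ u, 0 < deg A u) (hsm : ∀ u, (deg A' u : ℝ) ≤ η * deg A u) :
    |eigAsc (normLap A) 1 - eigAsc (normLap (A + A')) 1| ≤ 2*η := by
  have hAA' : (A + A')ᵀ = A + A' := by rw [transpose_add, hA, hA']
  have hH1 : (normLap A).IsHermitian := isHermitian_normLap hA
  have hH2 : (normLap (A+A')).IsHermitian := isHermitian_normLap hAA'
  refine abs_eigAsc_sub_le hH1 hH2 (fun x => ?_) hcard
  have hdiff : normLap A - normLap (A + A') = -(normAdj A - normAdj (A + A')) := by
    rw [normLap, normLap]; abel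
  rw [hdiff]
  have e : ∑ u, x u * ((-(normAdj A - normAdj (A + A'))) *ᵥ x) u
      = -∑ u, x u * ((normAdj A - normAdj (A + A')) *ᵥ x) u := by
    rw [Matrix.neg_mulVec, ← Finset.sum_neg_distrib]
    exact Finset.sum_congr rfl fun u _ => by simp [Pi.neg_apply]
  rw [e, abs_neg]
  have hMsym : (normAdj A - normAdj (A + A'))ᵀ = normAdj A - normAdj (A + A') := by
    rw [transpose_sub, normAdj_transpose hA, normAdj_transpose hAA']
  exact schur_quad _ hMsym (fun t => Real.sqrt (deg A t))
    (fun t => Real.sqrt_pos.2 (by exact_mod_cast hpos t))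
    (row_bound A A' hη0 hpos hsm) x

/-- If `G_m` is an almost `(d¹_m, d²_m)`-regular family of bipartite
multigraphs (with `d¹_m, d²_m → ∞`) and `G'_m` are bipartite multigraphs on the same parts whose
maximum degrees on `V₁` resp. `V₂` are `o(d¹_m)` resp. `o(d²_m)`, then the union `G_m ∪ G'_m`
is almost `(d¹_m, d²_m)`-regular and `λ₁(G_m) - λ₁(G_m ∪ G'_m) → 0`. -/
theorem lam1_union_small_bipartite {n₁ n₂ : ℕ → ℕ}
    (hn₁ : ∀ m, 0 < n₁ m) (hn₂ : ∀ m, 0 < n₂ m)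
    (d₁ d₂ : ℕ → ℝ) (hd₁pos : ∀ m, 0 < d₁ m) (hd₂pos : ∀ m, 0 < d₂ m)
    (hd₁ : Tendsto d₁ atTop atTop) (hd₂ : Tendsto d₂ atTop atTop)
    (B B' : ∀ m, Matrix (Fin (n₁ m)) (Fin (n₂ m)) ℕ)
    (hreg₁ : ∀ ε > (0 : ℝ), ∀ᶠ m in atTop,
      ∀ v, |(deg (bipAdj (B m)) (Sum.inl v) : ℝ) / d₁ m - 1| < ε)
    (hreg₂ : ∀ ε > (0 : ℝ), ∀ᶠ m in atTop,
      ∀ w, |(deg (bipAdj (B m)) (Sum.inr w) : ℝ) / d₂ m - 1| < ε)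
    (hsmall₁ : ∀ ε > (0 : ℝ), ∀ᶠ m in atTop,
      ∀ v, (deg (bipAdj (B' m)) (Sum.inl v) : ℝ) / d₁ m < ε)
    (hsmall₂ : ∀ ε > (0 : ℝ), ∀ᶠ m in atTop,
      ∀ w, (deg (bipAdj (B' m)) (Sum.inr w) : ℝ) / d₂ m < ε) :
    (∀ ε > (0 : ℝ), ∀ᶠ m in atTop,
      (∀ v, |(deg (bipAdj (B m + B' m)) (Sum.inl v) : ℝ) / d₁ m - 1| < ε) ∧
      (∀ w, |(deg (bipAdj (B m + B' m)) (Sum.inr w) : ℝ) / d₂ m - 1| < ε)) ∧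
    Tendsto (fun m => lam1 (bipAdj (B m)) - lam1 (bipAdj (B m + B' m))) atTop (nhds 0) := by
  constructor
  · -- part (i): union is almost regular
    intro ε hε
    filter_upwards [hreg₁ (ε/2) (by linarith), hreg₂ (ε/2) (by linarith),
      hsmall₁ (ε/2) (by linarith), hsmall₂ (ε/2) (by linarith)] with m h1 h2 h3 h4
    constructor
    · intro v
      rw [bipAdj_add, deg_add]
      have ha := h1 v
      have hb := h3 v
      have hb0 : (0:ℝ) ≤ (deg (bipAdj (B' m)) (Sum.inl v) : ℝ) / d₁ m :=
        div_nonneg (Nat.cast_nonneg _) (hd₁pos m).le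
      push_cast
      rw [add_div]
      rw [abs_lt] at ha ⊢
      constructor <;> linarith [ha.1, ha.2]
    · intro w
      rw [bipAdj_add, deg_add]
      have ha := h2 w
      have hb := h4 w
      have hb0 : (0:ℝ) ≤ (deg (bipAdj (B' m)) (Sum.inr w) : ℝ) / d₂ m :=
        div_nonneg (Nat.cast_nonneg _) (hd₂pos m).le
      push_cast
      rw [add_div]
      rw [abs_lt] at ha ⊢
      constructor <;> linarith [ha.1, ha.2]
  · -- part (ii): lam1 difference tends to 0
    rw [NormedAddCommGroup.tendsto_nhds_zero]
    intro ε hε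
    filter_upwards [hreg₁ (1/2) one_half_pos, hreg₂ (1/2) one_half_pos,
      hsmall₁ (ε/8) (by linarith), hsmall₂ (ε/8) (by linarith)] with m h1 h2 h3 h4
    have hpos : ∀ u, 0 < deg (bipAdj (B m)) u := by
      rintro (v | w)
      · have := h1 v
        rw [abs_lt] at this
        have hd := hd₁pos m
        have h5 : (1/2 : ℝ) < (deg (bipAdj (B m)) (Sum.inl v) : ℝ) / d₁ m := by linarith [this.1]
        have h6 : (0:ℝ) < (deg (bipAdj (B m)) (Sum.inl v) : ℝ) := by
          by_contra hcon
          push_neg at hcon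
          have : (deg (bipAdj (B m)) (Sum.inl v) : ℝ) / d₁ m ≤ 0 :=
            div_nonpos_of_nonpos_of_nonneg hcon hd.le
          linarith
        exact_mod_cast h6
      · have := h2 w
        rw [abs_lt] at this
        have hd := hd₂pos m
        have h5 : (1/2 : ℝ) < (deg (bipAdj (B m)) (Sum.inr w) : ℝ) / d₂ m := by linarith [this.1]
        have h6 : (0:ℝ) < (deg (bipAdj (B m)) (Sum.inr w) : ℝ) := by
          by_contra hcon
          push_neg at hcon
          have : (deg (bipAdj (B m)) (Sum.inr w) : ℝ) / d₂ m ≤ 0 :=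
            div_nonpos_of_nonpos_of_nonneg hcon hd.le
          linarith
        exact_mod_cast h6
    have hsm : ∀ u, (deg (bipAdj (B' m)) u : ℝ) ≤ (ε/4) * deg (bipAdj (B m)) u := by
      rintro (v | w)
      · have hh := h1 v
        rw [abs_lt] at hh
        have hd := hd₁pos m
        have h5 : d₁ m / 2 < (deg (bipAdj (B m)) (Sum.inl v) : ℝ) := by
          have h7 : (1/2:ℝ) < (deg (bipAdj (B m)) (Sum.inl v) : ℝ) / d₁ m := by linarith [hh.1]
          rw [lt_div_iff₀ hd] at h7
          linarith
        have h6 : (deg (bipAdj (B' m)) (Sum.inl v) : ℝ) < (ε/8) * d₁ m := by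
          have := h3 v
          rw [div_lt_iff₀ hd] at this
          linarith
        nlinarith
      · have hh := h2 w
        rw [abs_lt] at hh
        have hd := hd₂pos m
        have h5 : d₂ m / 2 < (deg (bipAdj (B m)) (Sum.inr w) : ℝ) := by
          have h7 : (1/2:ℝ) < (deg (bipAdj (B m)) (Sum.inr w) : ℝ) / d₂ m := by linarith [hh.1]
          rw [lt_div_iff₀ hd] at h7
          linarith
        have h6 : (deg (bipAdj (B' m)) (Sum.inr w) : ℝ) < (ε/8) * d₂ m := by
          have := h4 w
          rw [div_lt_iff₀ hd] at this
          linarith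
        nlinarith
    have hcard : 1 < Fintype.card (Fin (n₁ m) ⊕ Fin (n₂ m)) := by
      rw [Fintype.card_sum, Fintype.card_fin, Fintype.card_fin]
      have := hn₁ m
      have := hn₂ m
      omega
    have hmain := lam1_close (bipAdj (B m)) (bipAdj (B' m)) (bipAdj_transpose _)
      (bipAdj_transpose _) hcard (by linarith : (0:ℝ) ≤ ε/4) hpos hsm
    rw [Real.norm_eq_abs, lam1, lam1, bipAdj_add]
    calc |eigAsc (normLap (bipAdj (B m))) 1
          - eigAsc (normLap (bipAdj (B m) + bipAdj (B' m))) 1| ≤ 2*(ε/4) := hmain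
      _ < ε := by linarith
end

section
/- Let m_2 = m_2(m_1) and p = p(m_1) ∈ (0,1) be functions of m_1 such that min{m_1, m_2}·p / log(max{m_1, m_2}) → ∞ as m_1 → ∞. Then for every ε > 0, the probability that every eigenvalue μ of the adjacency matrix of the random bipartite graph G(m_1, m_2, p) satisfies |μ| ≤ (1 + ε)·p·√(m_1 m_2) tends to 1 as m_1 → ∞. -/
open Filter

/-- Bernoulli weight of a Boolean value. -/
def bern (p : ℝ) (b : Bool) : ℝ := if b then p else 1 - p

/-- Probability of the event `E` under the Erdős–Rényi random bipartite graph `G(m₁, m₂, p)`: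
a sample point is the indicator function of the edge set, a subset of `Fin m₁ × Fin m₂`,
and each edge is present independently with probability `p`. -/
noncomputable def bipProb (m₁ m₂ : ℕ) (p : ℝ) (E : Set (Fin m₁ × Fin m₂ → Bool)) : ℝ :=
  haveI := Classical.dec
  ∑ ω : Fin m₁ × Fin m₂ → Bool,
    if ω ∈ E then ∏ e : Fin m₁ × Fin m₂, bern p (ω e) else 0

/-- Degree of a vertex `v ∈ V₁` in a bipartite graph given by the edge indicator `ω`. -/
def degL {m₁ m₂ : ℕ} (ω : Fin m₁ × Fin m₂ → Bool) (v : Fin m₁) : ℕ :=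
  (Finset.univ.filter fun w => ω (v, w) = true).card

/-- Degree of a vertex `w ∈ V₂` in a bipartite graph given by the edge indicator `ω`. -/
def degR {m₁ m₂ : ℕ} (ω : Fin m₁ × Fin m₂ → Bool) (w : Fin m₂) : ℕ :=
  (Finset.univ.filter fun v => ω (v, w) = true).card

/-- The adjacency matrix (over `ℝ`) of the bipartite graph on `Fin m₁ ⊕ Fin m₂` with edge
indicator `ω`. -/
def bipAdjR {m₁ m₂ : ℕ} (ω : Fin m₁ × Fin m₂ → Bool) :
    Matrix (Fin m₁ ⊕ Fin m₂) (Fin m₁ ⊕ Fin m₂) ℝ :=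
  Matrix.fromBlocks 0 (Matrix.of fun v w => if ω (v, w) then (1 : ℝ) else 0)
    (Matrix.of fun w v => if ω (v, w) then (1 : ℝ) else 0) 0

open Filter Finset

-- weight
noncomputable def wt (m₁ m₂ : ℕ) (p : ℝ) (ω : Fin m₁ × Fin m₂ → Bool) : ℝ :=
  ∏ e : Fin m₁ × Fin m₂, bern p (ω e)

lemma bern_nonneg {p : ℝ} (h0 : 0 ≤ p) (h1 : p ≤ 1) (b : Bool) : 0 ≤ bern p b := by
  cases b <;> simp [bern] <;> linarith

lemma wt_nonneg {m₁ m₂ : ℕ} {p : ℝ} (h0 : 0 ≤ p) (h1 : p ≤ 1) (ω : Fin m₁ × Fin m₂ → Bool) :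
    0 ≤ wt m₁ m₂ p ω :=
  Finset.prod_nonneg fun e _ => bern_nonneg h0 h1 _

lemma sum_prod_bool {ι : Type*} [Fintype ι] [DecidableEq ι] (h : ι → Bool → ℝ) :
    ∑ ω : ι → Bool, ∏ i, h i (ω i) = ∏ i, (h i false + h i true) := by
  have h2 := Finset.prod_univ_sum (fun _ : ι => (Finset.univ : Finset Bool)) h
  rw [Fintype.piFinset_univ] at h2
  rw [← h2]
  exact Finset.prod_congr rfl fun i _ => by rw [Fintype.sum_bool, add_comm]

lemma sum_wt {m₁ m₂ : ℕ} {p : ℝ} :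
    ∑ ω : Fin m₁ × Fin m₂ → Bool, wt m₁ m₂ p ω = 1 := by
  unfold wt
  rw [sum_prod_bool]
  simp [bern]

lemma bipProb_eq (m₁ m₂ : ℕ) (p : ℝ) (E : Set (Fin m₁ × Fin m₂ → Bool))
    [DecidablePred (· ∈ E)] :
    bipProb m₁ m₂ p E = ∑ ω : Fin m₁ × Fin m₂ → Bool, if ω ∈ E then wt m₁ m₂ p ω else 0 := by
  unfold bipProb wt
  apply Finset.sum_congr
  · congr 1
    exact Subsingleton.elim _ _
  · intro ω _
    congr

lemma bipProb_nonneg {m₁ m₂ : ℕ} {p : ℝ} (h0 : 0 ≤ p) (h1 : p ≤ 1)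
    (E : Set (Fin m₁ × Fin m₂ → Bool)) : 0 ≤ bipProb m₁ m₂ p E := by
  classical
  rw [bipProb_eq]
  apply Finset.sum_nonneg
  intro ω _
  split
  · exact wt_nonneg h0 h1 ω
  · exact le_rfl

lemma bipProb_mono {m₁ m₂ : ℕ} {p : ℝ} (h0 : 0 ≤ p) (h1 : p ≤ 1)
    {E F : Set (Fin m₁ × Fin m₂ → Bool)} (hEF : E ⊆ F) :
    bipProb m₁ m₂ p E ≤ bipProb m₁ m₂ p F := by
  classical
  rw [bipProb_eq, bipProb_eq]
  apply Finset.sum_le_sum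
  intro ω _
  by_cases h : ω ∈ E
  · rw [if_pos h, if_pos (hEF h)]
  · rw [if_neg h]
    split
    · exact wt_nonneg h0 h1 ω
    · exact le_rfl

lemma bipProb_compl {m₁ m₂ : ℕ} {p : ℝ} (E : Set (Fin m₁ × Fin m₂ → Bool)) :
    bipProb m₁ m₂ p Eᶜ = 1 - bipProb m₁ m₂ p E := by
  classical
  rw [bipProb_eq, bipProb_eq, eq_sub_iff_add_eq, ← Finset.sum_add_distrib, ← sum_wt (p := p)]
  apply Finset.sum_congr rfl
  intro ω _
  by_cases h : ω ∈ E
  · simp [h]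
  · simp [h]

lemma bipProb_le_one {m₁ m₂ : ℕ} {p : ℝ} (h0 : 0 ≤ p) (h1 : p ≤ 1)
    (E : Set (Fin m₁ × Fin m₂ → Bool)) : bipProb m₁ m₂ p E ≤ 1 := by
  have := bipProb_nonneg (m₁ := m₁) (m₂ := m₂) h0 h1 Eᶜ
  rw [bipProb_compl] at this
  linarith

lemma bipProb_iUnion_le {m₁ m₂ : ℕ} {p : ℝ} (h0 : 0 ≤ p) (h1 : p ≤ 1)
    {ι : Type*} [Fintype ι] (F : ι → Set (Fin m₁ × Fin m₂ → Bool)) :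
    bipProb m₁ m₂ p (⋃ i, F i) ≤ ∑ i, bipProb m₁ m₂ p (F i) := by
  classical
  rw [bipProb_eq]
  simp_rw [bipProb_eq]
  rw [Finset.sum_comm]
  apply Finset.sum_le_sum
  intro ω _
  by_cases h : ω ∈ ⋃ i, F i
  · rw [if_pos h]
    obtain ⟨i, hi⟩ := Set.mem_iUnion.mp h
    calc wt m₁ m₂ p ω = (if ω ∈ F i then wt m₁ m₂ p ω else 0) := by rw [if_pos hi]
    _ ≤ ∑ j, (if ω ∈ F j then wt m₁ m₂ p ω else 0) := by
        apply Finset.single_le_sum (f := fun j => if ω ∈ F j then wt m₁ m₂ p ω else 0)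
          (fun j _ => by split; exacts [wt_nonneg h0 h1 ω, le_rfl]) (Finset.mem_univ i)
  · rw [if_neg h]
    apply Finset.sum_nonneg
    intro j _
    split; exacts [wt_nonneg h0 h1 ω, le_rfl]

lemma bipProb_le_sum_mul {m₁ m₂ : ℕ} {p : ℝ} (h0 : 0 ≤ p) (h1 : p ≤ 1)
    (E : Set (Fin m₁ × Fin m₂ → Bool)) (g : (Fin m₁ × Fin m₂ → Bool) → ℝ)
    (hg : ∀ ω, 0 ≤ g ω) (hE : ∀ ω ∈ E, 1 ≤ g ω) :
    bipProb m₁ m₂ p E ≤ ∑ ω : Fin m₁ × Fin m₂ → Bool, wt m₁ m₂ p ω * g ω := by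
  classical
  rw [bipProb_eq]
  apply Finset.sum_le_sum
  intro ω _
  by_cases h : ω ∈ E
  · rw [if_pos h]
    calc wt m₁ m₂ p ω = wt m₁ m₂ p ω * 1 := (mul_one _).symm
    _ ≤ wt m₁ m₂ p ω * g ω := by
        apply mul_le_mul_of_nonneg_left (hE ω h) (wt_nonneg h0 h1 ω)
  · rw [if_neg h]
    exact mul_nonneg (wt_nonneg h0 h1 ω) (hg ω)

-- exp(t * degL) as a product over edges
lemma exp_degL {m₁ m₂ : ℕ} (ω : Fin m₁ × Fin m₂ → Bool) (v : Fin m₁) (t : ℝ) :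
    Real.exp (t * (degL ω v : ℝ)) =
      ∏ e : Fin m₁ × Fin m₂, (if e.1 = v then (if ω e then Real.exp t else 1) else 1) := by
  classical
  have h1 : (degL ω v : ℝ) = ∑ w : Fin m₂, (if ω (v, w) = true then (1:ℝ) else 0) := by
    unfold degL
    rw [Finset.card_filter]
    push_cast
    simp
  rw [h1, Finset.mul_sum, Real.exp_sum]
  rw [Fintype.prod_prod_type]
  rw [show (∏ v' : Fin m₁, ∏ w : Fin m₂,
      (if v' = v then (if ω (v', w) then Real.exp t else 1) else 1)) =
      ∏ v' : Fin m₁, (if v' = v then (∏ w : Fin m₂, (if ω (v', w) then Real.exp t else 1)) else 1)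
    from Finset.prod_congr rfl fun v' _ => by split_ifs <;> simp]
  rw [Finset.prod_ite_eq' Finset.univ v
    (fun v' => ∏ w : Fin m₂, (if ω (v', w) then Real.exp t else 1))]
  simp only [Finset.mem_univ, if_true]
  apply Finset.prod_congr rfl
  intro w _
  by_cases hb : ω (v, w) = true <;> simp [hb]

-- MGF of degL
lemma mgf_degL {m₁ m₂ : ℕ} {p : ℝ} (v : Fin m₁) (t : ℝ) :
    ∑ ω : Fin m₁ × Fin m₂ → Bool, wt m₁ m₂ p ω * Real.exp (t * (degL ω v : ℝ)) =
      (1 - p + p * Real.exp t) ^ m₂ := by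
  classical
  have key : ∀ ω : Fin m₁ × Fin m₂ → Bool,
      wt m₁ m₂ p ω * Real.exp (t * (degL ω v : ℝ)) =
      ∏ e : Fin m₁ × Fin m₂,
        (bern p (ω e) * (if e.1 = v then (if ω e then Real.exp t else 1) else 1)) := by
    intro ω
    rw [exp_degL, wt, ← Finset.prod_mul_distrib]
  simp_rw [key]
  have : ∀ e : Fin m₁ × Fin m₂,
      bern p false * (if e.1 = v then (if false then Real.exp t else 1) else 1) +
      bern p true * (if e.1 = v then (if true then Real.exp t else 1) else 1) =
      if e.1 = v then (1 - p + p * Real.exp t) else 1 := by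
    intro e
    by_cases h : e.1 = v
    · simp only [h, if_true, bern]
      norm_num
    · simp only [h, if_false, bern]
      norm_num
  calc (∑ ω : Fin m₁ × Fin m₂ → Bool, ∏ e : Fin m₁ × Fin m₂,
        (bern p (ω e) * (if e.1 = v then (if ω e then Real.exp t else 1) else 1)))
      = ∏ e : Fin m₁ × Fin m₂,
        (bern p false * (if e.1 = v then (if false then Real.exp t else 1) else 1) +
         bern p true * (if e.1 = v then (if true then Real.exp t else 1) else 1)) :=
      sum_prod_bool (ι := Fin m₁ × Fin m₂)
        (fun e b => bern p b * (if e.1 = v then (if b then Real.exp t else 1) else 1))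
    _ = ∏ e : Fin m₁ × Fin m₂, (if e.1 = v then (1 - p + p * Real.exp t) else 1) :=
      Finset.prod_congr rfl fun e _ => this e
    _ = ∏ v' : Fin m₁, (if v' = v then (1 - p + p * Real.exp t) ^ m₂ else 1) := by
      rw [Fintype.prod_prod_type]
      exact Finset.prod_congr rfl fun v' _ => by split_ifs <;> simp
    _ = (1 - p + p * Real.exp t) ^ m₂ := by
      rw [Finset.prod_ite_eq' Finset.univ v (fun _ => (1 - p + p * Real.exp t) ^ m₂)]
      simp

-- Chernoff bound for degL
lemma chernoff_degL {m₁ m₂ : ℕ} {p : ℝ} (h0 : 0 < p) (h1 : p < 1) {ε : ℝ} (hε : 0 < ε)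
    (v : Fin m₁) :
    bipProb m₁ m₂ p {ω | (1 + ε) * (p * m₂) < (degL ω v : ℝ)} ≤
      Real.exp (-(((1+ε) * Real.log (1+ε) - ε) * (p * m₂))) := by
  classical
  set t := Real.log (1 + ε) with ht
  have het : Real.exp t = 1 + ε := Real.exp_log (by linarith)
  have ht0 : 0 < t := Real.log_pos (by linarith)
  set a := (1 + ε) * (p * m₂) with ha
  have ha0 : 0 ≤ a := by positivity
  have step1 : bipProb m₁ m₂ p {ω | a < (degL ω v : ℝ)} ≤
      ∑ ω : Fin m₁ × Fin m₂ → Bool,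
        wt m₁ m₂ p ω * (Real.exp (-(t * a)) * Real.exp (t * (degL ω v : ℝ))) := by
    apply bipProb_le_sum_mul h0.le h1.le
    · intro ω; positivity
    · intro ω hω
      rw [← Real.exp_add]
      rw [Set.mem_setOf_eq] at hω
      have : 0 ≤ -(t * a) + t * (degL ω v : ℝ) := by nlinarith
      calc (1:ℝ) = Real.exp 0 := Real.exp_zero.symm
      _ ≤ _ := Real.exp_le_exp.mpr this
  have step2 : ∑ ω : Fin m₁ × Fin m₂ → Bool,
        wt m₁ m₂ p ω * (Real.exp (-(t * a)) * Real.exp (t * (degL ω v : ℝ))) =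
      Real.exp (-(t * a)) * (1 - p + p * Real.exp t) ^ m₂ := by
    rw [← mgf_degL v t, Finset.mul_sum]
    apply Finset.sum_congr rfl
    intro ω _
    ring
  have step3 : (1 - p + p * Real.exp t) ^ m₂ ≤ Real.exp (p * (Real.exp t - 1)) ^ m₂ := by
    apply pow_le_pow_left₀
    · nlinarith [Real.exp_pos t]
    · have := Real.add_one_le_exp (p * (Real.exp t - 1))
      linarith
  calc bipProb m₁ m₂ p {ω | a < (degL ω v : ℝ)} ≤ _ := step1
  _ = Real.exp (-(t * a)) * (1 - p + p * Real.exp t) ^ m₂ := step2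
  _ ≤ Real.exp (-(t * a)) * Real.exp (p * (Real.exp t - 1)) ^ m₂ := by
      apply mul_le_mul_of_nonneg_left step3 (Real.exp_pos _).le
  _ = Real.exp (-(t * a) + (m₂ : ℝ) * (p * (Real.exp t - 1))) := by
      rw [← Real.exp_nat_mul, ← Real.exp_add]
  _ = Real.exp (-(((1+ε) * t - ε) * (p * m₂))) := by
      congr 1
      rw [het, ha]
      ring

def swapMap {m₁ m₂ : ℕ} (ω : Fin m₂ × Fin m₁ → Bool) : Fin m₁ × Fin m₂ → Bool :=
  fun e => ω (e.2, e.1)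

lemma degR_swapMap {m₁ m₂ : ℕ} (ω : Fin m₂ × Fin m₁ → Bool) (w : Fin m₂) :
    degR (swapMap ω) w = degL ω w := rfl

lemma bipProb_swap (m₁ m₂ : ℕ) (p : ℝ) (E : Set (Fin m₁ × Fin m₂ → Bool)) :
    bipProb m₁ m₂ p E = bipProb m₂ m₁ p (swapMap ⁻¹' E) := by
  classical
  rw [bipProb_eq, bipProb_eq]
  apply Fintype.sum_equiv ((Equiv.prodComm (Fin m₁) (Fin m₂)).arrowCongr (Equiv.refl Bool))
  intro ω
  have h1 : swapMap ((Equiv.prodComm (Fin m₁) (Fin m₂)).arrowCongr (Equiv.refl Bool) ω) = ω := by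
    funext x
    rfl
  have h2 : wt m₂ m₁ p ((Equiv.prodComm (Fin m₁) (Fin m₂)).arrowCongr (Equiv.refl Bool) ω) =
      wt m₁ m₂ p ω := by
    unfold wt
    apply Fintype.prod_equiv (Equiv.prodComm (Fin m₂) (Fin m₁))
    intro e
    rfl
  rw [Set.mem_preimage, h1, h2]

lemma chernoff_degR {m₁ m₂ : ℕ} {p : ℝ} (h0 : 0 < p) (h1 : p < 1) {ε : ℝ} (hε : 0 < ε)
    (w : Fin m₂) :
    bipProb m₁ m₂ p {ω | (1 + ε) * (p * m₁) < (degR ω w : ℝ)} ≤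
      Real.exp (-(((1+ε) * Real.log (1+ε) - ε) * (p * m₁))) := by
  rw [bipProb_swap]
  have : swapMap ⁻¹' {ω : Fin m₁ × Fin m₂ → Bool | (1 + ε) * (p * m₁) < (degR ω w : ℝ)} =
      {ω : Fin m₂ × Fin m₁ → Bool | (1 + ε) * (p * m₁) < (degL ω w : ℝ)} := by
    ext ω
    simp [Set.mem_preimage, degR_swapMap]
  rw [this]
  exact chernoff_degL h0 h1 hε w

lemma bipAdjR_nonneg {m₁ m₂ : ℕ} (ω : Fin m₁ × Fin m₂ → Bool) (i j : Fin m₁ ⊕ Fin m₂) :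
    0 ≤ bipAdjR ω i j := by
  rcases i with v | w <;> rcases j with v' | w' <;>
    simp [bipAdjR] <;> split <;> norm_num

lemma rowsum_inl {m₁ m₂ : ℕ} (ω : Fin m₁ × Fin m₂ → Bool) (v : Fin m₁) :
    ∑ k, bipAdjR ω (Sum.inl v) k = (degL ω v : ℝ) := by
  classical
  rw [Fintype.sum_sum_type]
  simp only [bipAdjR, Matrix.fromBlocks_apply₁₁, Matrix.fromBlocks_apply₁₂,
    Matrix.zero_apply, Matrix.of_apply, Finset.sum_const_zero, zero_add]
  unfold degL
  rw [Finset.card_filter]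
  push_cast
  apply Finset.sum_congr rfl
  intro w _
  split <;> simp_all

lemma rowsum_inr {m₁ m₂ : ℕ} (ω : Fin m₁ × Fin m₂ → Bool) (w : Fin m₂) :
    ∑ k, bipAdjR ω (Sum.inr w) k = (degR ω w : ℝ) := by
  classical
  rw [Fintype.sum_sum_type]
  simp only [bipAdjR, Matrix.fromBlocks_apply₂₁, Matrix.fromBlocks_apply₂₂,
    Matrix.zero_apply, Matrix.of_apply, Finset.sum_const_zero, add_zero]
  unfold degR
  rw [Finset.card_filter]
  push_cast
  apply Finset.sum_congr rfl
  intro v _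
  split <;> simp_all

lemma rowsum2_le {m₁ m₂ : ℕ} (ω : Fin m₁ × Fin m₂ → Bool) {D₁ D₂ : ℝ}
    (hD₁ : 0 ≤ D₁) (hD₂ : 0 ≤ D₂)
    (h1 : ∀ v, (degL ω v : ℝ) ≤ D₁) (h2 : ∀ w, (degR ω w : ℝ) ≤ D₂)
    (i : Fin m₁ ⊕ Fin m₂) :
    ∑ j, ∑ k, bipAdjR ω i j * bipAdjR ω j k ≤ D₁ * D₂ := by
  classical
  have hsum : ∀ j, ∑ k, bipAdjR ω i j * bipAdjR ω j k = bipAdjR ω i j * ∑ k, bipAdjR ω j k :=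
    fun j => (Finset.mul_sum _ _ _).symm
  simp_rw [hsum]
  rcases i with v | w
  · rw [Fintype.sum_sum_type]
    have hz : ∑ v' : Fin m₁, bipAdjR ω (Sum.inl v) (Sum.inl v') * ∑ k, bipAdjR ω (Sum.inl v') k
        = 0 := by
      apply Finset.sum_eq_zero
      intro v' _
      simp [bipAdjR]
    rw [hz, zero_add]
    calc ∑ w : Fin m₂, bipAdjR ω (Sum.inl v) (Sum.inr w) * ∑ k, bipAdjR ω (Sum.inr w) k
        ≤ ∑ w : Fin m₂, bipAdjR ω (Sum.inl v) (Sum.inr w) * D₂ := by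
          apply Finset.sum_le_sum
          intro w _
          apply mul_le_mul_of_nonneg_left _ (bipAdjR_nonneg ω _ _)
          rw [rowsum_inr]
          exact h2 w
      _ = (∑ w : Fin m₂, bipAdjR ω (Sum.inl v) (Sum.inr w)) * D₂ := (Finset.sum_mul _ _ _).symm
      _ ≤ D₁ * D₂ := by
          apply mul_le_mul_of_nonneg_right _ hD₂
          have : ∑ w : Fin m₂, bipAdjR ω (Sum.inl v) (Sum.inr w) = (degL ω v : ℝ) := by
            have := rowsum_inl ω v
            rw [Fintype.sum_sum_type] at this
            simpa [bipAdjR] using this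
          rw [this]
          exact h1 v
  · rw [Fintype.sum_sum_type]
    have hz : ∑ w' : Fin m₂, bipAdjR ω (Sum.inr w) (Sum.inr w') * ∑ k, bipAdjR ω (Sum.inr w') k
        = 0 := by
      apply Finset.sum_eq_zero
      intro w' _
      simp [bipAdjR]
    rw [hz, add_zero]
    calc ∑ v : Fin m₁, bipAdjR ω (Sum.inr w) (Sum.inl v) * ∑ k, bipAdjR ω (Sum.inl v) k
        ≤ ∑ v : Fin m₁, bipAdjR ω (Sum.inr w) (Sum.inl v) * D₁ := by
          apply Finset.sum_le_sum
          intro v _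
          apply mul_le_mul_of_nonneg_left _ (bipAdjR_nonneg ω _ _)
          rw [rowsum_inl]
          exact h1 v
      _ = (∑ v : Fin m₁, bipAdjR ω (Sum.inr w) (Sum.inl v)) * D₁ := (Finset.sum_mul _ _ _).symm
      _ ≤ D₂ * D₁ := by
          apply mul_le_mul_of_nonneg_right _ hD₁
          have : ∑ v : Fin m₁, bipAdjR ω (Sum.inr w) (Sum.inl v) = (degR ω w : ℝ) := by
            have := rowsum_inr ω w
            rw [Fintype.sum_sum_type] at this
            simpa [bipAdjR] using this
          rw [this]
          exact h2 w
      _ = D₁ * D₂ := mul_comm _ _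

lemma sq_le_of_rowsum2 {n : Type*} [Fintype n] [DecidableEq n] (A : Matrix n n ℝ)
    (hA : ∀ i j, 0 ≤ A i j) {C : ℝ}
    (hrow : ∀ i, ∑ j, ∑ k, A i j * A j k ≤ C) {μ : ℝ} (hμ : μ ∈ spectrum ℝ A) :
    μ ^ 2 ≤ C := by
  have hμ' : μ ∈ spectrum ℝ (Matrix.toLinAlgEquiv' A) := by
    rwa [AlgEquiv.spectrum_eq]
  have he : Module.End.HasEigenvalue (Matrix.toLinAlgEquiv' A : Module.End ℝ (n → ℝ)) μ :=
    Module.End.hasEigenvalue_iff_mem_spectrum.mpr hμ'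
  obtain ⟨x, hx⟩ := Module.End.HasEigenvalue.exists_hasEigenvector he
  have hmv : A.mulVec x = μ • x := by
    rw [← Matrix.toLinAlgEquiv'_apply]
    exact hx.apply_eq_smul
  have hx0 := hx.right
  -- pick j₀ with x j₀ ≠ 0
  obtain ⟨j₀, hj₀⟩ : ∃ j, x j ≠ 0 := by
    by_contra h
    push_neg at h
    exact hx0 (funext fun j => h j)
  have hne : (Finset.univ : Finset n).Nonempty := ⟨j₀, Finset.mem_univ j₀⟩
  obtain ⟨i, _, hmax⟩ := Finset.exists_max_image Finset.univ (fun j => |x j|) hne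
  have hxi : 0 < |x i| := lt_of_lt_of_le (abs_pos.mpr hj₀) (hmax j₀ (Finset.mem_univ j₀))
  have e1 : A.mulVec (A.mulVec x) = (μ ^ 2) • x := by
    rw [hmv, Matrix.mulVec_smul, hmv, smul_smul, ← sq]
  have h3 : μ ^ 2 * x i = ∑ j, A i j * ∑ k, A j k * x k := by
    have h := congrFun e1 i
    simpa [Matrix.mulVec, dotProduct] using h.symm
  have h4 : μ ^ 2 * |x i| ≤ C * |x i| := by
    calc μ ^ 2 * |x i| = |μ ^ 2 * x i| := by
          rw [abs_mul, abs_of_nonneg (sq_nonneg μ)]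
      _ = |∑ j, A i j * ∑ k, A j k * x k| := by rw [h3]
      _ ≤ ∑ j, |A i j * ∑ k, A j k * x k| := Finset.abs_sum_le_sum_abs _ _
      _ ≤ ∑ j, A i j * ∑ k, A j k * |x i| := by
          apply Finset.sum_le_sum
          intro j _
          rw [abs_mul, abs_of_nonneg (hA i j)]
          apply mul_le_mul_of_nonneg_left _ (hA i j)
          calc |∑ k, A j k * x k| ≤ ∑ k, |A j k * x k| := Finset.abs_sum_le_sum_abs _ _
            _ ≤ ∑ k, A j k * |x i| := by
                apply Finset.sum_le_sum
                intro k _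
                rw [abs_mul, abs_of_nonneg (hA j k)]
                exact mul_le_mul_of_nonneg_left (hmax k (Finset.mem_univ k)) (hA j k)
      _ = (∑ j, ∑ k, A i j * A j k) * |x i| := by
          rw [Finset.sum_mul]
          apply Finset.sum_congr rfl
          intro j _
          rw [Finset.sum_mul, Finset.mul_sum]
          apply Finset.sum_congr rfl
          intro k _
          ring
      _ ≤ C * |x i| := mul_le_mul_of_nonneg_right (hrow i) (abs_nonneg _)
  exact le_of_mul_le_mul_right h4 hxi

lemma eig_bound {m₁ m₂ : ℕ} (ω : Fin m₁ × Fin m₂ → Bool) {D₁ D₂ : ℝ}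
    (hD₁ : 0 ≤ D₁) (hD₂ : 0 ≤ D₂)
    (h1 : ∀ v, (degL ω v : ℝ) ≤ D₁) (h2 : ∀ w, (degR ω w : ℝ) ≤ D₂)
    {μ : ℝ} (hμ : μ ∈ spectrum ℝ (bipAdjR ω)) : μ ^ 2 ≤ D₁ * D₂ := by
  classical
  exact sq_le_of_rowsum2 (bipAdjR ω) (bipAdjR_nonneg ω)
    (rowsum2_le ω hD₁ hD₂ h1 h2) hμ

lemma hc_pos {ε : ℝ} (hε : 0 < ε) : 0 < (1+ε) * Real.log (1+ε) - ε := by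
  have h1 : (0:ℝ) < 1 + ε := by linarith
  have h2 : Real.log ((1+ε)⁻¹) < (1+ε)⁻¹ - 1 := by
    apply Real.log_lt_sub_one_of_pos (by positivity)
    intro h
    rw [inv_eq_one] at h
    linarith
  rw [Real.log_inv] at h2
  have h3 : 1 - (1+ε)⁻¹ < Real.log (1+ε) := by linarith
  have h5 := mul_lt_mul_of_pos_left h3 h1
  have h4 : (1+ε) * (1 - (1+ε)⁻¹) = ε := by field_simp; ring
  rw [h4] at h5
  linarith

lemma f_tendsto (m₂ : ℕ → ℕ) (p : ℕ → ℝ) (hp : ∀ m, 0 < p m ∧ p m < 1)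
    (hgrow : Tendsto
      (fun m₁ => ((min m₁ (m₂ m₁) : ℕ) : ℝ) * p m₁ / Real.log ((max m₁ (m₂ m₁) : ℕ) : ℝ))
      atTop atTop) {c : ℝ} (hc : 0 < c) :
    Tendsto (fun m₁ : ℕ => (m₁ : ℝ) * Real.exp (-(c * (p m₁ * (m₂ m₁ : ℝ)))) +
      (m₂ m₁ : ℝ) * Real.exp (-(c * (p m₁ * (m₁ : ℝ))))) atTop (nhds 0) := by
  set G : ℕ → ℝ := fun n =>
    Real.log ((max n (m₂ n) : ℕ) : ℝ) - c * (p n * ((min n (m₂ n) : ℕ) : ℝ)) with hGdef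
  have hG : Tendsto G atTop atBot := by
    rw [tendsto_atBot]
    intro b
    have hlog : Tendsto (fun n : ℕ => Real.log (n:ℝ)) atTop atTop :=
      Real.tendsto_log_atTop.comp tendsto_natCast_atTop_atTop
    filter_upwards [hgrow.eventually_ge_atTop (2/c), eventually_ge_atTop 3,
      hlog.eventually_ge_atTop (-b)] with n hr h3 hb
    have hn1 : (1:ℝ) ≤ (n:ℝ) := by exact_mod_cast le_trans (by norm_num) h3
    have hexp : Real.exp 1 < (n:ℝ) := by
      have : Real.exp 1 < 3 := Real.exp_one_lt_d9.trans_le (by norm_num)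
      have h3' : (3:ℝ) ≤ (n:ℝ) := by exact_mod_cast h3
      linarith
    have hlog1 : 1 ≤ Real.log (n:ℝ) := by
      calc (1:ℝ) = Real.log (Real.exp 1) := (Real.log_exp 1).symm
        _ ≤ Real.log (n:ℝ) := Real.log_le_log (Real.exp_pos 1) hexp.le
    have hlm : Real.log (n:ℝ) ≤ Real.log ((max n (m₂ n) : ℕ) : ℝ) := by
      apply Real.log_le_log (by linarith)
      exact_mod_cast Nat.cast_le.mpr (le_max_left n (m₂ n))
    have hLpos : 0 < Real.log ((max n (m₂ n) : ℕ) : ℝ) := by linarith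
    rw [le_div_iff₀ hLpos] at hr
    have h2L : 2 * Real.log ((max n (m₂ n) : ℕ) : ℝ) ≤
        c * (p n * ((min n (m₂ n) : ℕ) : ℝ)) := by
      have hmm := mul_le_mul_of_nonneg_left hr hc.le
      calc 2 * Real.log ((max n (m₂ n) : ℕ) : ℝ)
          = c * (2 / c * Real.log ((max n (m₂ n) : ℕ) : ℝ)) := by
            field_simp
        _ ≤ c * (((min n (m₂ n) : ℕ) : ℝ) * p n) := hmm
        _ = c * (p n * ((min n (m₂ n) : ℕ) : ℝ)) := by ring
    simp only [hGdef]
    linarith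
  have hexp0 : Tendsto (fun n => Real.exp (G n)) atTop (nhds 0) :=
    Real.tendsto_exp_atBot.comp hG
  have h2exp : Tendsto (fun n => 2 * Real.exp (G n)) atTop (nhds 0) := by
    simpa using hexp0.const_mul 2
  apply tendsto_of_tendsto_of_tendsto_of_le_of_le' (g := fun _ => (0:ℝ))
    (h := fun n => 2 * Real.exp (G n)) tendsto_const_nhds h2exp
  · filter_upwards with n
    have h1 := (hp n).1
    positivity
  · filter_upwards [eventually_ge_atTop 1] with n h1
    have hq0 := (hp n).1
    have hn0 : (0:ℝ) < (n:ℝ) := by exact_mod_cast h1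
    have hmin_le_r : ((min n (m₂ n) : ℕ) : ℝ) ≤ ((m₂ n : ℕ) : ℝ) := by
      exact_mod_cast min_le_right n (m₂ n)
    have hmin_le_l : ((min n (m₂ n) : ℕ) : ℝ) ≤ ((n : ℕ) : ℝ) := by
      exact_mod_cast min_le_left n (m₂ n)
    have hterm1 : (n : ℝ) * Real.exp (-(c * (p n * (m₂ n : ℝ)))) ≤ Real.exp (G n) := by
      calc (n : ℝ) * Real.exp (-(c * (p n * (m₂ n : ℝ))))
          = Real.exp (Real.log (n:ℝ) + -(c * (p n * (m₂ n : ℝ)))) := by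
            rw [Real.exp_add, Real.exp_log hn0]
        _ ≤ Real.exp (G n) := by
            apply Real.exp_le_exp.mpr
            have hlm : Real.log (n:ℝ) ≤ Real.log ((max n (m₂ n) : ℕ) : ℝ) := by
              apply Real.log_le_log hn0
              exact_mod_cast Nat.cast_le.mpr (le_max_left n (m₂ n))
            have : c * (p n * ((min n (m₂ n) : ℕ) : ℝ)) ≤ c * (p n * (m₂ n : ℝ)) := by
              apply mul_le_mul_of_nonneg_left _ hc.le
              exact mul_le_mul_of_nonneg_left hmin_le_r hq0.le
            simp only [hGdef]
            linarith
    have hterm2 : (m₂ n : ℝ) * Real.exp (-(c * (p n * (n : ℝ)))) ≤ Real.exp (G n) := by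
      rcases Nat.eq_zero_or_pos (m₂ n) with h0 | hpos
      · rw [h0]
        simp only [Nat.cast_zero, zero_mul]
        positivity
      · have hm0 : (0:ℝ) < (m₂ n : ℝ) := by exact_mod_cast hpos
        calc (m₂ n : ℝ) * Real.exp (-(c * (p n * (n : ℝ))))
            = Real.exp (Real.log (m₂ n : ℝ) + -(c * (p n * (n : ℝ)))) := by
              rw [Real.exp_add, Real.exp_log hm0]
          _ ≤ Real.exp (G n) := by
              apply Real.exp_le_exp.mpr
              have hlm : Real.log (m₂ n : ℝ) ≤ Real.log ((max n (m₂ n) : ℕ) : ℝ) := by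
                apply Real.log_le_log hm0
                exact_mod_cast Nat.cast_le.mpr (le_max_right n (m₂ n))
              have : c * (p n * ((min n (m₂ n) : ℕ) : ℝ)) ≤ c * (p n * (n : ℝ)) := by
                apply mul_le_mul_of_nonneg_left _ hc.le
                exact mul_le_mul_of_nonneg_left hmin_le_l hq0.le
              simp only [hGdef]
              linarith
    linarith

/-- If `min{m₁,m₂}·p/log(max{m₁,m₂}) → ∞`, then a.a.s. every eigenvalue `μ`
of the adjacency matrix of `G(m₁, m₂, p)` satisfies `|μ| ≤ (1+ε)·p·√(m₁m₂)`. -/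
theorem bipartite_adjacency_eigenvalue_bound (m₂ : ℕ → ℕ) (p : ℕ → ℝ)
    (hp : ∀ m, 0 < p m ∧ p m < 1)
    (hgrow : Tendsto
      (fun m₁ => ((min m₁ (m₂ m₁) : ℕ) : ℝ) * p m₁ / Real.log ((max m₁ (m₂ m₁) : ℕ) : ℝ))
      atTop atTop)
    (ε : ℝ) (hε : 0 < ε) :
    Tendsto (fun m₁ => bipProb m₁ (m₂ m₁) (p m₁)
      {ω | ∀ μ ∈ spectrum ℝ (bipAdjR ω),
        |μ| ≤ (1 + ε) * p m₁ * Real.sqrt ((m₁ : ℝ) * (m₂ m₁ : ℝ))})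
      atTop (nhds 1) := by

  have hc : 0 < (1+ε) * Real.log (1+ε) - ε := hc_pos hε
  have hf := f_tendsto m₂ p hp hgrow hc
  apply tendsto_of_tendsto_of_tendsto_of_le_of_le
    (g := fun m₁ : ℕ => 1 - ((m₁ : ℝ) * Real.exp (-(((1+ε) * Real.log (1+ε) - ε) * (p m₁ * (m₂ m₁ : ℝ)))) +
      (m₂ m₁ : ℝ) * Real.exp (-(((1+ε) * Real.log (1+ε) - ε) * (p m₁ * (m₁ : ℝ))))))
    (h := fun _ => (1:ℝ))
  · simpa using hf.const_sub 1
  · exact tendsto_const_nhds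
  · intro n
    have hq0 := (hp n).1
    have hq1 := (hp n).2
    set q := p n with hq
    -- the degree-good event
    set S : Set (Fin n × Fin (m₂ n) → Bool) :=
      {ω | (∀ v, (degL ω v : ℝ) ≤ (1+ε) * (q * (m₂ n : ℝ))) ∧
           (∀ w, (degR ω w : ℝ) ≤ (1+ε) * (q * (n : ℝ)))} with hSdef
    have hSsub : S ⊆ {ω | ∀ μ ∈ spectrum ℝ (bipAdjR ω),
        |μ| ≤ (1 + ε) * q * Real.sqrt ((n : ℝ) * (m₂ n : ℝ))} := by
      intro ω hω μ hμ
      have hD₁ : (0:ℝ) ≤ (1+ε) * (q * (m₂ n : ℝ)) := by positivity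
      have hD₂ : (0:ℝ) ≤ (1+ε) * (q * (n : ℝ)) := by positivity
      have hsq : μ ^ 2 ≤ ((1+ε) * (q * (m₂ n : ℝ))) * ((1+ε) * (q * (n : ℝ))) :=
        eig_bound ω hD₁ hD₂ hω.1 hω.2 hμ
      have heq : ((1+ε) * (q * (m₂ n : ℝ))) * ((1+ε) * (q * (n : ℝ))) =
          ((1+ε) * q)^2 * ((n:ℝ) * (m₂ n : ℝ)) := by ring
      calc |μ| = Real.sqrt (μ ^ 2) := (Real.sqrt_sq_eq_abs μ).symm
        _ ≤ Real.sqrt (((1+ε) * q)^2 * ((n:ℝ) * (m₂ n : ℝ))) := by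
            apply Real.sqrt_le_sqrt
            rw [← heq]
            exact hsq
        _ = (1+ε) * q * Real.sqrt ((n:ℝ) * (m₂ n : ℝ)) := by
            rw [Real.sqrt_mul (sq_nonneg _), Real.sqrt_sq (by positivity)]
    have hU : Sᶜ ⊆ ⋃ i : Fin n ⊕ Fin (m₂ n),
        Sum.elim (fun v => {ω : Fin n × Fin (m₂ n) → Bool | (1+ε) * (q * (m₂ n : ℝ)) < (degL ω v : ℝ)})
          (fun w => {ω : Fin n × Fin (m₂ n) → Bool | (1+ε) * (q * (n : ℝ)) < (degR ω w : ℝ)}) i := by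
      intro ω hω
      simp only [hSdef, Set.mem_compl_iff, Set.mem_setOf_eq, not_and_or, not_forall, not_le] at hω
      rcases hω with ⟨v, hv⟩ | ⟨w, hw⟩
      · exact Set.mem_iUnion.mpr ⟨Sum.inl v, hv⟩
      · exact Set.mem_iUnion.mpr ⟨Sum.inr w, hw⟩
    have hUb : bipProb n (m₂ n) q Sᶜ ≤
        (n : ℝ) * Real.exp (-(((1+ε) * Real.log (1+ε) - ε) * (q * (m₂ n : ℝ)))) +
        (m₂ n : ℝ) * Real.exp (-(((1+ε) * Real.log (1+ε) - ε) * (q * (n : ℝ)))) := by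
      calc bipProb n (m₂ n) q Sᶜ ≤ bipProb n (m₂ n) q (⋃ i : Fin n ⊕ Fin (m₂ n),
            Sum.elim (fun v => {ω : Fin n × Fin (m₂ n) → Bool | (1+ε) * (q * (m₂ n : ℝ)) < (degL ω v : ℝ)})
              (fun w => {ω : Fin n × Fin (m₂ n) → Bool | (1+ε) * (q * (n : ℝ)) < (degR ω w : ℝ)}) i) :=
          bipProb_mono hq0.le hq1.le hU
        _ ≤ ∑ i : Fin n ⊕ Fin (m₂ n), bipProb n (m₂ n) q
            (Sum.elim (fun v => {ω : Fin n × Fin (m₂ n) → Bool | (1+ε) * (q * (m₂ n : ℝ)) < (degL ω v : ℝ)})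
              (fun w => {ω : Fin n × Fin (m₂ n) → Bool | (1+ε) * (q * (n : ℝ)) < (degR ω w : ℝ)}) i) :=
          bipProb_iUnion_le hq0.le hq1.le _
        _ = (∑ v : Fin n, bipProb n (m₂ n) q
              {ω : Fin n × Fin (m₂ n) → Bool | (1+ε) * (q * (m₂ n : ℝ)) < (degL ω v : ℝ)}) +
            (∑ w : Fin (m₂ n), bipProb n (m₂ n) q
              {ω : Fin n × Fin (m₂ n) → Bool | (1+ε) * (q * (n : ℝ)) < (degR ω w : ℝ)}) :=
          Fintype.sum_sum_type _
        _ ≤ (∑ _v : Fin n, Real.exp (-(((1+ε) * Real.log (1+ε) - ε) * (q * (m₂ n : ℝ))))) +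
            (∑ _w : Fin (m₂ n), Real.exp (-(((1+ε) * Real.log (1+ε) - ε) * (q * (n : ℝ))))) := by
          apply add_le_add
          · exact Finset.sum_le_sum fun v _ => chernoff_degL hq0 hq1 hε v
          · exact Finset.sum_le_sum fun w _ => chernoff_degR hq0 hq1 hε w
        _ = (n : ℝ) * Real.exp (-(((1+ε) * Real.log (1+ε) - ε) * (q * (m₂ n : ℝ)))) +
            (m₂ n : ℝ) * Real.exp (-(((1+ε) * Real.log (1+ε) - ε) * (q * (n : ℝ)))) := by
          simp [Finset.sum_const, nsmul_eq_mul, Finset.card_univ]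
    have hScompl : bipProb n (m₂ n) q Sᶜ = 1 - bipProb n (m₂ n) q S := bipProb_compl S
    have hmono := bipProb_mono hq0.le hq1.le hSsub
    simp only []
    linarith
  · intro n
    exact bipProb_le_one (hp n).1.le (hp n).2.le _
end

section
/- Let G be a bipartite graph with parts V_1 and V_2 of sizes m_1 and m_2, with m_1 ≤ m_2. Let 0 ≤ δ ≤ 1 and p ≥ 0 be real numbers, and set d_1 = (1−δ)m_2 p and d_2 = (1−δ)m_1 p. Suppose that for all subsets A ⊆ V_1 and B ⊆ V_2 with m_2·|A| + m_1·|B| > m_1·m_2 we have e_G(A,B) ≥ (1−δ)·|A|·|B|·p. Then for all subsets A ⊆ V_1 and B ⊆ V_2: d_1·|A| ≤ e_G(A,B) + d_2·(m_2 − |B|). -/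
/-- Let `G` be a bipartite graph with parts `V₁, V₂` of sizes `m₁ ≤ m₂`,
`0 ≤ δ ≤ 1`, `p ≥ 0`, `d₁ = (1-δ)m₂p`, `d₂ = (1-δ)m₁p`. If for all `A ⊆ V₁`, `B ⊆ V₂` with
`m₂|A| + m₁|B| > m₁m₂` we have `e_G(A,B) ≥ (1-δ)|A||B|p`, then for all `A ⊆ V₁`, `B ⊆ V₂`,
`d₁|A| ≤ e_G(A,B) + d₂(m₂ - |B|)`. -/
theorem ore_ryser_hypothesis {V₁ V₂ : Type*} [Fintype V₁] [Fintype V₂]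
    [DecidableEq V₁] [DecidableEq V₂]
    (E : Finset (V₁ × V₂)) (hcard : Fintype.card V₁ ≤ Fintype.card V₂)
    (δ p : ℝ) (hδ0 : 0 ≤ δ) (hδ1 : δ ≤ 1) (hp : 0 ≤ p)
    (hyp : ∀ (A : Finset V₁) (B : Finset V₂),
      (Fintype.card V₂ : ℝ) * A.card + (Fintype.card V₁ : ℝ) * B.card >
        (Fintype.card V₁ : ℝ) * (Fintype.card V₂ : ℝ) →
      (1 - δ) * A.card * B.card * p ≤ ((E.filter fun e => e.1 ∈ A ∧ e.2 ∈ B).card : ℝ)) :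
    ∀ (A : Finset V₁) (B : Finset V₂),
      (1 - δ) * (Fintype.card V₂ : ℝ) * p * A.card ≤
        ((E.filter fun e => e.1 ∈ A ∧ e.2 ∈ B).card : ℝ) +
          (1 - δ) * (Fintype.card V₁ : ℝ) * p * ((Fintype.card V₂ : ℝ) - B.card) := by
  intro A B
  have hA : (A.card : ℝ) ≤ Fintype.card V₁ := by exact_mod_cast A.card_le_univ
  have hB : (B.card : ℝ) ≤ Fintype.card V₂ := by exact_mod_cast B.card_le_univ
  have hA0 : (0:ℝ) ≤ A.card := Nat.cast_nonneg _
  have hB0 : (0:ℝ) ≤ B.card := Nat.cast_nonneg _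
  have hd : (0:ℝ) ≤ (1 - δ) * p := mul_nonneg (by linarith) hp
  by_cases h : (Fintype.card V₂ : ℝ) * A.card + (Fintype.card V₁ : ℝ) * B.card >
      (Fintype.card V₁ : ℝ) * (Fintype.card V₂ : ℝ)
  · have he := hyp A B h
    nlinarith [mul_nonneg hd (mul_nonneg (sub_nonneg.2 hB) (sub_nonneg.2 hA))]
  · push_neg at h
    have he : (0:ℝ) ≤ ((E.filter fun e => e.1 ∈ A ∧ e.2 ∈ B).card : ℝ) := Nat.cast_nonneg _
    nlinarith [mul_nonneg hd (sub_nonneg.2 h)]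
end

section
/- Let n ≥ 1 and l ≥ 1, and let F_n be the free group on n generators. Then the subgroup of F_n generated by the set of all elements whose reduced word length is exactly l has finite index in F_n; moreover, its index is at most the number of elements of F_n of reduced word length at most l − 1. -/
private lemma reduce_of_reduce_cons {α : Type*} [DecidableEq α] {x : α × Bool}
    {L : List (α × Bool)} (h : FreeGroup.reduce (x :: L) = x :: L) :
    FreeGroup.reduce L = L := by
  have hle : (FreeGroup.reduce L).length ≤ L.length :=
    (FreeGroup.Red.sublist (FreeGroup.reduce.red)).length_le
  rw [FreeGroup.reduce.cons] at h
  rcases hr : FreeGroup.reduce L with _ | ⟨hd, tl⟩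
  · rw [hr] at h
    rw [List.cons_eq_cons] at h
    exact h.2
  · rw [hr] at h
    rw [hr] at hle
    by_cases hc : x.1 = hd.1 ∧ x.2 = !hd.2
    · exfalso
      simp only [hc, if_true, and_self] at h
      have h2 := congrArg List.length h
      simp only [List.length_cons] at h2 hle
      omega
    · simp only [if_neg hc] at h
      rw [List.cons_eq_cons] at h
      exact h.2

private lemma reduce_drop {α : Type*} [DecidableEq α] :
    ∀ (L : List (α × Bool)) (k : ℕ), FreeGroup.reduce L = L →
      FreeGroup.reduce (L.drop k) = L.drop k := by
  intro L
  induction L with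
  | nil => intro k _; simp
  | cons x L ih =>
    intro k h
    cases k with
    | zero => exact h
    | succ k =>
      rw [List.drop_succ_cons]
      exact ih k (reduce_of_reduce_cons h)

private lemma key_descent (n l : ℕ) (hl : 1 ≤ l) :
    ∀ (m : ℕ) (g : FreeGroup (Fin n)), g.toWord.length ≤ m →
      ∃ r : FreeGroup (Fin n), r.toWord.length ≤ l - 1 ∧
        r⁻¹ * g ∈ Subgroup.closure {g : FreeGroup (Fin n) | g.toWord.length = l} := by
  intro m
  induction m with
  | zero =>
    intro g hg
    exact ⟨g, by omega, by simp [Subgroup.one_mem]⟩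
  | succ m ih =>
    intro g hg
    by_cases hsmall : g.toWord.length ≤ l - 1
    · exact ⟨g, hsmall, by simp [Subgroup.one_mem]⟩
    · have hlen : l ≤ g.toWord.length := by omega
      set w := g.toWord with hw
      set p := w.take (w.length - l) with hp
      set s := w.drop (w.length - l) with hs
      have hred : FreeGroup.reduce s = s :=
        reduce_drop w _ (FreeGroup.reduce_toWord g)
      have hslen : s.length = l := by
        rw [hs, List.length_drop]; omega
      have hsmem : FreeGroup.mk s ∈
          Subgroup.closure {g : FreeGroup (Fin n) | g.toWord.length = l} := by
        apply Subgroup.subset_closure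
        show (FreeGroup.mk s).toWord.length = l
        rw [FreeGroup.toWord_mk, hred, hslen]
      have hsplit : g = FreeGroup.mk p * FreeGroup.mk s := by
        rw [FreeGroup.mul_mk, hp, hs, List.take_append_drop, hw, FreeGroup.mk_toWord]
      have hplen : (FreeGroup.mk p).toWord.length ≤ m := by
        have h1 : (FreeGroup.mk p).toWord.length ≤ p.length := by
          rw [FreeGroup.toWord_mk]
          exact (FreeGroup.Red.sublist (FreeGroup.reduce.red)).length_le
        have h2 : p.length = w.length - l := by
          rw [hp, List.length_take]; omega
        omega
      obtain ⟨r, hr1, hr2⟩ := ih (FreeGroup.mk p) hplen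
      refine ⟨r, hr1, ?_⟩
      rw [hsplit, ← mul_assoc]
      exact Subgroup.mul_mem _ hr2 hsmem

/-- In the free group on `n` generators, the subgroup generated by the set
of all elements of reduced word length exactly `l` has finite index, and its index is at most
the number of elements of reduced word length at most `l - 1`. -/
theorem finiteIndex_closure_sphere (n l : ℕ) (hn : 1 ≤ n) (hl : 1 ≤ l) :
    (Subgroup.closure {g : FreeGroup (Fin n) | g.toWord.length = l}).FiniteIndex ∧
    (Subgroup.closure {g : FreeGroup (Fin n) | g.toWord.length = l}).index ≤
      Nat.card {g : FreeGroup (Fin n) // g.toWord.length ≤ l - 1} := by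
  set H := Subgroup.closure {g : FreeGroup (Fin n) | g.toWord.length = l} with hH
  have hfin : Finite {g : FreeGroup (Fin n) // g.toWord.length ≤ l - 1} := by
    have : {g : FreeGroup (Fin n) | g.toWord.length ≤ l - 1}.Finite := by
      have := Set.Finite.preimage (f := FreeGroup.toWord)
        (FreeGroup.toWord_injective.injOn)
        (List.finite_length_le (α := Fin n × Bool) (l - 1))
      exact this
    exact this.to_subtype
  set f : {g : FreeGroup (Fin n) // g.toWord.length ≤ l - 1} →
      FreeGroup (Fin n) ⧸ H := fun g => QuotientGroup.mk g.1 with hf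
  have hsurj : Function.Surjective f := by
    intro q
    induction q using QuotientGroup.induction_on with
    | H g =>
      obtain ⟨r, hr1, hr2⟩ := key_descent n l hl g.toWord.length g le_rfl
      exact ⟨⟨r, hr1⟩, (QuotientGroup.eq).2 hr2⟩
  have hqfin : Finite (FreeGroup (Fin n) ⧸ H) := Finite.of_surjective f hsurj
  have hidx : H.index ≤ Nat.card {g : FreeGroup (Fin n) // g.toWord.length ≤ l - 1} := by
    rw [Subgroup.index]
    exact Nat.card_le_card_of_surjective f hsurj
  exact ⟨⟨Subgroup.index_ne_zero_of_finite⟩, hidx⟩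
end

section
/- Fix n ≥ 2, and for each k ≥ 3 let p = p(k) ∈ (0,1) satisfy (2n−1)^{2k−L_k} · p(k)³ → 0 and (2n−1)^{2k+l_k} · p(k)⁴ → 0 as k → ∞. Let R be the random subset of the set C(n,k) of cyclically reduced words of length k in F_n obtained by including each word independently with probability p(k), and let Σ_1, Σ_2, Σ_3 be the associated multigraphs. Then the probability that, for each i = 1, 2, 3, no two vertices of Σ_i are joined by three or more edges, and the unordered pairs of vertices of Σ_i joined by exactly two edges are pairwise vertex-disjoint (the double edges form a matching), tends to 1 as k → ∞. -/
open Filter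

/-- A letter in the alphabet `{a₁^{±1}, …, a_n^{±1}}`. -/
abbrev Letter (n : ℕ) := Fin n × Bool

/-- A list of letters is reduced if no letter is followed by its inverse. -/
def IsRedList {n : ℕ} (w : List (Letter n)) : Prop :=
  w.Chain' fun a b => b ≠ (a.1, !a.2)

instance {n : ℕ} (w : List (Letter n)) : Decidable (IsRedList w) := by
  unfold IsRedList List.Chain'; infer_instance

/-- A list of letters is cyclically reduced if moreover its first letter is not the inverse of
its last letter. -/
def IsCycList {n : ℕ} (w : List (Letter n)) : Prop :=
  ∀ a ∈ w.head?, ∀ b ∈ w.getLast?, a ≠ (b.1, !b.2)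

instance {n : ℕ} (w : List (Letter n)) : Decidable (IsCycList w) := by
  unfold IsCycList; infer_instance

/-- `CWord n k`: cyclically reduced words of length `k` in the free group on `n` generators. -/
def CWord (n k : ℕ) :=
  {w : List.Vector (Letter n) k // IsRedList w.toList ∧ IsCycList w.toList}

instance (n k : ℕ) : DecidableEq (CWord n k) := by unfold CWord; infer_instance
instance (n k : ℕ) : Fintype (CWord n k) := by unfold CWord; exact Subtype.fintype _

/-- The inverse of a word: reverse the word and invert each letter. -/
def linv {n : ℕ} (w : List (Letter n)) : List (Letter n) :=
  w.reverse.map fun a => (a.1, !a.2)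

/-- `l_k` from the paper: `k/3`, `(k-1)/3`, `(k+1)/3` according to `k mod 3 = 0, 1, 2`. -/
def lk (k : ℕ) : ℕ :=
  if k % 3 = 0 then k / 3 else if k % 3 = 1 then (k - 1) / 3 else (k + 1) / 3

/-- `L_k` from the paper: `k/3`, `(k+2)/3`, `(k-2)/3` according to `k mod 3 = 0, 1, 2`,
so `2l_k + L_k = k`. -/
def Lk (k : ℕ) : ℕ :=
  if k % 3 = 0 then k / 3 else if k % 3 = 1 then (k + 2) / 3 else (k - 2) / 3

/-- The unordered pair of endpoints `{r_x, r_z⁻¹}` of the `Σ₁`-edge of a relator `r`,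
where `r = r_x r_y r_z` with `|r_x| = |r_y| = l_k` and `|r_z| = L_k`. -/
def edge1 {n k : ℕ} (r : CWord n k) : Sym2 (List (Letter n)) :=
  s(r.1.toList.take (lk k), linv (r.1.toList.drop (2 * lk k)))

/-- The unordered pair of endpoints `{r_y, r_x⁻¹}` of the `Σ₂`-edge of a relator `r`. -/
def edge2 {n k : ℕ} (r : CWord n k) : Sym2 (List (Letter n)) :=
  s((r.1.toList.drop (lk k)).take (lk k), linv (r.1.toList.take (lk k)))

/-- The unordered pair of endpoints `{r_z, r_y⁻¹}` of the `Σ₃`-edge of a relator `r`. -/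
def edge3 {n k : ℕ} (r : CWord n k) : Sym2 (List (Letter n)) :=
  s(r.1.toList.drop (2 * lk k), linv ((r.1.toList.drop (lk k)).take (lk k)))

/-- The number of edges joining `u` and `v` in the multigraph `Σ` whose edges have endpoint
pairs `ep r` for relators `r` in the random set `R = {r | ω r = true}`. -/
def multE {n k : ℕ} (ep : CWord n k → Sym2 (List (Letter n))) (ω : CWord n k → Bool)
    (u v : List (Letter n)) : ℕ :=
  (Finset.univ.filter fun r : CWord n k => ω r = true ∧ ep r = s(u, v)).card

/-- Probability of the event `E` for the random set of relators obtained by including each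
cyclically reduced word of length `k` independently with probability `p`. -/
noncomputable def cProb (n k : ℕ) (p : ℝ) (E : Set (CWord n k → Bool)) : ℝ :=
  haveI := Classical.dec
  ∑ ω : CWord n k → Bool, if ω ∈ E then ∏ r, bern p (ω r) else 0

/-- No two vertices of `Σ` are joined by three or more edges, and the double edges of `Σ`
form a matching (the endpoints of distinct double edges are pairwise distinct). -/
def doubleEdgesMatch {n k : ℕ} (ep : CWord n k → Sym2 (List (Letter n)))
    (ω : CWord n k → Bool) : Prop :=
  (∀ u v, multE ep ω u v ≤ 2) ∧
  (∀ u v u' v', multE ep ω u v = 2 → multE ep ω u' v' = 2 → s(u, v) ≠ s(u', v') →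
    u ≠ u' ∧ u ≠ v' ∧ v ≠ u' ∧ v ≠ v')

namespace SAux

open Finset


/-! ### arithmetic about lk, Lk -/

lemma two_lk_add_Lk (k : ℕ) : 2 * lk k + Lk k = k := by
  unfold lk Lk; split_ifs <;> omega

lemma Lk_le_lk_add_one (k : ℕ) : Lk k ≤ lk k + 1 := by
  unfold lk Lk; split_ifs <;> omega

lemma lk_le_Lk_add_one (k : ℕ) : lk k ≤ Lk k + 1 := by
  unfold lk Lk; split_ifs <;> omega

/-! ### linv -/

lemma linv_linv {n : ℕ} (w : List (Letter n)) : linv (linv w) = w := by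
  unfold linv
  rw [List.map_reverse, List.map_map]
  have h : ((fun a : Letter n => (a.1, !a.2)) ∘ fun a : Letter n => (a.1, !a.2)) = id := by
    funext a; simp
  rw [h, List.map_id, List.reverse_reverse]

lemma linv_injective {n : ℕ} : Function.Injective (linv (n := n)) := by
  intro u v h
  rw [← linv_linv u, h, linv_linv]

/-! ### counting reduced lists -/

lemma card_red_lists {n : ℕ} (hn : 2 ≤ n) :
    ∀ (f : ℕ) (L : Finset (List (Letter n))), (∀ w ∈ L, IsRedList w ∧ w.length = f) →
      L.card ≤ 2 * (2 * n - 1) ^ f := by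
  intro f
  induction f with
  | zero =>
    intro L hL
    have hsub : L ⊆ {([] : List (Letter n))} := by
      intro w hw
      have h2 := (hL w hw).2
      rw [List.length_eq_zero_iff] at h2
      simp [h2]
    calc L.card ≤ ({([] : List (Letter n))} : Finset _).card := Finset.card_le_card hsub
      _ ≤ 2 * (2 * n - 1) ^ 0 := by simp
  | succ f ih =>
    intro L hL
    haveI : Inhabited (Letter n) := ⟨(⟨0, by omega⟩, true)⟩
    rcases Nat.eq_zero_or_pos f with rfl | hf
    · -- lists of length 1
      have h1 : L.card ≤ Fintype.card (Letter n) := by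
        rw [← Finset.card_univ]
        apply Finset.card_le_card_of_injOn (fun w => w.headI) (fun w _ => Finset.mem_univ _)
        intro w hw w' hw' h
        obtain ⟨a, rfl⟩ := List.length_eq_one_iff.mp (hL w hw).2
        obtain ⟨b, rfl⟩ := List.length_eq_one_iff.mp (hL w' hw').2
        simpa using h
      have h2 : Fintype.card (Letter n) = 2 * n := by
        simp [Fintype.card_prod, mul_comm]
      rw [h2] at h1
      simp only [zero_add, pow_one]
      omega
    · -- step : f ≥ 1
      classical
      have key : ∀ a ∈ L.image List.tail, (L.filter fun w => w.tail = a).card ≤ 2 * n - 1 := by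
        intro a ha
        obtain ⟨w₀, hw₀, rfl⟩ := Finset.mem_image.mp ha
        have hlen : w₀.tail.length = f := by
          rw [List.length_tail, (hL w₀ hw₀).2]; omega
        have hne : w₀.tail ≠ [] := by
          intro h; rw [h] at hlen; simp at hlen; omega
        obtain ⟨b₀, rest, hb₀⟩ := List.exists_cons_of_ne_nil hne
        have hcard : (Finset.univ.erase ((b₀.1, !b₀.2) : Letter n)).card = 2 * n - 1 := by
          rw [Finset.card_erase_of_mem (Finset.mem_univ _), Finset.card_univ]
          simp [Fintype.card_prod, mul_comm]
        rw [← hcard]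
        apply Finset.card_le_card_of_injOn (fun w => w.headI)
        · intro w hw
          rw [Finset.mem_coe, Finset.mem_filter] at hw
          obtain ⟨hwL, hwt⟩ := hw
          have hwne : w ≠ [] := by
            intro h
            have := (hL w hwL).2; rw [h] at this; simp at this
          obtain ⟨h₁, t₁, rfl⟩ := List.exists_cons_of_ne_nil hwne
          simp only [List.tail_cons] at hwt
          subst hwt
          rw [hb₀] at *
          have hred := (hL _ hwL).1
          simp only [IsRedList, List.Chain', List.isChain_cons_cons] at hred
          have hR : b₀ ≠ (h₁.1, !h₁.2) := hred.1
          simp only [List.headI_cons]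
          rw [Finset.mem_coe, Finset.mem_erase]
          refine ⟨?_, Finset.mem_univ _⟩
          intro hcontra
          apply hR
          rw [hcontra]
          simp
        · intro w hw w' hw' h
          simp only [Finset.coe_filter, Set.mem_setOf_eq] at hw hw'
          have hwne : w ≠ [] := by
            intro hh
            have := (hL w hw.1).2; rw [hh] at this; simp at this
          have hwne' : w' ≠ [] := by
            intro hh
            have := (hL w' hw'.1).2; rw [hh] at this; simp at this
          obtain ⟨h₁, t₁, rfl⟩ := List.exists_cons_of_ne_nil hwne
          obtain ⟨h₂, t₂, rfl⟩ := List.exists_cons_of_ne_nil hwne'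
          simp only [List.headI_cons] at h
          simp only [List.tail_cons] at hw hw'
          rw [h, hw.2, hw'.2]
      calc L.card ≤ (2 * n - 1) * (L.image List.tail).card :=
            Finset.card_le_mul_card_image _ _ key
        _ ≤ (2 * n - 1) * (2 * (2 * n - 1) ^ f) := by
            apply Nat.mul_le_mul_left
            apply ih
            intro t ht
            obtain ⟨w, hw, rfl⟩ := Finset.mem_image.mp ht
            refine ⟨(hL w hw).1.tail, ?_⟩
            rw [List.length_tail, (hL w hw).2]; omega
        _ = 2 * (2 * n - 1) ^ (f + 1) := by rw [pow_succ]; ring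

/-- Main two-segment injection bound. -/
lemma pair_seg_bound {n : ℕ} (hn : 2 ≤ n) {α : Type*} [DecidableEq α] (S : Finset α)
    (g₁ g₂ : α → List (Letter n)) (f₁ f₂ : ℕ)
    (h₁ : ∀ r ∈ S, IsRedList (g₁ r) ∧ (g₁ r).length = f₁)
    (h₂ : ∀ r ∈ S, IsRedList (g₂ r) ∧ (g₂ r).length = f₂)
    (hinj : ∀ r ∈ S, ∀ r' ∈ S, g₁ r = g₁ r' → g₂ r = g₂ r' → r = r') :
    S.card ≤ 4 * (2 * n - 1) ^ (f₁ + f₂) := by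
  classical
  have step : S.card ≤ ((S.image g₁) ×ˢ (S.image g₂)).card := by
    apply Finset.card_le_card_of_injOn (fun r => (g₁ r, g₂ r))
    · intro r hr
      exact Finset.mem_product.mpr ⟨Finset.mem_image_of_mem _ hr, Finset.mem_image_of_mem _ hr⟩
    · intro r hr r' hr' h
      exact hinj r hr r' hr' (congrArg Prod.fst h) (congrArg Prod.snd h)
  rw [Finset.card_product] at step
  have b₁ : (S.image g₁).card ≤ 2 * (2 * n - 1) ^ f₁ := by
    apply card_red_lists hn
    intro w hw; obtain ⟨r, hr, rfl⟩ := Finset.mem_image.mp hw; exact h₁ r hr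
  have b₂ : (S.image g₂).card ≤ 2 * (2 * n - 1) ^ f₂ := by
    apply card_red_lists hn
    intro w hw; obtain ⟨r, hr, rfl⟩ := Finset.mem_image.mp hw; exact h₂ r hr
  calc S.card ≤ (2 * (2 * n - 1) ^ f₁) * (2 * (2 * n - 1) ^ f₂) :=
        step.trans (Nat.mul_le_mul b₁ b₂)
    _ = 4 * (2 * n - 1) ^ (f₁ + f₂) := by rw [pow_add]; ring



variable {n k : ℕ} {p : ℝ}

lemma bern_nonneg (hp0 : 0 ≤ p) (hp1 : p ≤ 1) (b : Bool) : 0 ≤ bern p b := by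
  cases b <;> simp [bern] <;> linarith

lemma wt_nonneg (hp0 : 0 ≤ p) (hp1 : p ≤ 1) (ω : CWord n k → Bool) :
    0 ≤ ∏ r, bern p (ω r) :=
  Finset.prod_nonneg fun r _ => bern_nonneg hp0 hp1 _

open Classical in
lemma cProb_def' (p : ℝ) (E : Set (CWord n k → Bool)) :
    cProb n k p E = ∑ ω : CWord n k → Bool, (if ω ∈ E then ∏ r, bern p (ω r) else 0) := by
  unfold cProb
  congr!

/-- Key product formula: probability that all of `S` is included equals `p ^ |S|`. -/
lemma cProb_forall_true (p : ℝ) (S : Finset (CWord n k)) :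
    cProb n k p {ω | ∀ r ∈ S, ω r = true} = p ^ S.card := by
  classical
  simp only [cProb_def']
  simp only [Set.mem_setOf_eq]
  have hpt : ∀ (ω : CWord n k → Bool) (inst : Decidable (∀ r ∈ S, ω r = true)),
      (@ite ℝ (∀ r ∈ S, ω r = true) inst (∏ r, bern p (ω r)) 0)
        = ∏ r, (if r ∈ S then (if ω r then (1:ℝ) else 0) else 1) * bern p (ω r) := by
    intro ω inst
    by_cases h : ∀ r ∈ S, ω r = true
    · rw [if_pos h]
      refine Finset.prod_congr rfl fun r _ => ?_
      by_cases hr : r ∈ S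
      · rw [if_pos hr, h r hr, if_pos rfl, one_mul]
      · rw [if_neg hr, one_mul]
    · rw [if_neg h]
      push_neg at h
      obtain ⟨r, hr, hfalse⟩ := h
      rw [eq_comm]
      apply Finset.prod_eq_zero (Finset.mem_univ r)
      rw [if_pos hr, if_neg hfalse, zero_mul]
  simp only [hpt]
  rw [← Fintype.piFinset_univ,
    ← Finset.prod_univ_sum (t := fun _ : CWord n k => (univ : Finset Bool))
      (f := fun r b => (if r ∈ S then if b = true then (1:ℝ) else 0 else 1) * bern p b)]
  have hfac : ∀ r : CWord n k,
      (∑ b : Bool, (if r ∈ S then (if b then (1:ℝ) else 0) else 1) * bern p b)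
        = if r ∈ S then p else 1 := by
    intro r
    rw [Fintype.sum_bool]
    by_cases hr : r ∈ S <;> simp [hr, bern] <;> ring
  rw [Finset.prod_congr rfl fun r _ => hfac r]
  rw [Finset.prod_ite_mem, Finset.univ_inter, Finset.prod_const]

lemma cProb_univ (p : ℝ) : cProb n k p Set.univ = 1 := by
  have h := cProb_forall_true (n := n) (k := k) p ∅
  have hset : {ω : CWord n k → Bool | ∀ r ∈ (∅ : Finset (CWord n k)), ω r = true} = Set.univ := by
    ext ω; simp
  rw [hset] at h
  simpa using h

lemma cProb_mono (hp0 : 0 ≤ p) (hp1 : p ≤ 1) {E E' : Set (CWord n k → Bool)} (h : E ⊆ E') :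
    cProb n k p E ≤ cProb n k p E' := by
  classical
  simp only [cProb_def']
  apply Finset.sum_le_sum
  intro ω _
  by_cases hE : ω ∈ E
  · rw [if_pos hE, if_pos (h hE)]
  · rw [if_neg hE]
    by_cases hE' : ω ∈ E'
    · rw [if_pos hE']; exact wt_nonneg hp0 hp1 ω
    · rw [if_neg hE']

lemma cProb_union_le (hp0 : 0 ≤ p) (hp1 : p ≤ 1) (A B : Set (CWord n k → Bool)) :
    cProb n k p (A ∪ B) ≤ cProb n k p A + cProb n k p B := by
  classical
  simp only [cProb_def']
  rw [← Finset.sum_add_distrib]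
  apply Finset.sum_le_sum
  intro ω _
  by_cases hA : ω ∈ A
  · rw [if_pos hA, if_pos (Set.mem_union_left _ hA)]
    have : (0:ℝ) ≤ if ω ∈ B then ∏ r, bern p (ω r) else 0 := by
      by_cases hB : ω ∈ B
      · rw [if_pos hB]; exact wt_nonneg hp0 hp1 ω
      · rw [if_neg hB]
    linarith
  · by_cases hB : ω ∈ B
    · rw [if_pos (Set.mem_union_right _ hB), if_neg hA, if_pos hB]; linarith
    · rw [if_neg hA, if_neg hB, if_neg (by simp [hA, hB] : ¬ ω ∈ A ∪ B)]; linarith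

lemma cProb_biUnion_le (hp0 : 0 ≤ p) (hp1 : p ≤ 1) {ι : Type*} [DecidableEq ι] (T : Finset ι)
    (Q : ι → (CWord n k → Bool) → Prop) :
    cProb n k p {ω | ∃ t ∈ T, Q t ω} ≤ ∑ t ∈ T, cProb n k p {ω | Q t ω} := by
  classical
  simp only [cProb_def']
  simp only [Set.mem_setOf_eq]
  rw [Finset.sum_comm]
  apply Finset.sum_le_sum
  intro ω _
  by_cases h : ∃ t ∈ T, Q t ω
  · rw [if_pos h]
    obtain ⟨t₀, ht₀, hq⟩ := h
    have hnn : ∀ t ∈ T, (0:ℝ) ≤ if Q t ω then ∏ r, bern p (ω r) else 0 := by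
      intro t _
      split_ifs
      · exact wt_nonneg hp0 hp1 ω
      · exact le_refl 0
    have h1 := Finset.single_le_sum hnn ht₀
    rw [if_pos hq] at h1
    exact h1
  · rw [if_neg h]
    apply Finset.sum_nonneg
    intro t _
    by_cases hQ : Q t ω
    · rw [if_pos hQ]; exact wt_nonneg hp0 hp1 ω
    · rw [if_neg hQ]

lemma cProb_compl (p : ℝ) (E : Set (CWord n k → Bool)) :
    cProb n k p E = 1 - cProb n k p Eᶜ := by
  classical
  have key : cProb n k p E + cProb n k p Eᶜ = 1 := by
    rw [← cProb_univ (n := n) (k := k) p]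
    simp only [cProb_def']
    rw [← Finset.sum_add_distrib]
    apply Finset.sum_congr rfl
    intro ω _
    by_cases hE : ω ∈ E
    · rw [if_pos hE, if_neg (by simpa using hE), if_pos (Set.mem_univ ω), add_zero]
    · rw [if_neg hE, if_pos (by simpa using hE), if_pos (Set.mem_univ ω), zero_add]
  linarith



variable {n k : ℕ}

/-! ### segments -/

def Xs (r : CWord n k) : List (Letter n) := r.1.toList.take (lk k)
def Ys (r : CWord n k) : List (Letter n) := (r.1.toList.drop (lk k)).take (lk k)
def Zs (r : CWord n k) : List (Letter n) := r.1.toList.drop (2 * lk k)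

lemma len_toList (r : CWord n k) : r.1.toList.length = k := r.1.toList_length

lemma red_toList (r : CWord n k) : IsRedList r.1.toList := r.2.1

lemma Xs_len (r : CWord n k) : (Xs r).length = lk k := by
  have h := two_lk_add_Lk k
  simp [Xs, List.length_take, len_toList]
  omega

lemma Ys_len (r : CWord n k) : (Ys r).length = lk k := by
  have h := two_lk_add_Lk k
  simp [Ys, List.length_take, List.length_drop, len_toList]
  omega

lemma Zs_len (r : CWord n k) : (Zs r).length = Lk k := by
  have h := two_lk_add_Lk k
  simp [Zs, List.length_drop, len_toList]
  omega

lemma Xs_red (r : CWord n k) : IsRedList (Xs r) := List.IsChain.take (red_toList r) _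
lemma Ys_red (r : CWord n k) : IsRedList (Ys r) :=
  List.IsChain.take (List.IsChain.drop (red_toList r) _) _
lemma Zs_red (r : CWord n k) : IsRedList (Zs r) := List.IsChain.drop (red_toList r) _

lemma toList_eq_xyz (r : CWord n k) : Xs r ++ (Ys r ++ Zs r) = r.1.toList := by
  unfold Xs Ys Zs
  rw [two_mul, ← List.drop_drop, List.take_append_drop, List.take_append_drop]

lemma cw_ext {r r' : CWord n k} (h : r.1.toList = r'.1.toList) : r = r' :=
  Subtype.ext (List.Vector.toList_injective h)

lemma ext_seg {r r' : CWord n k} (hx : Xs r = Xs r') (hy : Ys r = Ys r') (hz : Zs r = Zs r') :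
    r = r' := by
  apply cw_ext
  rw [← toList_eq_xyz r, ← toList_eq_xyz r', hx, hy, hz]

/-- The extra segments used in the degree bounds. -/
lemma drop_red (r : CWord n k) : IsRedList (r.1.toList.drop (lk k)) :=
  List.IsChain.drop (red_toList r) _
lemma drop_len (r : CWord n k) : (r.1.toList.drop (lk k)).length = lk k + Lk k := by
  have h := two_lk_add_Lk k
  simp [List.length_drop, len_toList]
  omega
lemma take2_red (r : CWord n k) : IsRedList (r.1.toList.take (2 * lk k)) :=
  List.IsChain.take (red_toList r) _
lemma take2_len (r : CWord n k) : (r.1.toList.take (2 * lk k)).length = 2 * lk k := by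
  have h := two_lk_add_Lk k
  simp [List.length_take, len_toList]
  omega

lemma drop_eq_yz (r : CWord n k) : r.1.toList.drop (lk k) = Ys r ++ Zs r := by
  unfold Ys Zs
  rw [two_mul, ← List.drop_drop, List.take_append_drop]

lemma take2_eq_xy (r : CWord n k) : r.1.toList.take (2 * lk k) = Xs r ++ Ys r := by
  unfold Xs Ys
  rw [two_mul]
  rw [List.take_add]

lemma ext_x_drop {r r' : CWord n k} (hx : Xs r = Xs r') (hd : r.1.toList.drop (lk k) = r'.1.toList.drop (lk k)) : r = r' := by
  have h := drop_eq_yz r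
  have h' := drop_eq_yz r'
  rw [h, h'] at hd
  have hy : Ys r = Ys r' := by
    have h1 : (Ys r).length = (Ys r').length := by rw [Ys_len, Ys_len]
    exact List.append_inj_left hd h1
  exact ext_seg hx hy (by
    have h1 : (Ys r).length = (Ys r').length := by rw [Ys_len, Ys_len]
    exact List.append_inj_right hd h1)

/-! ### abstract counting of pairs/triples/quadruples -/

lemma card_pairs {α β : Type*} [DecidableEq α] [DecidableEq β] (T : Finset (α × β))
    (A : Finset α) (B : ℕ)
    (hfst : ∀ x ∈ T, x.1 ∈ A)
    (hfib : ∀ a ∈ A, ∀ S : Finset β, (∀ b ∈ S, (a, b) ∈ T) → S.card ≤ B) :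
    T.card ≤ A.card * B := by
  rw [Finset.card_eq_sum_card_fiberwise hfst]
  have h1 : ∀ a ∈ A, (T.filter fun x => x.1 = a).card ≤ B := by
    intro a ha
    have himg : ((T.filter fun x => x.1 = a).image Prod.snd).card ≤ B := by
      apply hfib a ha
      intro b hb
      obtain ⟨x, hx, rfl⟩ := Finset.mem_image.mp hb
      have hx' := Finset.mem_filter.mp hx
      have : (a, x.2) = x := by rw [← hx'.2]
      rw [this]; exact hx'.1
    have heq : ((T.filter fun x => x.1 = a).image Prod.snd).card
        = (T.filter fun x => x.1 = a).card := by
      apply Finset.card_image_of_injOn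
      intro x hx y hy hxy
      simp only [Finset.coe_filter, Set.mem_setOf_eq] at hx hy
      exact Prod.ext (hx.2.trans hy.2.symm) hxy
    omega
  calc ∑ a ∈ A, (T.filter fun x => x.1 = a).card ≤ ∑ _a ∈ A, B := Finset.sum_le_sum h1
    _ = A.card * B := by rw [Finset.sum_const, smul_eq_mul]

lemma card_triples {γ ε : Type*} [DecidableEq γ] [DecidableEq ε] [Fintype γ]
    (ep : γ → ε) (FibB : ℕ)
    (hFib : ∀ (e : ε) (S : Finset γ), (∀ r ∈ S, ep r = e) → S.card ≤ FibB)
    (T : Finset (γ × γ × γ))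
    (hT : ∀ t ∈ T, ep t.2.1 = ep t.1 ∧ ep t.2.2 = ep t.1) :
    T.card ≤ Fintype.card γ * (FibB * FibB) := by
  have h := card_pairs T Finset.univ (FibB * FibB) (fun x _ => Finset.mem_univ _) ?_
  · simpa [Finset.card_univ] using h
  intro a _ S hS
  have h2 := card_pairs S (S.image Prod.fst) FibB (fun x hx => Finset.mem_image_of_mem _ hx) ?_
  · refine h2.trans ?_
    have himg : (S.image Prod.fst).card ≤ FibB := by
      apply hFib (ep a)
      intro b hb
      obtain ⟨x, hx, rfl⟩ := Finset.mem_image.mp hb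
      exact (hT _ (hS x hx)).1
    exact Nat.mul_le_mul_right _ himg
  · intro b _ S' hS'
    apply hFib (ep a)
    intro c hc
    exact (hT _ (hS _ (hS' c hc))).2

lemma card_quads {γ ε : Type*} [DecidableEq γ] [DecidableEq ε] [Fintype γ]
    (ep : γ → ε) (R : γ → γ → Prop) (FibB SB : ℕ)
    (hFib : ∀ (e : ε) (S : Finset γ), (∀ r ∈ S, ep r = e) → S.card ≤ FibB)
    (hR : ∀ (a : γ) (S : Finset γ), (∀ b ∈ S, R a b) → S.card ≤ SB)
    (T : Finset (γ × γ × γ × γ))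
    (hT : ∀ q ∈ T, ep q.2.1 = ep q.1 ∧ ep q.2.2.2 = ep q.2.2.1 ∧ R q.1 q.2.2.1) :
    T.card ≤ Fintype.card γ * (FibB * (SB * FibB)) := by
  have h := card_pairs T Finset.univ (FibB * (SB * FibB)) (fun x _ => Finset.mem_univ _) ?_
  · simpa [Finset.card_univ] using h
  intro a _ S hS
  -- S : Finset (γ × γ × γ), elements x with (a, x) ∈ T
  have h2 := card_pairs S (S.image Prod.fst) (SB * FibB)
      (fun x hx => Finset.mem_image_of_mem _ hx) ?_
  · refine h2.trans ?_
    have himg : (S.image Prod.fst).card ≤ FibB := by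
      apply hFib (ep a)
      intro b hb
      obtain ⟨x, hx, rfl⟩ := Finset.mem_image.mp hb
      exact (hT _ (hS x hx)).1
    exact Nat.mul_le_mul_right _ himg
  · intro b _ S' hS'
    -- S' : Finset (γ × γ), elements y with (a, b, y) ∈ T
    have h3 := card_pairs S' (S'.image Prod.fst) FibB
        (fun y hy => Finset.mem_image_of_mem _ hy) ?_
    · refine h3.trans ?_
      have himg : (S'.image Prod.fst).card ≤ SB := by
        apply hR a
        intro c hc
        obtain ⟨y, hy, rfl⟩ := Finset.mem_image.mp hc
        exact (hT _ (hS _ (hS' y hy))).2.2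
      exact Nat.mul_le_mul_right _ himg
    · intro c _ S'' hS''
      apply hFib (ep c)
      intro d hd
      exact (hT _ (hS _ (hS' _ (hS'' d hd)))).2.1

lemma sym2_exists {α : Type*} (e : Sym2 α) : ∃ u v, e = s(u, v) :=
  Sym2.ind (fun u v => ⟨u, v, rfl⟩) e

lemma share_bound {γ : Type*} {α : Type*} [DecidableEq γ] (ep : γ → Sym2 α) (GB : ℕ)
    (hG : ∀ (w : α) (S : Finset γ), (∀ r ∈ S, w ∈ ep r) → S.card ≤ GB) :
    ∀ (a : γ) (S : Finset γ), (∀ b ∈ S, ∃ w, w ∈ ep a ∧ w ∈ ep b) → S.card ≤ GB + GB := by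
  classical
  intro a S hS
  obtain ⟨u, v, huv⟩ := sym2_exists (ep a)
  have hsub : S ⊆ S.filter (fun b => u ∈ ep b) ∪ S.filter (fun b => v ∈ ep b) := by
    intro b hb
    obtain ⟨w, hw1, hw2⟩ := hS b hb
    rw [huv, Sym2.mem_iff] at hw1
    rcases hw1 with rfl | rfl
    · exact Finset.mem_union_left _ (Finset.mem_filter.mpr ⟨hb, hw2⟩)
    · exact Finset.mem_union_right _ (Finset.mem_filter.mpr ⟨hb, hw2⟩)
  calc S.card ≤ (S.filter (fun b => u ∈ ep b) ∪ S.filter (fun b => v ∈ ep b)).card :=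
        Finset.card_le_card hsub
    _ ≤ (S.filter (fun b => u ∈ ep b)).card + (S.filter (fun b => v ∈ ep b)).card :=
        Finset.card_union_le _ _
    _ ≤ GB + GB := by
        apply Nat.add_le_add
        · exact hG u _ (fun r hr => (Finset.mem_filter.mp hr).2)
        · exact hG v _ (fun r hr => (Finset.mem_filter.mp hr).2)



variable {n k : ℕ}

lemma pow_mono_N (hn : 2 ≤ n) {a b : ℕ} (h : a ≤ b) : (2 * n - 1) ^ a ≤ (2 * n - 1) ^ b :=
  Nat.pow_le_pow_right (by omega) h

/-! ### fiber bounds for the three edge maps -/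

lemma fib_edge1 (hn : 2 ≤ n) (e : Sym2 (List (Letter n))) (S : Finset (CWord n k))
    (hS : ∀ r ∈ S, edge1 r = e) : S.card ≤ 8 * (2 * n - 1) ^ (lk k + 1) := by
  classical
  obtain ⟨u, v, rfl⟩ := sym2_exists e
  have hsub : S ⊆ S.filter (fun r => Xs r = u ∧ linv (Zs r) = v) ∪
      S.filter (fun r => Xs r = v ∧ linv (Zs r) = u) := by
    intro r hr
    have h := hS r hr
    rw [show edge1 r = s(Xs r, linv (Zs r)) from rfl, Sym2.eq_iff] at h
    rcases h with ⟨h1, h2⟩ | ⟨h1, h2⟩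
    · exact Finset.mem_union_left _ (Finset.mem_filter.mpr ⟨hr, h1, h2⟩)
    · exact Finset.mem_union_right _ (Finset.mem_filter.mpr ⟨hr, h1, h2⟩)
  have hbranch : ∀ (a b : List (Letter n)),
      (S.filter (fun r => Xs r = a ∧ linv (Zs r) = b)).card ≤ 4 * (2 * n - 1) ^ (lk k + 0) := by
    intro a b
    apply pair_seg_bound hn _ Ys (fun _ => []) (lk k) 0
    · exact fun r _ => ⟨Ys_red r, Ys_len r⟩
    · exact fun r _ => ⟨List.isChain_nil, rfl⟩
    · intro r hr r' hr' hy _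
      have h1 := (Finset.mem_filter.mp hr).2
      have h2 := (Finset.mem_filter.mp hr').2
      exact ext_seg (h1.1.trans h2.1.symm) hy (linv_injective (h1.2.trans h2.2.symm))
  calc S.card ≤ _ := Finset.card_le_card hsub
    _ ≤ _ := Finset.card_union_le _ _
    _ ≤ 4 * (2 * n - 1) ^ (lk k + 0) + 4 * (2 * n - 1) ^ (lk k + 0) :=
        Nat.add_le_add (hbranch u v) (hbranch v u)
    _ ≤ 8 * (2 * n - 1) ^ (lk k + 1) := by
        have := pow_mono_N (n := n) hn (show lk k ≤ lk k + 1 by omega)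
        simp only [add_zero] at *
        omega

lemma fib_edge2 (hn : 2 ≤ n) (e : Sym2 (List (Letter n))) (S : Finset (CWord n k))
    (hS : ∀ r ∈ S, edge2 r = e) : S.card ≤ 8 * (2 * n - 1) ^ (lk k + 1) := by
  classical
  obtain ⟨u, v, rfl⟩ := sym2_exists e
  have hsub : S ⊆ S.filter (fun r => Ys r = u ∧ linv (Xs r) = v) ∪
      S.filter (fun r => Ys r = v ∧ linv (Xs r) = u) := by
    intro r hr
    have h := hS r hr
    rw [show edge2 r = s(Ys r, linv (Xs r)) from rfl, Sym2.eq_iff] at h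
    rcases h with ⟨h1, h2⟩ | ⟨h1, h2⟩
    · exact Finset.mem_union_left _ (Finset.mem_filter.mpr ⟨hr, h1, h2⟩)
    · exact Finset.mem_union_right _ (Finset.mem_filter.mpr ⟨hr, h1, h2⟩)
  have hbranch : ∀ (a b : List (Letter n)),
      (S.filter (fun r => Ys r = a ∧ linv (Xs r) = b)).card ≤ 4 * (2 * n - 1) ^ (Lk k + 0) := by
    intro a b
    apply pair_seg_bound hn _ Zs (fun _ => []) (Lk k) 0
    · exact fun r _ => ⟨Zs_red r, Zs_len r⟩
    · exact fun r _ => ⟨List.isChain_nil, rfl⟩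
    · intro r hr r' hr' hz _
      have h1 := (Finset.mem_filter.mp hr).2
      have h2 := (Finset.mem_filter.mp hr').2
      exact ext_seg (linv_injective (h1.2.trans h2.2.symm)) (h1.1.trans h2.1.symm) hz
  calc S.card ≤ _ := Finset.card_le_card hsub
    _ ≤ _ := Finset.card_union_le _ _
    _ ≤ 4 * (2 * n - 1) ^ (Lk k + 0) + 4 * (2 * n - 1) ^ (Lk k + 0) :=
        Nat.add_le_add (hbranch u v) (hbranch v u)
    _ ≤ 8 * (2 * n - 1) ^ (lk k + 1) := by
        have := pow_mono_N (n := n) hn (Lk_le_lk_add_one k)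
        simp only [add_zero] at *
        omega

lemma fib_edge3 (hn : 2 ≤ n) (e : Sym2 (List (Letter n))) (S : Finset (CWord n k))
    (hS : ∀ r ∈ S, edge3 r = e) : S.card ≤ 8 * (2 * n - 1) ^ (lk k + 1) := by
  classical
  obtain ⟨u, v, rfl⟩ := sym2_exists e
  have hsub : S ⊆ S.filter (fun r => Zs r = u ∧ linv (Ys r) = v) ∪
      S.filter (fun r => Zs r = v ∧ linv (Ys r) = u) := by
    intro r hr
    have h := hS r hr
    rw [show edge3 r = s(Zs r, linv (Ys r)) from rfl, Sym2.eq_iff] at h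
    rcases h with ⟨h1, h2⟩ | ⟨h1, h2⟩
    · exact Finset.mem_union_left _ (Finset.mem_filter.mpr ⟨hr, h1, h2⟩)
    · exact Finset.mem_union_right _ (Finset.mem_filter.mpr ⟨hr, h1, h2⟩)
  have hbranch : ∀ (a b : List (Letter n)),
      (S.filter (fun r => Zs r = a ∧ linv (Ys r) = b)).card ≤ 4 * (2 * n - 1) ^ (lk k + 0) := by
    intro a b
    apply pair_seg_bound hn _ Xs (fun _ => []) (lk k) 0
    · exact fun r _ => ⟨Xs_red r, Xs_len r⟩
    · exact fun r _ => ⟨List.isChain_nil, rfl⟩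
    · intro r hr r' hr' hx _
      have h1 := (Finset.mem_filter.mp hr).2
      have h2 := (Finset.mem_filter.mp hr').2
      exact ext_seg hx (linv_injective (h1.2.trans h2.2.symm)) (h1.1.trans h2.1.symm)
  calc S.card ≤ _ := Finset.card_le_card hsub
    _ ≤ _ := Finset.card_union_le _ _
    _ ≤ 4 * (2 * n - 1) ^ (lk k + 0) + 4 * (2 * n - 1) ^ (lk k + 0) :=
        Nat.add_le_add (hbranch u v) (hbranch v u)
    _ ≤ 8 * (2 * n - 1) ^ (lk k + 1) := by
        have := pow_mono_N (n := n) hn (show lk k ≤ lk k + 1 by omega)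
        simp only [add_zero] at *
        omega

/-! ### vertex-degree bounds for the three edge maps -/

-- branch bounds used below
lemma branch_x_fixed (hn : 2 ≤ n) (w : List (Letter n)) (S : Finset (CWord n k))
    (hS : ∀ r ∈ S, Xs r = w) : S.card ≤ 4 * (2 * n - 1) ^ (lk k + Lk k) := by
  have h := pair_seg_bound hn S (fun r => r.1.toList.drop (lk k)) (fun _ => [])
      (lk k + Lk k) 0 (fun r _ => ⟨drop_red r, drop_len r⟩)
      (fun r _ => ⟨List.isChain_nil, rfl⟩) ?_
  · simpa using h
  · intro r hr r' hr' hd _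
    exact ext_x_drop ((hS r hr).trans (hS r' hr').symm) hd

lemma branch_y_fixed (hn : 2 ≤ n) (w : List (Letter n)) (S : Finset (CWord n k))
    (hS : ∀ r ∈ S, Ys r = w) : S.card ≤ 4 * (2 * n - 1) ^ (lk k + Lk k) := by
  apply pair_seg_bound hn S Xs Zs (lk k) (Lk k)
  · exact fun r _ => ⟨Xs_red r, Xs_len r⟩
  · exact fun r _ => ⟨Zs_red r, Zs_len r⟩
  · intro r hr r' hr' hx hz
    exact ext_seg hx ((hS r hr).trans (hS r' hr').symm) hz

lemma branch_z_fixed (hn : 2 ≤ n) (w : List (Letter n)) (S : Finset (CWord n k))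
    (hS : ∀ r ∈ S, Zs r = w) : S.card ≤ 4 * (2 * n - 1) ^ (2 * lk k) := by
  have h := pair_seg_bound hn S (fun r => r.1.toList.take (2 * lk k)) (fun _ => [])
      (2 * lk k) 0 (fun r _ => ⟨take2_red r, take2_len r⟩)
      (fun r _ => ⟨List.isChain_nil, rfl⟩) ?_
  · simpa using h
  · intro r hr r' hr' ht0 _
    have ht : r.1.toList.take (2 * lk k) = r'.1.toList.take (2 * lk k) := ht0
    rw [take2_eq_xy, take2_eq_xy] at ht
    have hxlen : (Xs r).length = (Xs r').length := by rw [Xs_len, Xs_len]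
    exact ext_seg (List.append_inj_left ht hxlen) (List.append_inj_right ht hxlen)
      ((hS r hr).trans (hS r' hr').symm)

lemma deg_edge1 (hn : 2 ≤ n) (w : List (Letter n)) (S : Finset (CWord n k))
    (hS : ∀ r ∈ S, w ∈ edge1 r) : S.card ≤ 8 * (2 * n - 1) ^ (lk k + Lk k + 1) := by
  classical
  have hsub : S ⊆ S.filter (fun r => Xs r = w) ∪ S.filter (fun r => linv (Zs r) = w) := by
    intro r hr
    have h := hS r hr
    rw [show edge1 r = s(Xs r, linv (Zs r)) from rfl, Sym2.mem_iff] at h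
    rcases h with h | h
    · exact Finset.mem_union_left _ (Finset.mem_filter.mpr ⟨hr, h.symm⟩)
    · exact Finset.mem_union_right _ (Finset.mem_filter.mpr ⟨hr, h.symm⟩)
  have h1 : (S.filter (fun r => Xs r = w)).card ≤ 4 * (2 * n - 1) ^ (lk k + Lk k) :=
    branch_x_fixed hn w _ (fun r hr => (Finset.mem_filter.mp hr).2)
  have h2 : (S.filter (fun r => linv (Zs r) = w)).card ≤ 4 * (2 * n - 1) ^ (2 * lk k) :=
    branch_z_fixed hn (linv w) _ (fun r hr => by
      have := (Finset.mem_filter.mp hr).2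
      rw [← this, linv_linv])
  have hm1 := pow_mono_N (n := n) hn (show lk k + Lk k ≤ lk k + Lk k + 1 by omega)
  have hm2 := pow_mono_N (n := n) hn (show 2 * lk k ≤ lk k + Lk k + 1 by
    have := lk_le_Lk_add_one k; omega)
  calc S.card ≤ _ := Finset.card_le_card hsub
    _ ≤ _ := Finset.card_union_le _ _
    _ ≤ 8 * (2 * n - 1) ^ (lk k + Lk k + 1) := by omega

lemma deg_edge2 (hn : 2 ≤ n) (w : List (Letter n)) (S : Finset (CWord n k))
    (hS : ∀ r ∈ S, w ∈ edge2 r) : S.card ≤ 8 * (2 * n - 1) ^ (lk k + Lk k + 1) := by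
  classical
  have hsub : S ⊆ S.filter (fun r => Ys r = w) ∪ S.filter (fun r => linv (Xs r) = w) := by
    intro r hr
    have h := hS r hr
    rw [show edge2 r = s(Ys r, linv (Xs r)) from rfl, Sym2.mem_iff] at h
    rcases h with h | h
    · exact Finset.mem_union_left _ (Finset.mem_filter.mpr ⟨hr, h.symm⟩)
    · exact Finset.mem_union_right _ (Finset.mem_filter.mpr ⟨hr, h.symm⟩)
  have h1 : (S.filter (fun r => Ys r = w)).card ≤ 4 * (2 * n - 1) ^ (lk k + Lk k) :=
    branch_y_fixed hn w _ (fun r hr => (Finset.mem_filter.mp hr).2)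
  have h2 : (S.filter (fun r => linv (Xs r) = w)).card ≤ 4 * (2 * n - 1) ^ (lk k + Lk k) :=
    branch_x_fixed hn (linv w) _ (fun r hr => by
      have := (Finset.mem_filter.mp hr).2
      rw [← this, linv_linv])
  have hm1 := pow_mono_N (n := n) hn (show lk k + Lk k ≤ lk k + Lk k + 1 by omega)
  calc S.card ≤ _ := Finset.card_le_card hsub
    _ ≤ _ := Finset.card_union_le _ _
    _ ≤ 8 * (2 * n - 1) ^ (lk k + Lk k + 1) := by omega

lemma deg_edge3 (hn : 2 ≤ n) (w : List (Letter n)) (S : Finset (CWord n k))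
    (hS : ∀ r ∈ S, w ∈ edge3 r) : S.card ≤ 8 * (2 * n - 1) ^ (lk k + Lk k + 1) := by
  classical
  have hsub : S ⊆ S.filter (fun r => Zs r = w) ∪ S.filter (fun r => linv (Ys r) = w) := by
    intro r hr
    have h := hS r hr
    rw [show edge3 r = s(Zs r, linv (Ys r)) from rfl, Sym2.mem_iff] at h
    rcases h with h | h
    · exact Finset.mem_union_left _ (Finset.mem_filter.mpr ⟨hr, h.symm⟩)
    · exact Finset.mem_union_right _ (Finset.mem_filter.mpr ⟨hr, h.symm⟩)
  have h1 : (S.filter (fun r => Zs r = w)).card ≤ 4 * (2 * n - 1) ^ (2 * lk k) :=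
    branch_z_fixed hn w _ (fun r hr => (Finset.mem_filter.mp hr).2)
  have h2 : (S.filter (fun r => linv (Ys r) = w)).card ≤ 4 * (2 * n - 1) ^ (lk k + Lk k) :=
    branch_y_fixed hn (linv w) _ (fun r hr => by
      have := (Finset.mem_filter.mp hr).2
      rw [← this, linv_linv])
  have hm1 := pow_mono_N (n := n) hn (show lk k + Lk k ≤ lk k + Lk k + 1 by omega)
  have hm2 := pow_mono_N (n := n) hn (show 2 * lk k ≤ lk k + Lk k + 1 by
    have := lk_le_Lk_add_one k; omega)
  calc S.card ≤ _ := Finset.card_le_card hsub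
    _ ≤ _ := Finset.card_union_le _ _
    _ ≤ 8 * (2 * n - 1) ^ (lk k + Lk k + 1) := by omega

lemma card_cword_le (hn : 2 ≤ n) : Fintype.card (CWord n k) ≤ 4 * (2 * n - 1) ^ k := by
  rw [← Finset.card_univ]
  have h := pair_seg_bound hn (Finset.univ : Finset (CWord n k))
      (fun r => r.1.toList) (fun _ => []) k 0
      (fun r _ => ⟨red_toList r, len_toList r⟩)
      (fun r _ => ⟨List.isChain_nil, rfl⟩)
      (fun r _ r' _ h _ => cw_ext h)
  simpa using h



variable {n k : ℕ} {p : ℝ}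

lemma exists_three {α : Type*} [DecidableEq α] (s : Finset α) (h : 3 ≤ s.card) :
    ∃ a b c, a ∈ s ∧ b ∈ s ∧ c ∈ s ∧ a ≠ b ∧ a ≠ c ∧ b ≠ c := by
  have hpos : 0 < s.card := by omega
  obtain ⟨a, ha⟩ := Finset.card_pos.mp hpos
  have h2 : 1 < (s.erase a).card := by
    have := Finset.card_erase_of_mem ha; omega
  obtain ⟨b, c, hb, hc, hbc⟩ := Finset.one_lt_card_iff.mp h2
  exact ⟨a, b, c, ha, Finset.mem_of_mem_erase hb, Finset.mem_of_mem_erase hc,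
    (Finset.ne_of_mem_erase hb).symm, (Finset.ne_of_mem_erase hc).symm, hbc⟩

set_option maxHeartbeats 2000000 in
lemma cProb_bad_le (hp0 : 0 ≤ p) (hp1 : p ≤ 1)
    (ep : CWord n k → Sym2 (List (Letter n))) (FibB GB : ℕ)
    (hFib : ∀ (e : Sym2 (List (Letter n))) (S : Finset (CWord n k)),
      (∀ r ∈ S, ep r = e) → S.card ≤ FibB)
    (hG : ∀ (w : List (Letter n)) (S : Finset (CWord n k)),
      (∀ r ∈ S, w ∈ ep r) → S.card ≤ GB) :
    cProb n k p {ω | ¬ doubleEdgesMatch ep ω} ≤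
      ((Fintype.card (CWord n k) * (FibB * FibB) : ℕ) : ℝ) * p ^ 3 +
      ((Fintype.card (CWord n k) * (FibB * ((GB + GB) * FibB)) : ℕ) : ℝ) * p ^ 4 := by
  classical
  set T3 : Finset ((CWord n k) × (CWord n k) × (CWord n k)) := univ.filter fun t =>
    (ep t.2.1 = ep t.1 ∧ ep t.2.2 = ep t.1) ∧
    (t.1 ≠ t.2.1 ∧ t.1 ≠ t.2.2 ∧ t.2.1 ≠ t.2.2) with hT3
  set T4 : Finset ((CWord n k) × CWord n k × CWord n k × CWord n k) := univ.filter fun q =>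
    (ep q.2.1 = ep q.1 ∧ ep q.2.2.2 = ep q.2.2.1 ∧ (∃ w, w ∈ ep q.1 ∧ w ∈ ep q.2.2.1)) ∧
    (q.1 ≠ q.2.1 ∧ q.2.2.1 ≠ q.2.2.2 ∧ ep q.1 ≠ ep q.2.2.1) with hT4
  have hsub : {ω : CWord n k → Bool | ¬ doubleEdgesMatch ep ω} ⊆
      {ω : CWord n k → Bool | ∃ t ∈ T3, ∀ r ∈ ({t.1, t.2.1, t.2.2} : Finset (CWord n k)), ω r = true} ∪
      {ω : CWord n k → Bool | ∃ q ∈ T4,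
          ∀ r ∈ ({q.1, q.2.1, q.2.2.1, q.2.2.2} : Finset (CWord n k)), ω r = true} := by
    intro ω hω
    simp only [Set.mem_setOf_eq] at hω
    rw [doubleEdgesMatch] at hω
    rcases not_and_or.mp hω with hA | hB
    · -- some multiplicity ≥ 3
      push_neg at hA
      obtain ⟨u, v, hgt⟩ := hA
      rw [multE] at hgt
      obtain ⟨r1, r2, r3, h1, h2, h3, d12, d13, d23⟩ := exists_three _ hgt
      have p1 := Finset.mem_filter.mp h1
      have p2 := Finset.mem_filter.mp h2
      have p3 := Finset.mem_filter.mp h3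
      left
      refine ⟨(r1, r2, r3), Finset.mem_filter.mpr ⟨Finset.mem_univ _,
        ⟨p2.2.2.trans p1.2.2.symm, p3.2.2.trans p1.2.2.symm⟩, d12, d13, d23⟩, ?_⟩
      intro r hr
      simp only [Finset.mem_insert, Finset.mem_singleton] at hr
      rcases hr with rfl | rfl | rfl
      · exact p1.2.1
      · exact p2.2.1
      · exact p3.2.1
    · -- two overlapping double edges
      push_neg at hB
      obtain ⟨u, v, u', v', hm, hm', hne, himp⟩ := hB
      rw [multE] at hm hm'
      obtain ⟨r1, r2, d12, hset⟩ := Finset.card_eq_two.mp hm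
      obtain ⟨r3, r4, d34, hset'⟩ := Finset.card_eq_two.mp hm'
      have hr1 : r1 ∈ (univ.filter fun r : CWord n k => ω r = true ∧ ep r = s(u, v)) := by
        rw [hset]; exact Finset.mem_insert_self _ _
      have hr2 : r2 ∈ (univ.filter fun r : CWord n k => ω r = true ∧ ep r = s(u, v)) := by
        rw [hset]; exact Finset.mem_insert_of_mem (Finset.mem_singleton_self _)
      have hr3 : r3 ∈ (univ.filter fun r : CWord n k => ω r = true ∧ ep r = s(u', v')) := by
        rw [hset']; exact Finset.mem_insert_self _ _
      have hr4 : r4 ∈ (univ.filter fun r : CWord n k => ω r = true ∧ ep r = s(u', v')) := by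
        rw [hset']; exact Finset.mem_insert_of_mem (Finset.mem_singleton_self _)
      have p1 := (Finset.mem_filter.mp hr1).2
      have p2 := (Finset.mem_filter.mp hr2).2
      have p3 := (Finset.mem_filter.mp hr3).2
      have p4 := (Finset.mem_filter.mp hr4).2
      have hshare : ∃ w, w ∈ ep r1 ∧ w ∈ ep r3 := by
        rw [p1.2, p3.2]
        by_cases c1 : u = u'
        · exact ⟨u, Sym2.mem_mk_left _ _, by rw [c1]; exact Sym2.mem_mk_left _ _⟩
        by_cases c2 : u = v'
        · exact ⟨u, Sym2.mem_mk_left _ _, by rw [c2]; exact Sym2.mem_mk_right _ _⟩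
        by_cases c3 : v = u'
        · exact ⟨v, Sym2.mem_mk_right _ _, by rw [c3]; exact Sym2.mem_mk_left _ _⟩
        · have c4 := himp c1 c2 c3
          exact ⟨v, Sym2.mem_mk_right _ _, by rw [c4]; exact Sym2.mem_mk_right _ _⟩
      right
      refine ⟨(r1, r2, r3, r4), Finset.mem_filter.mpr ⟨Finset.mem_univ _,
        ⟨p2.2.trans p1.2.symm, p4.2.trans p3.2.symm, hshare⟩,
        d12, d34, by rw [p1.2, p3.2]; exact hne⟩, ?_⟩
      intro r hr
      simp only [Finset.mem_insert, Finset.mem_singleton] at hr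
      rcases hr with rfl | rfl | rfl | rfl
      · exact p1.1
      · exact p2.1
      · exact p3.1
      · exact p4.1
  have hcard3 : ∀ t ∈ T3, ({t.1, t.2.1, t.2.2} : Finset (CWord n k)).card = 3 := by
    intro t ht
    have h := (Finset.mem_filter.mp ht).2
    rw [Finset.card_insert_of_notMem (by simp [h.2.1, h.2.2.1]),
      Finset.card_insert_of_notMem (by simp [h.2.2.2]), Finset.card_singleton]
  have hcard4 : ∀ q ∈ T4, ({q.1, q.2.1, q.2.2.1, q.2.2.2} : Finset (CWord n k)).card = 4 := by
    intro q hq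
    have h := (Finset.mem_filter.mp hq).2
    obtain ⟨⟨he2, he4, _⟩, d12, d34, hne⟩ := h
    have d13 : q.1 ≠ q.2.2.1 := fun hc => hne (by rw [hc])
    have d14 : q.1 ≠ q.2.2.2 := fun hc => hne (by rw [hc, he4])
    have d23 : q.2.1 ≠ q.2.2.1 := fun hc => hne (by rw [← he2, hc])
    have d24 : q.2.1 ≠ q.2.2.2 := fun hc => hne (by rw [← he2, hc, he4])
    rw [Finset.card_insert_of_notMem (by simp [d12, d13, d14]),
      Finset.card_insert_of_notMem (by simp [d23, d24]),
      Finset.card_insert_of_notMem (by simp [d34]), Finset.card_singleton]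
  have hT3card : T3.card ≤ Fintype.card (CWord n k) * (FibB * FibB) := by
    apply card_triples ep FibB hFib
    intro t ht
    exact (Finset.mem_filter.mp ht).2.1
  have hT4card : T4.card ≤ Fintype.card (CWord n k) * (FibB * ((GB + GB) * FibB)) := by
    apply card_quads ep (fun a b => ∃ w, w ∈ ep a ∧ w ∈ ep b) FibB (GB + GB) hFib
      (share_bound ep GB hG)
    intro q hq
    exact (Finset.mem_filter.mp hq).2.1
  calc cProb n k p {ω | ¬ doubleEdgesMatch ep ω}
      ≤ cProb n k p ({ω : CWord n k → Bool | ∃ t ∈ T3,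
            ∀ r ∈ ({t.1, t.2.1, t.2.2} : Finset (CWord n k)), ω r = true} ∪
          {ω : CWord n k → Bool | ∃ q ∈ T4,
            ∀ r ∈ ({q.1, q.2.1, q.2.2.1, q.2.2.2} : Finset (CWord n k)), ω r = true}) :=
        cProb_mono hp0 hp1 hsub
    _ ≤ cProb n k p {ω : CWord n k → Bool | ∃ t ∈ T3,
            ∀ r ∈ ({t.1, t.2.1, t.2.2} : Finset (CWord n k)), ω r = true} +
        cProb n k p {ω : CWord n k → Bool | ∃ q ∈ T4,
            ∀ r ∈ ({q.1, q.2.1, q.2.2.1, q.2.2.2} : Finset (CWord n k)), ω r = true} :=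
        cProb_union_le hp0 hp1 _ _
    _ ≤ (∑ t ∈ T3, cProb n k p {ω : CWord n k → Bool |
            ∀ r ∈ ({t.1, t.2.1, t.2.2} : Finset (CWord n k)), ω r = true}) +
        (∑ q ∈ T4, cProb n k p {ω : CWord n k → Bool |
            ∀ r ∈ ({q.1, q.2.1, q.2.2.1, q.2.2.2} : Finset (CWord n k)), ω r = true}) :=
        add_le_add (cProb_biUnion_le hp0 hp1 _ _) (cProb_biUnion_le hp0 hp1 _ _)
    _ = (∑ _t ∈ T3, p ^ 3) + (∑ _q ∈ T4, p ^ 4) := by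
        congr 1
        · apply Finset.sum_congr rfl
          intro t ht
          rw [cProb_forall_true, hcard3 t ht]
        · apply Finset.sum_congr rfl
          intro q hq
          rw [cProb_forall_true, hcard4 q hq]
    _ = (T3.card : ℝ) * p ^ 3 + (T4.card : ℝ) * p ^ 4 := by
        rw [Finset.sum_const, Finset.sum_const, nsmul_eq_mul, nsmul_eq_mul]
    _ ≤ _ := by
        apply add_le_add
        · exact mul_le_mul_of_nonneg_right (Nat.cast_le.mpr hT3card) (by positivity)
        · exact mul_le_mul_of_nonneg_right (Nat.cast_le.mpr hT4card) (by positivity)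



variable {n : ℕ}

/-- The real bound for a single graph. -/
lemma cProb_bad_real (hn : 2 ≤ n) (k : ℕ) {p : ℝ} (hp0 : 0 ≤ p) (hp1 : p ≤ 1)
    (ep : CWord n k → Sym2 (List (Letter n)))
    (hFib : ∀ (e : Sym2 (List (Letter n))) (S : Finset (CWord n k)),
      (∀ r ∈ S, ep r = e) → S.card ≤ 8 * (2 * n - 1) ^ (lk k + 1))
    (hG : ∀ (w : List (Letter n)) (S : Finset (CWord n k)),
      (∀ r ∈ S, w ∈ ep r) → S.card ≤ 8 * (2 * n - 1) ^ (lk k + Lk k + 1)) :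
    cProb n k p {ω | ¬ doubleEdgesMatch ep ω} ≤
      256 * (2 * (n:ℝ) - 1) ^ 2 * ((2 * (n:ℝ) - 1) ^ (2 * k - Lk k) * p ^ 3) +
      4096 * (2 * (n:ℝ) - 1) ^ 3 * ((2 * (n:ℝ) - 1) ^ (2 * k + lk k) * p ^ 4) := by
  set N : ℕ := 2 * n - 1 with hN
  set F : ℕ := 8 * N ^ (lk k + 1) with hF
  set G : ℕ := 8 * N ^ (lk k + Lk k + 1) with hG'
  have hkey := cProb_bad_le hp0 hp1 ep F G hFib hG
  have hid := two_lk_add_Lk k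
  have hnat1 : Fintype.card (CWord n k) * (F * F) ≤ 256 * N ^ (2 * k - Lk k + 2) := by
    calc Fintype.card (CWord n k) * (F * F) ≤ (4 * N ^ k) * (F * F) :=
          Nat.mul_le_mul_right _ (card_cword_le hn)
      _ = 256 * N ^ (2 * k - Lk k + 2) := by
          have hexp : 2 * k - Lk k + 2 = k + ((lk k + 1) + (lk k + 1)) := by omega
          rw [hF, hexp, pow_add, pow_add]; ring
  have hnat2 : Fintype.card (CWord n k) * (F * ((G + G) * F)) ≤
      4096 * N ^ (2 * k + lk k + 3) := by
    calc Fintype.card (CWord n k) * (F * ((G + G) * F)) ≤ (4 * N ^ k) * (F * ((G + G) * F)) :=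
          Nat.mul_le_mul_right _ (card_cword_le hn)
      _ = 4096 * N ^ (2 * k + lk k + 3) := by
          have hexp : 2 * k + lk k + 3 = k + ((lk k + 1) + ((lk k + Lk k + 1) + (lk k + 1))) := by
            omega
          rw [hF, hG', hexp, pow_add, pow_add, pow_add]; ring
  have hcast : ((N : ℕ) : ℝ) = 2 * (n : ℝ) - 1 := by
    rw [hN]; push_cast [Nat.cast_sub (by omega : 1 ≤ 2 * n)]; ring
  calc cProb n k p {ω | ¬ doubleEdgesMatch ep ω}
      ≤ ((Fintype.card (CWord n k) * (F * F) : ℕ) : ℝ) * p ^ 3 +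
        ((Fintype.card (CWord n k) * (F * ((G + G) * F)) : ℕ) : ℝ) * p ^ 4 := hkey
    _ ≤ ((256 * N ^ (2 * k - Lk k + 2) : ℕ) : ℝ) * p ^ 3 +
        ((4096 * N ^ (2 * k + lk k + 3) : ℕ) : ℝ) * p ^ 4 := by
        apply add_le_add
        · exact mul_le_mul_of_nonneg_right (Nat.cast_le.mpr hnat1) (by positivity)
        · exact mul_le_mul_of_nonneg_right (Nat.cast_le.mpr hnat2) (by positivity)
    _ = 256 * (2 * (n:ℝ) - 1) ^ 2 * ((2 * (n:ℝ) - 1) ^ (2 * k - Lk k) * p ^ 3) +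
        4096 * (2 * (n:ℝ) - 1) ^ 3 * ((2 * (n:ℝ) - 1) ^ (2 * k + lk k) * p ^ 4) := by
        push_cast
        rw [hcast, pow_add, pow_add]
        ring


end SAux

open SAux

/-- Fix `n ≥ 2` and suppose `(2n-1)^{2k-L_k} p³ → 0` and
`(2n-1)^{2k+l_k} p⁴ → 0` as `k → ∞`. Then a.a.s. (as `k → ∞`), in each of the multigraphs
`Σ₁, Σ₂, Σ₃` associated to the binomial random set of relators `R ⊆ C(n,k)`, no two vertices
are joined by three or more edges and the double edges form a matching. -/
theorem double_edges_form_matching (n : ℕ) (hn : 2 ≤ n) (p : ℕ → ℝ)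
    (hp : ∀ k, 0 < p k ∧ p k < 1)
    (h1 : Tendsto (fun k : ℕ => (2 * (n : ℝ) - 1) ^ (2 * k - Lk k) * p k ^ 3) atTop (nhds 0))
    (h2 : Tendsto (fun k : ℕ => (2 * (n : ℝ) - 1) ^ (2 * k + lk k) * p k ^ 4) atTop (nhds 0)) :
    Tendsto (fun k : ℕ => cProb n k (p k)
      {ω | doubleEdgesMatch edge1 ω ∧ doubleEdgesMatch edge2 ω ∧ doubleEdgesMatch edge3 ω})
      atTop (nhds 1) := by
  set C2 : ℝ := 256 * (2 * (n:ℝ) - 1) ^ 2 with hC2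
  set C3 : ℝ := 4096 * (2 * (n:ℝ) - 1) ^ 3 with hC3
  set g1 : ℕ → ℝ := fun k => (2 * (n : ℝ) - 1) ^ (2 * k - Lk k) * p k ^ 3 with hg1
  set g2 : ℕ → ℝ := fun k => (2 * (n : ℝ) - 1) ^ (2 * k + lk k) * p k ^ 4 with hg2
  set D : ℕ → ℝ := fun k => 3 * (C2 * g1 k + C3 * g2 k) with hD
  have hDlim : Tendsto D atTop (nhds 0) := by
    have := ((h1.const_mul C2).add (h2.const_mul C3)).const_mul (3:ℝ)
    simpa using this
  have hDbound : ∀ k : ℕ, cProb n k (p k)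
      {ω | doubleEdgesMatch edge1 ω ∧ doubleEdgesMatch edge2 ω ∧ doubleEdgesMatch edge3 ω}ᶜ
        ≤ D k := by
    intro k
    have hp0 := (hp k).1.le
    have hp1 := (hp k).2.le
    have hb1 := cProb_bad_real hn k hp0 hp1 edge1 (fib_edge1 hn) (deg_edge1 hn)
    have hb2 := cProb_bad_real hn k hp0 hp1 edge2 (fib_edge2 hn) (deg_edge2 hn)
    have hb3 := cProb_bad_real hn k hp0 hp1 edge3 (fib_edge3 hn) (deg_edge3 hn)
    have hsub : {ω : CWord n k → Bool |
        doubleEdgesMatch edge1 ω ∧ doubleEdgesMatch edge2 ω ∧ doubleEdgesMatch edge3 ω}ᶜ ⊆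
        {ω | ¬ doubleEdgesMatch edge1 ω} ∪
          ({ω | ¬ doubleEdgesMatch edge2 ω} ∪ {ω | ¬ doubleEdgesMatch edge3 ω}) := by
      intro ω hω
      simp only [Set.mem_compl_iff, Set.mem_setOf_eq, not_and_or] at hω
      rcases hω with h | h | h
      · exact Set.mem_union_left _ h
      · exact Set.mem_union_right _ (Set.mem_union_left _ h)
      · exact Set.mem_union_right _ (Set.mem_union_right _ h)
    calc cProb n k (p k) _ ≤ cProb n k (p k) ({ω | ¬ doubleEdgesMatch edge1 ω} ∪
          ({ω | ¬ doubleEdgesMatch edge2 ω} ∪ {ω | ¬ doubleEdgesMatch edge3 ω})) :=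
          cProb_mono hp0 hp1 hsub
      _ ≤ cProb n k (p k) {ω | ¬ doubleEdgesMatch edge1 ω} +
          (cProb n k (p k) {ω | ¬ doubleEdgesMatch edge2 ω} +
            cProb n k (p k) {ω | ¬ doubleEdgesMatch edge3 ω}) := by
          refine (cProb_union_le hp0 hp1 _ _).trans ?_
          exact add_le_add le_rfl (cProb_union_le hp0 hp1 _ _)
      _ ≤ (C2 * g1 k + C3 * g2 k) + ((C2 * g1 k + C3 * g2 k) + (C2 * g1 k + C3 * g2 k)) := by
          exact add_le_add hb1 (add_le_add hb2 hb3)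
      _ = D k := by rw [hD]; ring
  apply tendsto_of_tendsto_of_tendsto_of_le_of_le
    (g := fun k : ℕ => 1 - D k) (h := fun _ : ℕ => (1:ℝ))
  · have : Tendsto (fun k : ℕ => 1 - D k) atTop (nhds (1 - 0)) :=
      tendsto_const_nhds.sub hDlim
    simpa using this
  · exact tendsto_const_nhds
  · intro k
    dsimp only
    have := hDbound k
    rw [cProb_compl (n := n) (k := k) (p k)]
    linarith
  · intro k
    dsimp only
    have h := cProb_mono (n := n) (k := k) (hp k).1.le (hp k).2.le
      (Set.subset_univ {ω : CWord n k → Bool |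
        doubleEdgesMatch edge1 ω ∧ doubleEdgesMatch edge2 ω ∧ doubleEdgesMatch edge3 ω})
    rw [cProb_univ (p k)] at h
    exact h
end
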